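/- arXiv:2103.09089 — 5 statements merged into one kernel-verified Lean document; each statement's English description precedes it below -/
import Mathlib

section
/- (Rota–Strang) For every bounded subset S of M_d(ℂ), the joint spectral radius ρ(S) equals the infimum of ‖S‖ over all norms ‖·‖ on ℂ^d (where ‖·‖ also denotes the induced operator norm). Concretely, for every r > 0 with r·ρ(S) < 1, the function v_r(x) := Σ_{n≥0} ‖Sⁿx‖ rⁿ is a norm on ℂ^d satisfying v_r(sx) ≤ r⁻¹ v_r(x) for all s ∈ S. -/
open scoped Pointwise
open Filter

/-- A norm on `ℂ^d`, given as a plain function with the norm axioms. -/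
def IsCNorm {d : ℕ} (v : (Fin d → ℂ) → ℝ) : Prop :=
  (∀ x, 0 ≤ v x) ∧ (∀ x, v x = 0 ↔ x = 0) ∧
  (∀ (a : ℂ) (x), v (a • x) = ‖a‖ * v x) ∧ (∀ x y, v (x + y) ≤ v x + v y)

/-- Operator norm on matrices induced by the norm `v` on `ℂ^d`. -/
noncomputable def opNorm {d : ℕ} (v : (Fin d → ℂ) → ℝ) (A : Matrix (Fin d) (Fin d) ℂ) : ℝ :=
  sSup {c : ℝ | ∃ x : Fin d → ℂ, v x ≤ 1 ∧ c = v (A.mulVec x)}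

/-- Norm of a set of matrices: `sup_{s ∈ S} ‖s‖`. -/
noncomputable def setOpNorm {d : ℕ} (v : (Fin d → ℂ) → ℝ)
    (S : Set (Matrix (Fin d) (Fin d) ℂ)) : ℝ :=
  sSup (opNorm v '' S)

/-- The sup norm on `ℂ^d`, used as reference norm to define the joint spectral radius. -/
noncomputable def stdNorm {d : ℕ} (x : Fin d → ℂ) : ℝ := ‖x‖

/-- The joint spectral radius `ρ(S) = inf_{n ≥ 1} ‖Sⁿ‖^{1/n}`. -/
noncomputable def jsr {d : ℕ} (S : Set (Matrix (Fin d) (Fin d) ℂ)) : ℝ :=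
  ⨅ n : ℕ, setOpNorm stdNorm (S ^ (n + 1)) ^ (1 / (n + 1 : ℝ))

/-- The spectral radius of a matrix: the largest modulus of an eigenvalue. -/
noncomputable def specRad {d : ℕ} (A : Matrix (Fin d) (Fin d) ℂ) : ℝ :=
  sSup ((fun μ : ℂ => ‖μ‖) '' spectrum ℂ A)

/-- `Λ(S) = sup_{s ∈ S} Λ(s)`. -/
noncomputable def lamSet {d : ℕ} (S : Set (Matrix (Fin d) (Fin d) ℂ)) : ℝ :=
  sSup (specRad '' S)

/-- Boundedness of a set of matrices. -/
def MatBdd {d : ℕ} (S : Set (Matrix (Fin d) (Fin d) ℂ)) : Prop :=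
  ∃ C : ℝ, ∀ A ∈ S, ∀ i j, ‖A i j‖ ≤ C

/-- `S` is irreducible: it preserves no nonzero proper subspace of `ℂ^d`. -/
def IsIrred {d : ℕ} (S : Set (Matrix (Fin d) (Fin d) ℂ)) : Prop :=
  ∀ W : Submodule ℂ (Fin d → ℂ), (∀ A ∈ S, ∀ x ∈ W, A.mulVec x ∈ W) → W = ⊥ ∨ W = ⊤

/-- `sup_{A ∈ S} v(Ax)` for a set of matrices `S` and vector `x`. -/
noncomputable def vecSetNorm {d : ℕ} (v : (Fin d → ℂ) → ℝ)
    (S : Set (Matrix (Fin d) (Fin d) ℂ)) (x : Fin d → ℂ) : ℝ :=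
  sSup ((fun A => v (A.mulVec x)) '' S)

/-- The Rota–Strang norm `v_r(x) = Σ_{n ≥ 0} ‖Sⁿ x‖ rⁿ` (here `S⁰ = {1}`). -/
noncomputable def rotaStrangNorm {d : ℕ} (v : (Fin d → ℂ) → ℝ)
    (S : Set (Matrix (Fin d) (Fin d) ℂ)) (r : ℝ) (x : Fin d → ℂ) : ℝ :=
  ∑' n : ℕ, vecSetNorm v (S ^ n) x * r ^ n

open Topology

namespace RS

variable {d : ℕ} {v : (Fin d → ℂ) → ℝ} {S T U : Set (Matrix (Fin d) (Fin d) ℂ)}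

lemma v_zero (hv : IsCNorm v) : v 0 = 0 := (hv.2.1 0).2 rfl

lemma v_sum (hv : IsCNorm v) {ι : Type*} (s : Finset ι) (f : ι → (Fin d → ℂ)) :
    v (∑ i ∈ s, f i) ≤ ∑ i ∈ s, v (f i) := by
  classical
  induction s using Finset.cons_induction with
  | empty => simp [v_zero hv]
  | cons a s ha ih =>
      rw [Finset.sum_cons, Finset.sum_cons]
      exact (hv.2.2.2 _ _).trans (by linarith)

lemma exists_upper (hv : IsCNorm v) : ∃ Cu : ℝ, 0 < Cu ∧ ∀ x, v x ≤ Cu * ‖x‖ := by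
  classical
  refine ⟨max (∑ i, v (fun j => if i = j then 1 else 0)) 1,
    lt_of_lt_of_le one_pos (le_max_right _ _), fun x => ?_⟩
  calc v x = v (∑ i, x i • (fun j => if i = j then (1:ℂ) else 0)) := by
        rw [← pi_eq_sum_univ x]
    _ ≤ ∑ i, v (x i • (fun j => if i = j then (1:ℂ) else 0)) := v_sum hv _ _
    _ = ∑ i, ‖x i‖ * v (fun j => if i = j then 1 else 0) := by
        refine Finset.sum_congr rfl fun i _ => ?_
        exact hv.2.2.1 (x i) _
    _ ≤ ∑ i, ‖x‖ * v (fun j => if i = j then 1 else 0) :=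
        Finset.sum_le_sum fun i _ =>
          mul_le_mul_of_nonneg_right (norm_le_pi_norm x i) (hv.1 _)
    _ = (∑ i, v (fun j => if i = j then 1 else 0)) * ‖x‖ := by
        rw [← Finset.mul_sum, mul_comm]
    _ ≤ max (∑ i, v (fun j => if i = j then 1 else 0)) 1 * ‖x‖ :=
        mul_le_mul_of_nonneg_right (le_max_left _ _) (norm_nonneg x)

lemma v_continuous (hv : IsCNorm v) : Continuous v := by
  obtain ⟨Cu, hCu, hb⟩ := exists_upper hv
  have h0 : ∀ x y : Fin d → ℂ, v x ≤ v (x - y) + v y := by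
    intro x y
    have h := hv.2.2.2 (x - y) y
    rwa [sub_add_cancel] at h
  have hsymm : ∀ x y : Fin d → ℂ, v (x - y) = v (y - x) := by
    intro x y
    have h := hv.2.2.1 (-1) (y - x)
    simp only [norm_neg, norm_one, one_mul, neg_smul, one_smul, neg_sub] at h
    exact h
  have : LipschitzWith (Real.toNNReal Cu) v := by
    apply LipschitzWith.of_dist_le_mul
    intro x y
    rw [Real.dist_eq, dist_eq_norm, abs_sub_le_iff, Real.coe_toNNReal _ hCu.le]
    constructor
    · linarith [h0 x y, hb (x - y)]
    · linarith [h0 y x, hsymm x y, hb (x - y)]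
  exact this.continuous

lemma exists_lower (hv : IsCNorm v) : ∃ Cl : ℝ, 0 < Cl ∧ ∀ x, ‖x‖ ≤ Cl * v x := by
  rcases Nat.eq_zero_or_pos d with hd | hd
  · subst hd
    refine ⟨1, one_pos, fun x => ?_⟩
    have hx : x = 0 := Subsingleton.elim x 0
    rw [hx, one_mul, v_zero hv, norm_zero]
  · haveI : Nonempty (Fin d) := ⟨⟨0, hd⟩⟩
    have hne : (Metric.sphere (0 : Fin d → ℂ) 1).Nonempty :=
      NormedSpace.sphere_nonempty.mpr zero_le_one
    obtain ⟨x₀, hx₀mem, hmin⟩ :=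
      (isCompact_sphere (0 : Fin d → ℂ) 1).exists_isMinOn hne (v_continuous hv).continuousOn
    have hx₀ : ‖x₀‖ = 1 := by simpa using hx₀mem
    have hx0ne : x₀ ≠ 0 := by
      intro h; rw [h, norm_zero] at hx₀; norm_num at hx₀
    have hm : 0 < v x₀ :=
      lt_of_le_of_ne (hv.1 x₀) (fun h => hx0ne ((hv.2.1 x₀).1 h.symm))
    refine ⟨(v x₀)⁻¹, inv_pos.2 hm, fun x => ?_⟩
    rcases eq_or_ne x 0 with rfl | hx
    · simp [v_zero hv]
    · have hxn : (0:ℝ) < ‖x‖ := norm_pos_iff.2 hx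
      set y := ((‖x‖ : ℂ))⁻¹ • x with hy
      have hyn : ‖y‖ = 1 := by
        rw [hy, norm_smul, norm_inv, Complex.norm_real, Real.norm_eq_abs, abs_of_pos hxn]
        field_simp
      have hymem : y ∈ Metric.sphere (0 : Fin d → ℂ) 1 := by
        simp [hyn]
      have h1 : v x₀ ≤ v y := hmin hymem
      have h2 : v x = ‖x‖ * v y := by
        have hxy : x = (‖x‖ : ℂ) • y := by
          rw [hy, smul_smul, mul_inv_cancel₀ (by exact_mod_cast hxn.ne'), one_smul]
        conv_lhs => rw [hxy]
        rw [hv.2.2.1, Complex.norm_real, Real.norm_eq_abs, abs_of_pos hxn]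
      have h3 : ‖x‖ * v x₀ ≤ v x := by
        rw [h2]; exact mul_le_mul_of_nonneg_left h1 hxn.le
      rw [inv_mul_eq_div, le_div_iff₀ hm]
      exact h3


lemma mulVec_norm_le (A : Matrix (Fin d) (Fin d) ℂ) (x : Fin d → ℂ) :
    ‖A.mulVec x‖ ≤ (∑ i, ∑ j, ‖A i j‖) * ‖x‖ := by
  have hEnn : (0:ℝ) ≤ ∑ i, ∑ j, ‖A i j‖ :=
    Finset.sum_nonneg fun i _ => Finset.sum_nonneg fun j _ => norm_nonneg _
  have hnn : (0:ℝ) ≤ (∑ i, ∑ j, ‖A i j‖) * ‖x‖ := mul_nonneg hEnn (norm_nonneg _)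
  rw [pi_norm_le_iff_of_nonneg hnn]
  intro i
  calc ‖A.mulVec x i‖ = ‖∑ j, A i j * x j‖ := by
        simp [Matrix.mulVec, dotProduct]
    _ ≤ ∑ j, ‖A i j * x j‖ := norm_sum_le _ _
    _ ≤ ∑ j, ‖A i j‖ * ‖x‖ := Finset.sum_le_sum fun j _ => by
        rw [norm_mul]
        exact mul_le_mul_of_nonneg_left (norm_le_pi_norm x j) (norm_nonneg _)
    _ = (∑ j, ‖A i j‖) * ‖x‖ := (Finset.sum_mul _ _ _).symm
    _ ≤ (∑ i, ∑ j, ‖A i j‖) * ‖x‖ :=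
        mul_le_mul_of_nonneg_right
          (Finset.single_le_sum (f := fun i => ∑ j, ‖A i j‖)
            (fun i _ => Finset.sum_nonneg fun j _ => norm_nonneg _) (Finset.mem_univ i))
          (norm_nonneg _)

lemma opSet_bddAbove (hv : IsCNorm v) (A : Matrix (Fin d) (Fin d) ℂ) :
    BddAbove {c : ℝ | ∃ x : Fin d → ℂ, v x ≤ 1 ∧ c = v (A.mulVec x)} := by
  obtain ⟨Cu, hCu, hu⟩ := exists_upper hv
  obtain ⟨Cl, hCl, hl⟩ := exists_lower hv
  have hEnn : (0:ℝ) ≤ ∑ i, ∑ j, ‖A i j‖ :=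
    Finset.sum_nonneg fun i _ => Finset.sum_nonneg fun j _ => norm_nonneg _
  refine ⟨Cu * ((∑ i, ∑ j, ‖A i j‖) * Cl), ?_⟩
  rintro c ⟨x, hx, rfl⟩
  have h1 : ‖x‖ ≤ Cl := by
    calc ‖x‖ ≤ Cl * v x := hl x
      _ ≤ Cl * 1 := mul_le_mul_of_nonneg_left hx hCl.le
      _ = Cl := mul_one _
  calc v (A.mulVec x) ≤ Cu * ‖A.mulVec x‖ := hu _
    _ ≤ Cu * ((∑ i, ∑ j, ‖A i j‖) * ‖x‖) :=
        mul_le_mul_of_nonneg_left (mulVec_norm_le A x) hCu.le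
    _ ≤ Cu * ((∑ i, ∑ j, ‖A i j‖) * Cl) :=
        mul_le_mul_of_nonneg_left (mul_le_mul_of_nonneg_left h1 hEnn) hCu.le

lemma opNorm_nonneg (hv : IsCNorm v) (A : Matrix (Fin d) (Fin d) ℂ) : 0 ≤ opNorm v A :=
  Real.sSup_nonneg (by rintro c ⟨x, hx, rfl⟩; exact hv.1 _)

lemma opNorm_le (hv : IsCNorm v) {A : Matrix (Fin d) (Fin d) ℂ} {c : ℝ} (hc : 0 ≤ c)
    (h : ∀ x, v x ≤ 1 → v (A.mulVec x) ≤ c) : opNorm v A ≤ c :=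
  Real.sSup_le (by rintro b ⟨x, hx, rfl⟩; exact h x hx) hc

lemma v_mulVec_le (hv : IsCNorm v) (A : Matrix (Fin d) (Fin d) ℂ) (x : Fin d → ℂ) :
    v (A.mulVec x) ≤ opNorm v A * v x := by
  rcases eq_or_lt_of_le (hv.1 x) with h0 | h0
  · have hx : x = 0 := (hv.2.1 x).1 h0.symm
    simp [hx, Matrix.mulVec_zero, v_zero hv, mul_nonneg (opNorm_nonneg hv A)]
  · set t : ℂ := ((v x : ℝ) : ℂ) with ht
    have htne : t ≠ 0 := by
      rw [ht]; exact_mod_cast h0.ne'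
    have htn : ‖t‖ = v x := by
      rw [ht, Complex.norm_real, Real.norm_eq_abs, abs_of_pos h0]
    have hy : v (t⁻¹ • x) = 1 := by
      rw [hv.2.2.1, norm_inv, htn, inv_mul_cancel₀ h0.ne']
    have h1 : v (A.mulVec (t⁻¹ • x)) ≤ opNorm v A :=
      le_csSup (opSet_bddAbove hv A) ⟨t⁻¹ • x, hy.le, rfl⟩
    have h2 : A.mulVec x = t • A.mulVec (t⁻¹ • x) := by
      rw [Matrix.mulVec_smul, smul_smul, mul_inv_cancel₀ htne, one_smul]
    rw [h2, hv.2.2.1, htn, mul_comm]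
    exact mul_le_mul_of_nonneg_right h1 h0.le

lemma opNorm_mul_le (hv : IsCNorm v) (A B : Matrix (Fin d) (Fin d) ℂ) :
    opNorm v (A * B) ≤ opNorm v A * opNorm v B := by
  apply opNorm_le hv (mul_nonneg (opNorm_nonneg hv A) (opNorm_nonneg hv B))
  intro x hx
  rw [← Matrix.mulVec_mulVec]
  calc v (A.mulVec (B.mulVec x)) ≤ opNorm v A * v (B.mulVec x) := v_mulVec_le hv A _
    _ ≤ opNorm v A * (opNorm v B * v x) :=
        mul_le_mul_of_nonneg_left (v_mulVec_le hv B x) (opNorm_nonneg hv A)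
    _ ≤ opNorm v A * (opNorm v B * 1) :=
        mul_le_mul_of_nonneg_left
          (mul_le_mul_of_nonneg_left hx (opNorm_nonneg hv B)) (opNorm_nonneg hv A)
    _ = opNorm v A * opNorm v B := by ring

lemma matBdd_one : MatBdd (1 : Set (Matrix (Fin d) (Fin d) ℂ)) := by
  refine ⟨1, ?_⟩
  intro A hA i j
  rw [Set.mem_one] at hA
  subst hA
  by_cases h : i = j <;> simp [Matrix.one_apply, h]

lemma matBdd_mul (hT : MatBdd T) (hU : MatBdd U) : MatBdd (T * U) := by
  obtain ⟨C1, h1⟩ := hT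
  obtain ⟨C2, h2⟩ := hU
  refine ⟨(d : ℝ) * (max C1 0 * max C2 0), ?_⟩
  intro A hA i j
  rw [Set.mem_mul] at hA
  obtain ⟨t, ht, u, hu, rfl⟩ := hA
  calc ‖(t * u) i j‖ = ‖∑ k, t i k * u k j‖ := by rw [Matrix.mul_apply]
    _ ≤ ∑ k, ‖t i k * u k j‖ := norm_sum_le _ _
    _ ≤ ∑ _k : Fin d, max C1 0 * max C2 0 := Finset.sum_le_sum fun k _ => by
        rw [norm_mul]
        exact mul_le_mul ((h1 t ht i k).trans (le_max_left _ _))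
          ((h2 u hu k j).trans (le_max_left _ _)) (norm_nonneg _) (le_max_right _ _)
    _ = (d : ℝ) * (max C1 0 * max C2 0) := by
        rw [Finset.sum_const, Finset.card_univ, Fintype.card_fin, nsmul_eq_mul]

lemma matBdd_pow (hS : MatBdd S) : ∀ n : ℕ, MatBdd (S ^ n)
  | 0 => by rw [pow_zero]; exact matBdd_one
  | n + 1 => by rw [pow_succ]; exact matBdd_mul (matBdd_pow hS n) hS

lemma setOpNorm_nonneg (hv : IsCNorm v) : 0 ≤ setOpNorm v T :=
  Real.sSup_nonneg (by rintro c ⟨A, hA, rfl⟩; exact opNorm_nonneg hv A)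

lemma opNorm_bound (hv : IsCNorm v) :
    ∃ K : ℝ, 0 < K ∧ ∀ A : Matrix (Fin d) (Fin d) ℂ,
      opNorm v A ≤ K * (∑ i, ∑ j, ‖A i j‖) := by
  obtain ⟨Cu, hCu, hu⟩ := exists_upper hv
  obtain ⟨Cl, hCl, hl⟩ := exists_lower hv
  refine ⟨Cu * Cl, mul_pos hCu hCl, fun A => ?_⟩
  have hEnn : (0:ℝ) ≤ ∑ i, ∑ j, ‖A i j‖ :=
    Finset.sum_nonneg fun i _ => Finset.sum_nonneg fun j _ => norm_nonneg _
  apply opNorm_le hv (mul_nonneg (mul_pos hCu hCl).le hEnn)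
  intro x hx
  have h1 : ‖x‖ ≤ Cl := by
    calc ‖x‖ ≤ Cl * v x := hl x
      _ ≤ Cl * 1 := mul_le_mul_of_nonneg_left hx hCl.le
      _ = Cl := mul_one _
  calc v (A.mulVec x) ≤ Cu * ‖A.mulVec x‖ := hu _
    _ ≤ Cu * ((∑ i, ∑ j, ‖A i j‖) * ‖x‖) :=
        mul_le_mul_of_nonneg_left (mulVec_norm_le A x) hCu.le
    _ ≤ Cu * ((∑ i, ∑ j, ‖A i j‖) * Cl) :=
        mul_le_mul_of_nonneg_left (mul_le_mul_of_nonneg_left h1 hEnn) hCu.le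
    _ = Cu * Cl * (∑ i, ∑ j, ‖A i j‖) := by ring

lemma bddAbove_opNorm (hv : IsCNorm v) (hT : MatBdd T) : BddAbove (opNorm v '' T) := by
  obtain ⟨K, hK, hKb⟩ := opNorm_bound hv
  obtain ⟨C, hC⟩ := hT
  refine ⟨K * ((d : ℝ) * ((d : ℝ) * max C 0)), ?_⟩
  rintro c ⟨A, hA, rfl⟩
  refine (hKb A).trans (mul_le_mul_of_nonneg_left ?_ hK.le)
  calc (∑ i, ∑ j, ‖A i j‖) ≤ ∑ _i : Fin d, ∑ _j : Fin d, max C 0 :=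
        Finset.sum_le_sum fun i _ => Finset.sum_le_sum fun j _ =>
          (hC A hA i j).trans (le_max_left _ _)
    _ = (d : ℝ) * ((d : ℝ) * max C 0) := by
        simp [Finset.sum_const, Finset.card_univ, nsmul_eq_mul]

lemma opNorm_le_setOpNorm (hv : IsCNorm v) (hT : MatBdd T)
    {A : Matrix (Fin d) (Fin d) ℂ} (hA : A ∈ T) : opNorm v A ≤ setOpNorm v T :=
  le_csSup (bddAbove_opNorm hv hT) ⟨A, hA, rfl⟩

lemma setOpNorm_le (hv : IsCNorm v) {c : ℝ} (hc : 0 ≤ c)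
    (h : ∀ A ∈ T, opNorm v A ≤ c) : setOpNorm v T ≤ c :=
  Real.sSup_le (by rintro b ⟨A, hA, rfl⟩; exact h A hA) hc

lemma setOpNorm_mul_le (hv : IsCNorm v) (hT : MatBdd T) (hU : MatBdd U) :
    setOpNorm v (T * U) ≤ setOpNorm v T * setOpNorm v U := by
  apply setOpNorm_le hv (mul_nonneg (setOpNorm_nonneg hv) (setOpNorm_nonneg hv))
  intro A hA
  rw [Set.mem_mul] at hA
  obtain ⟨t, ht, u, hu, rfl⟩ := hA
  calc opNorm v (t * u) ≤ opNorm v t * opNorm v u := opNorm_mul_le hv t u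
    _ ≤ setOpNorm v T * setOpNorm v U :=
        mul_le_mul (opNorm_le_setOpNorm hv hT ht) (opNorm_le_setOpNorm hv hU hu)
          (opNorm_nonneg hv u) (setOpNorm_nonneg hv)

lemma setOpNorm_pow_le (hv : IsCNorm v) (hS : MatBdd S) :
    ∀ n : ℕ, setOpNorm v (S ^ (n + 1)) ≤ setOpNorm v S ^ (n + 1)
  | 0 => by rw [pow_one, pow_one]
  | n + 1 => by
      rw [pow_succ S, pow_succ (setOpNorm v S)]
      exact (setOpNorm_mul_le hv (matBdd_pow hS (n + 1)) hS).trans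
        (mul_le_mul_of_nonneg_right (setOpNorm_pow_le hv hS n) (setOpNorm_nonneg hv))

lemma setOpNorm_add_le (hv : IsCNorm v) (hS : MatBdd S) (m n : ℕ) :
    setOpNorm v (S ^ (m + n)) ≤ setOpNorm v (S ^ m) * setOpNorm v (S ^ n) := by
  rw [pow_add]
  exact setOpNorm_mul_le hv (matBdd_pow hS m) (matBdd_pow hS n)

lemma isCNorm_std : IsCNorm (stdNorm (d := d)) :=
  ⟨fun x => norm_nonneg x, fun x => norm_eq_zero, fun a x => norm_smul a x,
    fun x y => norm_add_le x y⟩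

lemma opNorm_equiv (hv : IsCNorm v) :
    ∃ K : ℝ, 0 < K ∧ (∀ A : Matrix (Fin d) (Fin d) ℂ, opNorm stdNorm A ≤ K * opNorm v A) ∧
      (∀ A : Matrix (Fin d) (Fin d) ℂ, opNorm v A ≤ K * opNorm stdNorm A) := by
  obtain ⟨Cu, hCu, hu⟩ := exists_upper hv
  obtain ⟨Cl, hCl, hl⟩ := exists_lower hv
  refine ⟨Cu * Cl, mul_pos hCu hCl, fun A => ?_, fun A => ?_⟩
  · apply opNorm_le isCNorm_std (mul_nonneg (mul_pos hCu hCl).le (opNorm_nonneg hv A))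
    intro x hx
    have hx' : ‖x‖ ≤ 1 := hx
    calc stdNorm (A.mulVec x) = ‖A.mulVec x‖ := rfl
      _ ≤ Cl * v (A.mulVec x) := hl _
      _ ≤ Cl * (opNorm v A * v x) :=
          mul_le_mul_of_nonneg_left (v_mulVec_le hv A x) hCl.le
      _ ≤ Cl * (opNorm v A * (Cu * ‖x‖)) :=
          mul_le_mul_of_nonneg_left
            (mul_le_mul_of_nonneg_left (hu x) (opNorm_nonneg hv A)) hCl.le
      _ ≤ Cl * (opNorm v A * (Cu * 1)) :=
          mul_le_mul_of_nonneg_left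
            (mul_le_mul_of_nonneg_left
              (mul_le_mul_of_nonneg_left hx' hCu.le) (opNorm_nonneg hv A)) hCl.le
      _ = Cu * Cl * opNorm v A := by ring
  · apply opNorm_le hv (mul_nonneg (mul_pos hCu hCl).le (opNorm_nonneg isCNorm_std A))
    intro x hx
    have h2 : ‖A.mulVec x‖ ≤ opNorm stdNorm A * ‖x‖ := v_mulVec_le isCNorm_std A x
    have h3 : ‖x‖ ≤ Cl := by
      calc ‖x‖ ≤ Cl * v x := hl x
        _ ≤ Cl * 1 := mul_le_mul_of_nonneg_left hx hCl.le
        _ = Cl := mul_one _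
    calc v (A.mulVec x) ≤ Cu * ‖A.mulVec x‖ := hu _
      _ ≤ Cu * (opNorm stdNorm A * ‖x‖) := mul_le_mul_of_nonneg_left h2 hCu.le
      _ ≤ Cu * (opNorm stdNorm A * Cl) :=
          mul_le_mul_of_nonneg_left
            (mul_le_mul_of_nonneg_left h3 (opNorm_nonneg isCNorm_std A)) hCu.le
      _ = Cu * Cl * opNorm stdNorm A := by ring


lemma vecSetNorm_nonneg (hv : IsCNorm v) {x : Fin d → ℂ} : 0 ≤ vecSetNorm v T x :=
  Real.sSup_nonneg (by rintro c ⟨A, hA, rfl⟩; exact hv.1 _)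

lemma bddAbove_vec (hv : IsCNorm v) (hT : MatBdd T) (x : Fin d → ℂ) :
    BddAbove ((fun A => v (A.mulVec x)) '' T) := by
  refine ⟨setOpNorm v T * v x, ?_⟩
  rintro c ⟨A, hA, rfl⟩
  calc v (A.mulVec x) ≤ opNorm v A * v x := v_mulVec_le hv A x
    _ ≤ setOpNorm v T * v x :=
        mul_le_mul_of_nonneg_right (opNorm_le_setOpNorm hv hT hA) (hv.1 x)

lemma vecSetNorm_le_setOpNorm (hv : IsCNorm v) (hT : MatBdd T) (x : Fin d → ℂ) :
    vecSetNorm v T x ≤ setOpNorm v T * v x := by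
  refine Real.sSup_le ?_ (mul_nonneg (setOpNorm_nonneg hv) (hv.1 x))
  rintro c ⟨A, hA, rfl⟩
  calc v (A.mulVec x) ≤ opNorm v A * v x := v_mulVec_le hv A x
    _ ≤ setOpNorm v T * v x :=
        mul_le_mul_of_nonneg_right (opNorm_le_setOpNorm hv hT hA) (hv.1 x)

lemma vecSetNorm_zero (hv : IsCNorm v) : vecSetNorm v T 0 = 0 := by
  refine le_antisymm (Real.sSup_le ?_ le_rfl)
    (Real.sSup_nonneg (by rintro c ⟨A, hA, rfl⟩; exact hv.1 _))
  rintro c ⟨A, hA, rfl⟩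
  simp [Matrix.mulVec_zero, v_zero hv]

lemma vecSetNorm_one (hv : IsCNorm v) (x : Fin d → ℂ) : vecSetNorm v 1 x = v x := by
  unfold vecSetNorm
  rw [← Set.singleton_one, Set.image_singleton, csSup_singleton, Matrix.one_mulVec]

lemma vecSetNorm_smul (hv : IsCNorm v) (a : ℂ) (x : Fin d → ℂ) :
    vecSetNorm v T (a • x) = ‖a‖ * vecSetNorm v T x := by
  unfold vecSetNorm
  have himg : (fun A : Matrix (Fin d) (Fin d) ℂ => v (A.mulVec (a • x))) '' T
      = ‖a‖ • ((fun A : Matrix (Fin d) (Fin d) ℂ => v (A.mulVec x)) '' T) := by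
    rw [← Set.image_smul, Set.image_image]
    exact Set.image_congr fun A _ => by
      rw [Matrix.mulVec_smul, hv.2.2.1, smul_eq_mul]
  rw [himg, Real.sSup_smul_of_nonneg (norm_nonneg a), smul_eq_mul]

lemma vecSetNorm_add (hv : IsCNorm v) (hT : MatBdd T) (x y : Fin d → ℂ) :
    vecSetNorm v T (x + y) ≤ vecSetNorm v T x + vecSetNorm v T y := by
  refine Real.sSup_le ?_ (add_nonneg (vecSetNorm_nonneg hv) (vecSetNorm_nonneg hv))
  rintro c ⟨A, hA, rfl⟩
  show v (A.mulVec (x + y)) ≤ _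
  rw [Matrix.mulVec_add]
  exact (hv.2.2.2 _ _).trans
    (add_le_add (le_csSup (bddAbove_vec hv hT x) ⟨A, hA, rfl⟩)
      (le_csSup (bddAbove_vec hv hT y) ⟨A, hA, rfl⟩))

lemma vecSetNorm_succ (hv : IsCNorm v) (hS : MatBdd S)
    {s : Matrix (Fin d) (Fin d) ℂ} (hs : s ∈ S) (n : ℕ) (x : Fin d → ℂ) :
    vecSetNorm v (S ^ n) (s.mulVec x) ≤ vecSetNorm v (S ^ (n + 1)) x := by
  refine Real.sSup_le ?_ (vecSetNorm_nonneg hv)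
  rintro c ⟨A, hA, rfl⟩
  show v (A.mulVec (s.mulVec x)) ≤ _
  rw [Matrix.mulVec_mulVec]
  exact le_csSup (bddAbove_vec hv (matBdd_pow hS (n + 1)) x)
    ⟨A * s, by rw [pow_succ]; exact Set.mul_mem_mul hA hs, rfl⟩

lemma jsr_nonneg (S : Set (Matrix (Fin d) (Fin d) ℂ)) : 0 ≤ jsr S :=
  Real.iInf_nonneg fun n => Real.rpow_nonneg (setOpNorm_nonneg isCNorm_std) _

lemma jsr_le_setOpNorm (hS : MatBdd S) (hv : IsCNorm v) : jsr S ≤ setOpNorm v S := by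
  obtain ⟨K, hK, h1, h2⟩ := opNorm_equiv hv
  set b := setOpNorm v S with hb
  have hb0 : 0 ≤ b := setOpNorm_nonneg hv
  have key : ∀ n : ℕ, jsr S ≤ K ^ (1 / ((n : ℝ) + 1)) * b := by
    intro n
    have hstd : setOpNorm stdNorm (S ^ (n + 1)) ≤ K * b ^ (n + 1) := by
      apply setOpNorm_le isCNorm_std (by positivity)
      intro A hA
      calc opNorm stdNorm A ≤ K * opNorm v A := h1 A
        _ ≤ K * setOpNorm v (S ^ (n + 1)) :=
            mul_le_mul_of_nonneg_left
              (opNorm_le_setOpNorm hv (matBdd_pow hS (n + 1)) hA) hK.le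
        _ ≤ K * b ^ (n + 1) :=
            mul_le_mul_of_nonneg_left (setOpNorm_pow_le hv hS n) hK.le
    have hbd : BddBelow (Set.range fun n : ℕ =>
        setOpNorm stdNorm (S ^ (n + 1)) ^ (1 / ((n : ℝ) + 1))) := by
      refine ⟨0, ?_⟩
      rintro c ⟨m, rfl⟩
      exact Real.rpow_nonneg (setOpNorm_nonneg isCNorm_std) _
    have h3 : jsr S ≤ setOpNorm stdNorm (S ^ (n + 1)) ^ (1 / ((n : ℝ) + 1)) :=
      ciInf_le hbd n
    refine h3.trans ?_
    calc setOpNorm stdNorm (S ^ (n + 1)) ^ (1 / ((n : ℝ) + 1))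
        ≤ (K * b ^ (n + 1)) ^ (1 / ((n : ℝ) + 1)) :=
          Real.rpow_le_rpow (setOpNorm_nonneg isCNorm_std) hstd (by positivity)
      _ = K ^ (1 / ((n : ℝ) + 1)) * (b ^ (n + 1) : ℝ) ^ (1 / ((n : ℝ) + 1)) :=
          Real.mul_rpow hK.le (by positivity)
      _ = K ^ (1 / ((n : ℝ) + 1)) * b := by
          congr 1
          rw [← Real.rpow_natCast b (n + 1), ← Real.rpow_mul hb0]
          rw [show ((n + 1 : ℕ) : ℝ) * (1 / ((n : ℝ) + 1)) = 1 by
            push_cast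
            field_simp]
          exact Real.rpow_one b
  have hlim : Tendsto (fun n : ℕ => K ^ (1 / ((n : ℝ) + 1)) * b) atTop (𝓝 (1 * b)) := by
    apply Tendsto.mul_const
    have h0 : Tendsto (fun n : ℕ => 1 / ((n : ℝ) + 1)) atTop (𝓝 0) :=
      tendsto_one_div_add_atTop_nhds_zero_nat
    have hc : ContinuousAt (fun e : ℝ => K ^ e) 0 := Real.continuousAt_const_rpow hK.ne'
    have := hc.tendsto.comp h0
    simpa [Real.rpow_zero, Function.comp_def] using this
  have := ge_of_tendsto hlim (Eventually.of_forall key)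
  simpa using this


lemma exists_geom (hS : MatBdd S) {r : ℝ} (hr : 0 < r) (hj : r * jsr S < 1) :
    ∃ D β : ℝ, 0 ≤ D ∧ 0 < β ∧ β < 1 ∧
      ∀ n : ℕ, setOpNorm stdNorm (S ^ n) * r ^ n ≤ D * β ^ n := by
  set a : ℕ → ℝ := fun n => setOpNorm stdNorm (S ^ n) with ha
  have ha0 : ∀ n, 0 ≤ a n := fun n => setOpNorm_nonneg isCNorm_std
  have hsub : ∀ m n, a (m + n) ≤ a m * a n := fun m n => setOpNorm_add_le isCNorm_std hS m n
  have hjr : jsr S < r⁻¹ := by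
    rw [inv_eq_one_div, lt_div_iff₀ hr]
    linarith [mul_comm r (jsr S)]
  obtain ⟨m, hm⟩ := exists_lt_of_ciInf_lt hjr
  set n₀ := m + 1 with hn₀
  have hn₀pos : 0 < n₀ := Nat.succ_pos m
  have hθ : a n₀ * r ^ n₀ < 1 := by
    have h1 : (a n₀ ^ (1 / ((m : ℝ) + 1)) : ℝ) ^ n₀ < r⁻¹ ^ n₀ :=
      pow_lt_pow_left₀ hm (Real.rpow_nonneg (ha0 n₀) _) hn₀pos.ne'
    rw [← Real.rpow_natCast (a n₀ ^ (1 / ((m : ℝ) + 1))) n₀, ← Real.rpow_mul (ha0 n₀)] at h1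
    have he : (1 / ((m : ℝ) + 1)) * (n₀ : ℝ) = 1 := by
      rw [hn₀]; push_cast; field_simp
    rw [he, Real.rpow_one] at h1
    have h2 := mul_lt_mul_of_pos_right h1 (pow_pos hr n₀)
    rwa [inv_pow, inv_mul_cancel₀ (pow_pos hr n₀).ne'] at h2
  set θ' := max (a n₀ * r ^ n₀) 2⁻¹ with hθ'
  have hθ'0 : 0 < θ' := lt_of_lt_of_le (by norm_num) (le_max_right _ _)
  have hθ'1 : θ' < 1 := max_lt hθ (by norm_num)
  have hθle : a n₀ * r ^ n₀ ≤ θ' := le_max_left _ _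
  set c := 1 + ∑ s ∈ Finset.range n₀, a s * r ^ s with hc
  have hsum0 : 0 ≤ ∑ s ∈ Finset.range n₀, a s * r ^ s :=
    Finset.sum_nonneg fun s _ => mul_nonneg (ha0 s) (pow_nonneg hr.le s)
  have hc1 : 1 ≤ c := by rw [hc]; linarith
  have hcs : ∀ s < n₀, a s * r ^ s ≤ c := by
    intro s hs
    have h1 : a s * r ^ s ≤ ∑ t ∈ Finset.range n₀, a t * r ^ t :=
      Finset.single_le_sum (f := fun t => a t * r ^ t)
        (fun t _ => mul_nonneg (ha0 t) (pow_nonneg hr.le t)) (Finset.mem_range.2 hs)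
    rw [hc]; linarith
  have key : ∀ q s, s < n₀ → a (q * n₀ + s) * r ^ (q * n₀ + s) ≤ c * θ' ^ q := by
    intro q
    induction q with
    | zero => intro s hs; simpa using hcs s hs
    | succ q ih =>
        intro s hs
        have hdec : (q + 1) * n₀ + s = n₀ + (q * n₀ + s) := by ring
        rw [hdec, pow_add]
        calc a (n₀ + (q * n₀ + s)) * (r ^ n₀ * r ^ (q * n₀ + s))
            ≤ (a n₀ * a (q * n₀ + s)) * (r ^ n₀ * r ^ (q * n₀ + s)) :=
              mul_le_mul_of_nonneg_right (hsub n₀ _)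
                (mul_nonneg (pow_nonneg hr.le _) (pow_nonneg hr.le _))
          _ = (a n₀ * r ^ n₀) * (a (q * n₀ + s) * r ^ (q * n₀ + s)) := by ring
          _ ≤ θ' * (c * θ' ^ q) :=
              mul_le_mul hθle (ih s hs)
                (mul_nonneg (ha0 _) (pow_nonneg hr.le _)) hθ'0.le
          _ = c * θ' ^ (q + 1) := by rw [pow_succ]; ring
  refine ⟨c / θ', θ' ^ (1 / (n₀ : ℝ)), by positivity,
    Real.rpow_pos_of_pos hθ'0 _, Real.rpow_lt_one hθ'0.le hθ'1 (by positivity), ?_⟩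
  intro n
  have hds : n = (n / n₀) * n₀ + n % n₀ := by
    rw [Nat.mul_comm]
    exact (Nat.div_add_mod n n₀).symm
  set q := n / n₀ with hq
  set s := n % n₀ with hs
  have hslt : s < n₀ := Nat.mod_lt n hn₀pos
  have h1 : a n * r ^ n ≤ c * θ' ^ q := by
    conv_lhs => rw [hds]
    exact key q s hslt
  have hexp : (n : ℝ) / (n₀ : ℝ) - 1 ≤ (q : ℝ) := by
    have hn₀' : (0 : ℝ) < (n₀ : ℝ) := by exact_mod_cast hn₀pos
    rw [sub_le_iff_le_add, div_le_iff₀ hn₀']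
    have hcast : (n : ℝ) = (q : ℝ) * (n₀ : ℝ) + (s : ℝ) := by exact_mod_cast hds
    have hs' : (s : ℝ) < (n₀ : ℝ) := by exact_mod_cast hslt
    nlinarith
  have h2 : (θ' : ℝ) ^ q ≤ θ' ^ ((n : ℝ) / (n₀ : ℝ)) / θ' := by
    calc (θ' : ℝ) ^ q = θ' ^ ((q : ℕ) : ℝ) := (Real.rpow_natCast θ' q).symm
      _ ≤ θ' ^ ((n : ℝ) / (n₀ : ℝ) - 1) :=
          Real.rpow_le_rpow_of_exponent_ge hθ'0 hθ'1.le hexp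
      _ = θ' ^ ((n : ℝ) / (n₀ : ℝ)) / θ' := by
          rw [Real.rpow_sub hθ'0, Real.rpow_one]
  have hβ : (θ' ^ (1 / (n₀ : ℝ))) ^ n = θ' ^ ((n : ℝ) / (n₀ : ℝ)) := by
    rw [← Real.rpow_natCast (θ' ^ (1 / (n₀ : ℝ))) n, ← Real.rpow_mul hθ'0.le]
    congr 1
    ring
  calc a n * r ^ n ≤ c * θ' ^ q := h1
    _ ≤ c * (θ' ^ ((n : ℝ) / (n₀ : ℝ)) / θ') :=
        mul_le_mul_of_nonneg_left h2 (by linarith)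
    _ = (c / θ') * (θ' ^ (1 / (n₀ : ℝ))) ^ n := by rw [hβ]; ring

lemma exists_term_bound (hS : MatBdd S) (hv : IsCNorm v) {r : ℝ} (hr : 0 < r)
    (hj : r * jsr S < 1) :
    ∃ D β : ℝ, 0 ≤ D ∧ 0 < β ∧ β < 1 ∧
      ∀ (x : Fin d → ℂ) (n : ℕ), vecSetNorm v (S ^ n) x * r ^ n ≤ (D * v x) * β ^ n := by
  obtain ⟨D, β, hD, hβ0, hβ1, hgeom⟩ := exists_geom hS hr hj
  obtain ⟨K, hK, h1, h2⟩ := opNorm_equiv hv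
  refine ⟨K * D, β, by positivity, hβ0, hβ1, fun x n => ?_⟩
  have hv1 : vecSetNorm v (S ^ n) x ≤ K * setOpNorm stdNorm (S ^ n) * v x := by
    refine Real.sSup_le ?_
      (mul_nonneg (mul_nonneg hK.le (setOpNorm_nonneg isCNorm_std)) (hv.1 x))
    rintro cc ⟨A, hA, rfl⟩
    show v (A.mulVec x) ≤ _
    calc v (A.mulVec x) ≤ opNorm v A * v x := v_mulVec_le hv A x
      _ ≤ (K * opNorm stdNorm A) * v x := mul_le_mul_of_nonneg_right (h2 A) (hv.1 x)
      _ ≤ (K * setOpNorm stdNorm (S ^ n)) * v x :=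
          mul_le_mul_of_nonneg_right
            (mul_le_mul_of_nonneg_left
              (opNorm_le_setOpNorm isCNorm_std (matBdd_pow hS n) hA) hK.le) (hv.1 x)
  calc vecSetNorm v (S ^ n) x * r ^ n
      ≤ (K * setOpNorm stdNorm (S ^ n) * v x) * r ^ n :=
        mul_le_mul_of_nonneg_right hv1 (pow_nonneg hr.le n)
    _ = (K * v x) * (setOpNorm stdNorm (S ^ n) * r ^ n) := by ring
    _ ≤ (K * v x) * (D * β ^ n) :=
        mul_le_mul_of_nonneg_left (hgeom n) (mul_nonneg hK.le (hv.1 x))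
    _ = ((K * D) * v x) * β ^ n := by ring

lemma rs_summable (hS : MatBdd S) (hv : IsCNorm v) {r : ℝ} (hr : 0 < r)
    (hj : r * jsr S < 1) (x : Fin d → ℂ) :
    Summable (fun n : ℕ => vecSetNorm v (S ^ n) x * r ^ n) := by
  obtain ⟨D, β, hD, hβ0, hβ1, h⟩ := exists_term_bound hS hv hr hj
  exact Summable.of_nonneg_of_le
    (fun n => mul_nonneg (vecSetNorm_nonneg hv) (pow_nonneg hr.le n))
    (fun n => h x n)
    ((summable_geometric_of_lt_one hβ0.le hβ1).mul_left _)

lemma rs_isCNorm (hS : MatBdd S) (hv : IsCNorm v) {r : ℝ} (hr : 0 < r)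
    (hj : r * jsr S < 1) : IsCNorm (rotaStrangNorm v S r) := by
  refine ⟨?_, ?_, ?_, ?_⟩
  · intro x
    exact tsum_nonneg fun n => mul_nonneg (vecSetNorm_nonneg hv) (pow_nonneg hr.le n)
  · intro x
    constructor
    · intro h
      have h0 : vecSetNorm v (S ^ 0) x * r ^ 0 = v x := by
        rw [pow_zero, pow_zero, vecSetNorm_one hv, mul_one]
      have hle : v x ≤ rotaStrangNorm v S r x := by
        rw [← h0]
        exact Summable.le_tsum (rs_summable hS hv hr hj x) 0
          (fun j _ => mul_nonneg (vecSetNorm_nonneg hv) (pow_nonneg hr.le j))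
      rw [h] at hle
      exact (hv.2.1 x).1 (le_antisymm hle (hv.1 x))
    · intro h
      subst h
      unfold rotaStrangNorm
      have : ∀ n : ℕ, vecSetNorm v (S ^ n) (0 : Fin d → ℂ) * r ^ n = 0 := fun n => by
        rw [vecSetNorm_zero hv, zero_mul]
      rw [tsum_congr this, tsum_zero]
  · intro a x
    unfold rotaStrangNorm
    rw [show (fun n : ℕ => vecSetNorm v (S ^ n) (a • x) * r ^ n)
        = fun n => ‖a‖ * (vecSetNorm v (S ^ n) x * r ^ n) from
      funext fun n => by rw [vecSetNorm_smul hv]; ring]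
    exact tsum_mul_left
  · intro x y
    unfold rotaStrangNorm
    have hsx := rs_summable hS hv hr hj x
    have hsy := rs_summable hS hv hr hj y
    have hterm : ∀ n : ℕ, vecSetNorm v (S ^ n) (x + y) * r ^ n
        ≤ vecSetNorm v (S ^ n) x * r ^ n + vecSetNorm v (S ^ n) y * r ^ n := fun n => by
      rw [← add_mul]
      exact mul_le_mul_of_nonneg_right (vecSetNorm_add hv (matBdd_pow hS n) x y)
        (pow_nonneg hr.le n)
    calc ∑' n : ℕ, vecSetNorm v (S ^ n) (x + y) * r ^ n
        ≤ ∑' n : ℕ, (vecSetNorm v (S ^ n) x * r ^ n + vecSetNorm v (S ^ n) y * r ^ n) :=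
          Summable.tsum_le_tsum hterm (rs_summable hS hv hr hj (x + y)) (hsx.add hsy)
      _ = _ := Summable.tsum_add hsx hsy

lemma rs_key (hS : MatBdd S) (hv : IsCNorm v) {r : ℝ} (hr : 0 < r)
    (hj : r * jsr S < 1) {s : Matrix (Fin d) (Fin d) ℂ} (hs : s ∈ S) (x : Fin d → ℂ) :
    rotaStrangNorm v S r (s.mulVec x) ≤ r⁻¹ * rotaStrangNorm v S r x := by
  have hsum1 : Summable (fun n : ℕ => vecSetNorm v (S ^ (n + 1)) x * r ^ (n + 1)) :=
    (rs_summable hS hv hr hj x).comp_injective Nat.succ_injective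
  have hident : ∀ n : ℕ, vecSetNorm v (S ^ (n + 1)) x * r ^ n
      = r⁻¹ * (vecSetNorm v (S ^ (n + 1)) x * r ^ (n + 1)) := by
    intro n
    rw [pow_succ r n]
    field_simp
  have hsum2 : Summable (fun n : ℕ => vecSetNorm v (S ^ (n + 1)) x * r ^ n) :=
    (hsum1.mul_left r⁻¹).congr fun n => (hident n).symm
  have step1 : rotaStrangNorm v S r (s.mulVec x)
      ≤ ∑' n : ℕ, vecSetNorm v (S ^ (n + 1)) x * r ^ n :=
    Summable.tsum_le_tsum
      (fun n => mul_le_mul_of_nonneg_right (vecSetNorm_succ hv hS hs n x)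
        (pow_nonneg hr.le n))
      (rs_summable hS hv hr hj (s.mulVec x)) hsum2
  have step2 : ∑' n : ℕ, vecSetNorm v (S ^ (n + 1)) x * r ^ n
      = r⁻¹ * ∑' n : ℕ, vecSetNorm v (S ^ (n + 1)) x * r ^ (n + 1) := by
    rw [tsum_congr hident, tsum_mul_left]
  have step3 : ∑' n : ℕ, vecSetNorm v (S ^ (n + 1)) x * r ^ (n + 1)
      ≤ rotaStrangNorm v S r x :=
    Summable.tsum_le_tsum_of_inj (fun n => n + 1) (fun a b h => Nat.succ_injective h)
      (fun c _ => mul_nonneg (vecSetNorm_nonneg hv) (pow_nonneg hr.le c))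
      (fun n => le_rfl) hsum1 (rs_summable hS hv hr hj x)
  calc rotaStrangNorm v S r (s.mulVec x)
      ≤ ∑' n : ℕ, vecSetNorm v (S ^ (n + 1)) x * r ^ n := step1
    _ = r⁻¹ * ∑' n : ℕ, vecSetNorm v (S ^ (n + 1)) x * r ^ (n + 1) := step2
    _ ≤ r⁻¹ * rotaStrangNorm v S r x :=
        mul_le_mul_of_nonneg_left step3 (inv_nonneg.2 hr.le)

lemma rs_setOpNorm_le (hS : MatBdd S) {r : ℝ} (hr : 0 < r) (hj : r * jsr S < 1) :
    setOpNorm (rotaStrangNorm stdNorm S r) S ≤ r⁻¹ := by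
  have hnorm := rs_isCNorm hS isCNorm_std hr hj
  apply setOpNorm_le hnorm (inv_nonneg.2 hr.le)
  intro A hA
  apply opNorm_le hnorm (inv_nonneg.2 hr.le)
  intro x hx
  calc rotaStrangNorm stdNorm S r (A.mulVec x)
      ≤ r⁻¹ * rotaStrangNorm stdNorm S r x := rs_key hS isCNorm_std hr hj hA x
    _ ≤ r⁻¹ * 1 := mul_le_mul_of_nonneg_left hx (inv_nonneg.2 hr.le)
    _ = r⁻¹ := mul_one _

end RS

/-- Rota–Strang: `ρ(S)` is the infimum of `‖S‖` over all norms on `ℂ^d`;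
moreover for every `r > 0` with `r·ρ(S) < 1` and every norm `v`, the function
`v_r(x) = Σ_n ‖Sⁿx‖rⁿ` is a norm satisfying `v_r(sx) ≤ r⁻¹ v_r(x)` for all `s ∈ S`. -/
theorem stmt_1 {d : ℕ} (S : Set (Matrix (Fin d) (Fin d) ℂ)) (hS : MatBdd S) :
    jsr S = sInf {c : ℝ | ∃ v : (Fin d → ℂ) → ℝ, IsCNorm v ∧ c = setOpNorm v S} ∧
    ∀ r : ℝ, 0 < r → r * jsr S < 1 → ∀ v : (Fin d → ℂ) → ℝ, IsCNorm v →
      IsCNorm (rotaStrangNorm v S r) ∧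
      ∀ s ∈ S, ∀ x : Fin d → ℂ,
        rotaStrangNorm v S r (s.mulVec x) ≤ r⁻¹ * rotaStrangNorm v S r x := by
  constructor
  · have hne : {c : ℝ | ∃ v : (Fin d → ℂ) → ℝ, IsCNorm v ∧ c = setOpNorm v S}.Nonempty :=
      ⟨setOpNorm stdNorm S, stdNorm, RS.isCNorm_std, rfl⟩
    have hbdd : BddBelow {c : ℝ | ∃ v : (Fin d → ℂ) → ℝ, IsCNorm v ∧ c = setOpNorm v S} := by
      refine ⟨0, ?_⟩
      rintro c ⟨v, hv, rfl⟩
      exact RS.setOpNorm_nonneg hv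
    apply le_antisymm
    · apply le_csInf hne
      rintro c ⟨v, hv, rfl⟩
      exact RS.jsr_le_setOpNorm hS hv
    · apply le_of_forall_pos_le_add
      intro ε hε
      have hj0 := RS.jsr_nonneg S
      have hpos : 0 < jsr S + ε := by linarith
      set r := (jsr S + ε)⁻¹ with hrdef
      have hr : 0 < r := inv_pos.2 hpos
      have hj : r * jsr S < 1 := by
        have h1 : r * jsr S = jsr S / (jsr S + ε) := by
          rw [hrdef, mul_comm, div_eq_mul_inv]
        rw [h1]
        exact (div_lt_one hpos).2 (by linarith)
      have hmem : setOpNorm (rotaStrangNorm stdNorm S r) S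
          ∈ {c : ℝ | ∃ v : (Fin d → ℂ) → ℝ, IsCNorm v ∧ c = setOpNorm v S} :=
        ⟨rotaStrangNorm stdNorm S r, RS.rs_isCNorm hS RS.isCNorm_std hr hj, rfl⟩
      calc sInf {c : ℝ | ∃ v : (Fin d → ℂ) → ℝ, IsCNorm v ∧ c = setOpNorm v S}
          ≤ setOpNorm (rotaStrangNorm stdNorm S r) S := csInf_le hbdd hmem
        _ ≤ r⁻¹ := RS.rs_setOpNorm_le hS hr hj
        _ = jsr S + ε := by rw [hrdef, inv_inv]
  · intro r hr hj v hv
    exact ⟨RS.rs_isCNorm hS hv hr hj, fun s hs x => RS.rs_key hS hv hr hj hs x⟩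
end

section
/- If v is a norm on ℂ^d and ‖·‖₂ is the standard Hermitian norm, then there exists g ∈ GL_d(ℂ) such that ‖gx‖₂ ≤ v(x) ≤ √d·‖gx‖₂ for all x ∈ ℂ^d. -/
open scoped Pointwise
open Filter

/-- The standard Hermitian (Euclidean) norm on `ℂ^d`. -/
noncomputable def hermNorm {d : ℕ} (x : Fin d → ℂ) : ℝ :=
  Real.sqrt (∑ i, ‖x i‖ ^ 2)

namespace Stmt3Aux
open Matrix ComplexConjugate
open scoped ComplexOrder

variable {d : ℕ}

lemma hermNorm_eq (x : Fin d → ℂ) :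
    hermNorm x = ‖(WithLp.toLp 2 x : EuclideanSpace ℂ (Fin d))‖ := by
  rw [EuclideanSpace.norm_eq]; rfl

lemma hermNorm_nonneg (x : Fin d → ℂ) : 0 ≤ hermNorm x := Real.sqrt_nonneg _

lemma hermNorm_sq (x : Fin d → ℂ) : hermNorm x ^ 2 = ∑ i, ‖x i‖ ^ 2 := by
  rw [hermNorm, Real.sq_sqrt]
  exact Finset.sum_nonneg fun i _ => sq_nonneg _

lemma hermNorm_eq_zero {x : Fin d → ℂ} : hermNorm x = 0 ↔ x = 0 := by
  rw [hermNorm_eq, norm_eq_zero]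
  exact ⟨fun h => congrArg WithLp.ofLp h, fun h => by rw [h]; rfl⟩

lemma hermNorm_pos {x : Fin d → ℂ} (hx : x ≠ 0) : 0 < hermNorm x :=
  lt_of_le_of_ne (hermNorm_nonneg x) (fun h => hx (hermNorm_eq_zero.mp h.symm))

lemma hermNorm_smul (c : ℂ) (x : Fin d → ℂ) : hermNorm (c • x) = ‖c‖ * hermNorm x := by
  rw [hermNorm_eq, hermNorm_eq]
  exact norm_smul c (WithLp.toLp 2 x : EuclideanSpace ℂ (Fin d))

lemma star_dot_self (x : Fin d → ℂ) : star x ⬝ᵥ x = ((hermNorm x ^ 2 : ℝ) : ℂ) := by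
  rw [hermNorm_sq, dotProduct]
  push_cast
  refine Finset.sum_congr rfl fun i _ => ?_
  simp [Pi.star_apply, Complex.star_def, Complex.mul_conj', Complex.normSq_eq_norm_sq,
    Complex.sq_norm, ← Complex.normSq_eq_norm_sq, Complex.mul_conj]
  rw [Complex.conj_mul']

lemma dot_le_CS (w x : Fin d → ℂ) : ‖star w ⬝ᵥ x‖ ≤ hermNorm w * hermNorm x := by
  rw [hermNorm_eq, hermNorm_eq]
  have h : star w ⬝ᵥ x =
      (inner ℂ (WithLp.toLp 2 w : EuclideanSpace ℂ (Fin d)) (WithLp.toLp 2 x : EuclideanSpace ℂ (Fin d)) : ℂ) := by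
    rw [EuclideanSpace.inner_eq_star_dotProduct]; exact dotProduct_comm _ _
  rw [h]
  exact norm_inner_le_norm _ _

lemma norm_apply_le (x : Fin d → ℂ) (i : Fin d) : ‖x i‖ ≤ hermNorm x := by
  have h1 : ‖x i‖ ^ 2 ≤ ∑ j, ‖x j‖ ^ 2 :=
    Finset.single_le_sum (fun j _ => sq_nonneg ‖x j‖) (Finset.mem_univ i)
  calc ‖x i‖ = Real.sqrt (‖x i‖ ^ 2) := (Real.sqrt_sq (norm_nonneg _)).symm
    _ ≤ hermNorm x := Real.sqrt_le_sqrt h1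
variable (v : (Fin d → ℂ) → ℝ)

lemma v_sum_le (hv : IsCNorm v) {ι : Type*} (s : Finset ι) (f : ι → (Fin d → ℂ)) :
    v (∑ i ∈ s, f i) ≤ ∑ i ∈ s, v (f i) := by
  classical
  induction s using Finset.induction with
  | empty => simp [(hv.2.1 0).mpr rfl]
  | insert _ _ hx ih =>
    rw [Finset.sum_insert hx, Finset.sum_insert hx]
    exact le_trans (hv.2.2.2 _ _) (by linarith)

lemma hermNorm_le_norm (x : Fin d → ℂ) : hermNorm x ≤ Real.sqrt d * ‖x‖ := by
  have h1 : ∑ i, ‖x i‖ ^ 2 ≤ ∑ _i : Fin d, ‖x‖ ^ 2 :=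
    Finset.sum_le_sum fun i _ => pow_le_pow_left₀ (norm_nonneg _) (norm_le_pi_norm x i) 2
  calc hermNorm x ≤ Real.sqrt (∑ _i : Fin d, ‖x‖ ^ 2) := Real.sqrt_le_sqrt h1
    _ = Real.sqrt (d * ‖x‖ ^ 2) := by rw [Finset.sum_const]; simp [mul_comm]
    _ = Real.sqrt d * ‖x‖ := by
        rw [Real.sqrt_mul (Nat.cast_nonneg d), Real.sqrt_sq (norm_nonneg _)]

lemma v_upper' (hv : IsCNorm v) :
    ∃ C : ℝ, 0 < C ∧ ∀ x, v x ≤ C * hermNorm x := by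
  have hnn : 0 ≤ ∑ i, v (Pi.single i 1) := Finset.sum_nonneg fun i _ => hv.1 _
  refine ⟨(∑ i, v (Pi.single i 1)) + 1, by linarith, fun x => ?_⟩
  have hx : x = ∑ i, (x i) • (Pi.single i (1 : ℂ) : Fin d → ℂ) := by
    have h0 := Finset.univ_sum_single x
    rw [← h0]
    refine Finset.sum_congr rfl fun i _ => ?_
    ext j
    by_cases h : j = i <;> simp [Pi.single_apply, h]
  calc v x = v (∑ i, (x i) • (Pi.single i (1:ℂ) : Fin d → ℂ)) := by rw [← hx]
    _ ≤ ∑ i, v ((x i) • (Pi.single i (1:ℂ) : Fin d → ℂ)) := v_sum_le v hv _ _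
    _ = ∑ i, ‖x i‖ * v (Pi.single i (1:ℂ)) := by
        exact Finset.sum_congr rfl fun i _ => hv.2.2.1 _ _
    _ ≤ ∑ i, hermNorm x * v (Pi.single i (1:ℂ)) := by
        refine Finset.sum_le_sum fun i _ => ?_
        exact mul_le_mul_of_nonneg_right (norm_apply_le x i) (hv.1 _)
    _ = (∑ i, v (Pi.single i 1)) * hermNorm x := by rw [← Finset.mul_sum, mul_comm]
    _ ≤ ((∑ i, v (Pi.single i 1)) + 1) * hermNorm x := by
        have := hermNorm_nonneg x; nlinarith

lemma v_abs_sub (hv : IsCNorm v) (x y : Fin d → ℂ) : |v x - v y| ≤ v (x - y) := by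
  rw [abs_sub_le_iff]
  constructor
  · have h := hv.2.2.2 y (x - y)
    simp only [add_sub_cancel] at h
    linarith
  · have h := hv.2.2.2 x (y - x)
    simp only [add_sub_cancel] at h
    have h2 : v (y - x) = v (x - y) := by
      have : y - x = (-1 : ℂ) • (x - y) := by ring_nf; module
      rw [this, hv.2.2.1]; simp
    linarith

lemma v_continuous (hv : IsCNorm v) : Continuous v := by
  obtain ⟨C, hC, hCle⟩ := v_upper' v hv
  rw [Metric.continuous_iff]
  intro x ε hε
  refine ⟨ε / (C * Real.sqrt d + 1), by positivity, fun y hy => ?_⟩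
  have h1 : |v y - v x| ≤ v (y - x) := v_abs_sub v hv y x
  have h2 : v (y - x) ≤ C * hermNorm (y - x) := hCle _
  have h3 : hermNorm (y - x) ≤ Real.sqrt d * ‖y - x‖ := hermNorm_le_norm _
  have h4 : ‖y - x‖ = dist y x := (dist_eq_norm y x).symm
  have h5 : dist y x < ε / (C * Real.sqrt d + 1) := hy
  have hs : (0:ℝ) ≤ Real.sqrt d := Real.sqrt_nonneg _
  have hd0 : (0:ℝ) ≤ dist y x := dist_nonneg
  rw [Real.dist_eq]
  have : C * Real.sqrt d * dist y x < ε := by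
    calc C * Real.sqrt d * dist y x ≤ (C * Real.sqrt d + 1) * dist y x := by nlinarith
      _ < (C * Real.sqrt d + 1) * (ε / (C * Real.sqrt d + 1)) := by
          have : (0:ℝ) < C * Real.sqrt d + 1 := by positivity
          exact mul_lt_mul_of_pos_left h5 this
      _ = ε := by field_simp
  have h6 : |v y - v x| ≤ C * (Real.sqrt d * dist y x) := by
    calc |v y - v x| ≤ C * hermNorm (y - x) := le_trans h1 h2
      _ ≤ C * (Real.sqrt d * ‖y - x‖) := mul_le_mul_of_nonneg_left h3 (le_of_lt hC)
      _ = C * (Real.sqrt d * dist y x) := by rw [h4]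
  calc |v y - v x| ≤ C * Real.sqrt d * dist y x := by linarith [h6, mul_assoc C (Real.sqrt d) (dist y x)]
    _ < ε := this

lemma v_lower (hd : 0 < d) (hv : IsCNorm v) :
    ∃ c : ℝ, 0 < c ∧ ∀ x, c * hermNorm x ≤ v x := by
  have hsc : IsCompact (Metric.sphere (0 : Fin d → ℂ) 1) := isCompact_sphere 0 1
  have hsn : (Metric.sphere (0 : Fin d → ℂ) 1).Nonempty := by
    refine ⟨Pi.single ⟨0, hd⟩ 1, ?_⟩
    rw [mem_sphere_iff_norm, sub_zero, Pi.norm_single, norm_one]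
  obtain ⟨u, hu, hmin⟩ := hsc.exists_isMinOn hsn (v_continuous v hv).continuousOn
  have hu1 : ‖u‖ = 1 := by simpa [mem_sphere_iff_norm] using hu
  have hune : u ≠ 0 := fun h => by simp [h] at hu1
  have hm : 0 < v u := lt_of_le_of_ne (hv.1 u) fun h => hune ((hv.2.1 u).mp h.symm)
  have hs : (0:ℝ) < Real.sqrt d := Real.sqrt_pos.mpr (by exact_mod_cast hd)
  refine ⟨v u / Real.sqrt d, by positivity, fun x => ?_⟩
  rcases eq_or_ne x 0 with rfl | hx
  · simp [hermNorm_eq_zero.mpr rfl, (hv.2.1 0).mpr rfl]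
  · have hxn : (0:ℝ) < ‖x‖ := norm_pos_iff.mpr hx
    have hmem : (‖x‖⁻¹ : ℂ) • x ∈ Metric.sphere (0 : Fin d → ℂ) 1 := by
      rw [mem_sphere_iff_norm, sub_zero, norm_smul, norm_inv, Complex.norm_real,
        Real.norm_eq_abs, abs_of_pos hxn]
      field_simp
    have h1 : v u ≤ v ((‖x‖⁻¹ : ℂ) • x) := hmin hmem
    have h2 : v ((‖x‖⁻¹ : ℂ) • x) = ‖x‖⁻¹ * v x := by
      rw [hv.2.2.1]
      rw [norm_inv, Complex.norm_real, Real.norm_eq_abs, abs_of_pos hxn]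
    have h3 : v u * ‖x‖ ≤ v x := by
      rw [h2] at h1
      calc v u * ‖x‖ ≤ (‖x‖⁻¹ * v x) * ‖x‖ := by nlinarith
        _ = v x := by field_simp
    have h4 : hermNorm x ≤ Real.sqrt d * ‖x‖ := hermNorm_le_norm x
    rw [div_mul_eq_mul_div, div_le_iff₀ hs] at *
    calc v u * hermNorm x ≤ v u * (Real.sqrt d * ‖x‖) :=
          mul_le_mul_of_nonneg_left h4 (le_of_lt hm)
      _ = (v u * ‖x‖) * Real.sqrt d := by ring
      _ ≤ v x * Real.sqrt d := mul_le_mul_of_nonneg_right h3 (le_of_lt hs)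


/-! ### The quadratic form of a matrix -/

noncomputable def Q (H : Matrix (Fin d) (Fin d) ℂ) (x : Fin d → ℂ) : ℝ :=
  (star x ⬝ᵥ H *ᵥ x).re

lemma dot_expand (H : Matrix (Fin d) (Fin d) ℂ) (x y : Fin d → ℂ) :
    star x ⬝ᵥ H *ᵥ y = ∑ i, ∑ j, conj (x i) * (H i j * y j) := by
  simp only [dotProduct, mulVec, Pi.star_apply, Complex.star_def, Finset.mul_sum]

lemma conj_B {H : Matrix (Fin d) (Fin d) ℂ} (hH : H.IsHermitian) (x y : Fin d → ℂ) :
    conj (star x ⬝ᵥ H *ᵥ y) = star y ⬝ᵥ H *ᵥ x := by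
  rw [dot_expand, dot_expand, map_sum]
  rw [Finset.sum_comm]
  refine Finset.sum_congr rfl fun j _ => ?_
  rw [map_sum]
  refine Finset.sum_congr rfl fun i _ => ?_
  have _hij : conj (H i j) = H j i := by
    have h2 := congrFun (congrFun hH.eq j) i
    rwa [Matrix.conjTranspose_apply, Complex.star_def] at h2
  have hji : conj (H j i) = H i j := by
    have h2 := congrFun (congrFun hH.eq i) j
    rwa [Matrix.conjTranspose_apply, Complex.star_def] at h2
  simp only [_root_.map_mul, Complex.conj_conj, hji]
  ring

lemma herm_dot_real {H : Matrix (Fin d) (Fin d) ℂ} (hH : H.IsHermitian) (x : Fin d → ℂ) :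
    star x ⬝ᵥ H *ᵥ x = ((Q H x : ℝ) : ℂ) := by
  have h := conj_B hH x x
  rw [Complex.conj_eq_iff_re] at h
  exact h.symm

lemma posSemidef_iff_Q {H : Matrix (Fin d) (Fin d) ℂ} (hH : H.IsHermitian) :
    H.PosSemidef ↔ ∀ x, 0 ≤ Q H x := by
  constructor
  · intro h x; exact h.re_dotProduct_nonneg x
  · intro h
    refine .of_dotProduct_mulVec_nonneg hH fun x => ?_
    rw [herm_dot_real hH x]
    exact_mod_cast Complex.zero_le_real.mpr (h x)


lemma Q_add (H K : Matrix (Fin d) (Fin d) ℂ) (x : Fin d → ℂ) :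
    Q (H + K) x = Q H x + Q K x := by
  unfold Q
  rw [Matrix.add_mulVec, dotProduct_add, Complex.add_re]

lemma Q_real_smul (c : ℝ) (H : Matrix (Fin d) (Fin d) ℂ) (x : Fin d → ℂ) :
    Q ((c : ℂ) • H) x = c * Q H x := by
  unfold Q
  rw [Matrix.smul_mulVec, dotProduct_smul]
  simp [Complex.re_ofReal_mul]

lemma Q_one (x : Fin d → ℂ) : Q (1 : Matrix (Fin d) (Fin d) ℂ) x = hermNorm x ^ 2 := by
  unfold Q
  rw [Matrix.one_mulVec, star_dot_self]
  exact Complex.ofReal_re _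

lemma Q_transfer (A B : Matrix (Fin d) (Fin d) ℂ) (x : Fin d → ℂ) :
    star (A *ᵥ x) ⬝ᵥ (B *ᵥ x) = star x ⬝ᵥ (Aᴴ * B) *ᵥ x := by
  rw [Matrix.star_mulVec, ← Matrix.mulVec_mulVec]
  rw [← Matrix.dotProduct_mulVec]

lemma hermNorm_mulVec_sq (A : Matrix (Fin d) (Fin d) ℂ) (x : Fin d → ℂ) :
    hermNorm (A *ᵥ x) ^ 2 = Q (Aᴴ * A) x := by
  unfold Q
  rw [← Q_transfer]
  rw [star_dot_self]
  exact (Complex.ofReal_re _).symm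


/-! ### The constraint set -/

def SS : Set (Matrix (Fin d) (Fin d) ℂ) := {H | H.PosSemidef ∧ ∀ x, Q H x ≤ (v x)^2}

lemma dot_continuous (x : Fin d → ℂ) :
    Continuous fun H : Matrix (Fin d) (Fin d) ℂ => star x ⬝ᵥ H *ᵥ x := by
  simp only [dot_expand]
  refine continuous_finset_sum _ fun i _ => continuous_finset_sum _ fun j _ => ?_
  exact continuous_const.mul ((continuous_apply_apply i j).mul continuous_const)

lemma Q_continuous (x : Fin d → ℂ) :
    Continuous fun H : Matrix (Fin d) (Fin d) ℂ => Q H x :=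
  Complex.continuous_re.comp (dot_continuous x)

lemma SS_closed : IsClosed (SS v) := by
  have hset : SS v = {H : Matrix (Fin d) (Fin d) ℂ | Hᴴ = H} ∩
      ({H | ∀ x, 0 ≤ Q H x} ∩ {H | ∀ x, Q H x ≤ (v x)^2}) := by
    ext H
    simp only [SS, Set.mem_setOf_eq, Set.mem_inter_iff]
    constructor
    · rintro ⟨hpsd, hle⟩
      exact ⟨hpsd.1, fun x => hpsd.re_dotProduct_nonneg x, hle⟩
    · rintro ⟨hherm, hpos, hle⟩
      exact ⟨(posSemidef_iff_Q hherm).mpr hpos, hle⟩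
  rw [hset]
  refine IsClosed.inter ?_ (IsClosed.inter ?_ ?_)
  · exact isClosed_eq (continuous_id.matrix_conjTranspose) continuous_id
  · have h2 : {H : Matrix (Fin d) (Fin d) ℂ | ∀ x, 0 ≤ Q H x} = ⋂ x, {H | 0 ≤ Q H x} := by
      ext H; simp [Set.mem_iInter]
    rw [h2]
    exact isClosed_iInter fun x => isClosed_le continuous_const (Q_continuous x)
  · have h3 : {H : Matrix (Fin d) (Fin d) ℂ | ∀ x, Q H x ≤ (v x)^2} =
        ⋂ x, {H | Q H x ≤ (v x)^2} := by
      ext H; simp [Set.mem_iInter]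
    rw [h3]
    exact isClosed_iInter fun x => isClosed_le (Q_continuous x) continuous_const

/-! ### Entry bounds -/

lemma single_hermNorm_sq (i : Fin d) : hermNorm (Pi.single i (1:ℂ)) ^ 2 = 1 := by
  rw [hermNorm_sq]
  have h : ∀ k, ‖(Pi.single i (1:ℂ) : Fin d → ℂ) k‖ ^ 2 = if k = i then 1 else 0 := by
    intro k
    by_cases h : k = i <;> simp [Pi.single_apply, h]
  simp only [h]
  simp

lemma pair_hermNorm_sq {i j : Fin d} (hij : i ≠ j) {c : ℂ} (hc : ‖c‖ = 1) :
    hermNorm ((Pi.single i (1:ℂ) : Fin d → ℂ) + c • (Pi.single j (1:ℂ) : Fin d → ℂ)) ^ 2 = 2 := by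
  rw [hermNorm_sq]
  have h : ∀ k, ‖((Pi.single i (1:ℂ) : Fin d → ℂ) + c • (Pi.single j (1:ℂ) : Fin d → ℂ)) k‖ ^ 2
      = (if k = i then 1 else 0) + (if k = j then 1 else 0) := by
    intro k
    by_cases h1 : k = i
    · subst h1
      simp [Pi.single_apply, hij, Ne.symm hij, hc]
    · by_cases h2 : k = j
      · subst h2
        simp [Pi.single_apply, h1, hc]
      · simp [Pi.single_apply, h1, h2]
  simp only [h, Finset.sum_add_distrib]
  simp
  norm_num

lemma B_single (H : Matrix (Fin d) (Fin d) ℂ) (i j : Fin d) :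
    star (Pi.single i (1:ℂ) : Fin d → ℂ) ⬝ᵥ H *ᵥ (Pi.single j (1:ℂ) : Fin d → ℂ) = H i j := by
  rw [dot_expand]
  rw [Finset.sum_eq_single i]
  · rw [Finset.sum_eq_single j] <;> simp +contextual [Pi.single_apply]
  · intro k _ hk
    simp [Pi.single_apply, hk]
  · simp

lemma q_poly {H : Matrix (Fin d) (Fin d) ℂ} (hH : H.IsHermitian) (x y : Fin d → ℂ) :
    Q H (x + y) = Q H x + Q H y + 2 * (star x ⬝ᵥ H *ᵥ y).re := by
  unfold Q
  have hexp : star (x + y) ⬝ᵥ H *ᵥ (x + y) =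
      star x ⬝ᵥ H *ᵥ x + star y ⬝ᵥ H *ᵥ y + (star x ⬝ᵥ H *ᵥ y + star y ⬝ᵥ H *ᵥ x) := by
    rw [star_add, Matrix.mulVec_add, add_dotProduct, dotProduct_add,
      dotProduct_add]
    ring
  rw [hexp]
  have hconj : star y ⬝ᵥ H *ᵥ x = conj (star x ⬝ᵥ H *ᵥ y) := (conj_B hH x y).symm
  rw [hconj]
  simp [Complex.add_re, Complex.conj_re]
  ring

lemma re_B_bound {H : Matrix (Fin d) (Fin d) ℂ} (hH : H.PosSemidef) {M : ℝ}
    (hM : 0 ≤ M) (x y : Fin d → ℂ)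
    (hx : Q H x ≤ M) (hy : Q H y ≤ M) (hxy : Q H (x + y) ≤ 2 * M) :
    |(star x ⬝ᵥ H *ᵥ y).re| ≤ M := by
  have h := q_poly hH.1 x y
  have h0x : 0 ≤ Q H x := hH.re_dotProduct_nonneg x
  have h0y : 0 ≤ Q H y := hH.re_dotProduct_nonneg y
  have h0xy : 0 ≤ Q H (x + y) := hH.re_dotProduct_nonneg (x + y)
  rw [abs_le]
  constructor <;> linarith

lemma entry_bound {C : ℝ} (hC0 : 0 ≤ C) (hv : IsCNorm v)
    (hC : ∀ x, v x ≤ C * hermNorm x) {H : Matrix (Fin d) (Fin d) ℂ} (hmem : H ∈ SS v) :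
    ∀ i j, ‖H i j‖ ≤ 4 * C ^ 2 := by
  obtain ⟨hpsd, hle⟩ := hmem
  have hq : ∀ x, Q H x ≤ C ^ 2 * hermNorm x ^ 2 := by
    intro x
    refine le_trans (hle x) ?_
    have h1 : v x ≤ C * hermNorm x := hC x
    have h2 : 0 ≤ v x := hv.1 x
    nlinarith
  intro i j
  set ei : Fin d → ℂ := Pi.single i (1:ℂ)
  set ej : Fin d → ℂ := Pi.single j (1:ℂ)
  by_cases hij : i = j
  · subst hij
    have h1 : star ei ⬝ᵥ H *ᵥ ei = H i i := B_single H i i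
    have h2 : H i i = ((Q H ei : ℝ) : ℂ) := by rw [← h1, herm_dot_real hpsd.1]
    have h0 : (0:ℝ) ≤ Q H ei := hpsd.re_dotProduct_nonneg ei
    rw [h2, Complex.norm_real, Real.norm_eq_abs, abs_of_nonneg h0]
    have h3 := hq ei
    rw [single_hermNorm_sq] at h3
    nlinarith
  · have hC2 : (0:ℝ) ≤ C ^ 2 := sq_nonneg C
    have hq1 : Q H ei ≤ C ^ 2 := by
      have h3 := hq ei; rwa [single_hermNorm_sq, mul_one] at h3
    have hq2 : Q H ej ≤ C ^ 2 := by
      have h3 := hq ej; rwa [single_hermNorm_sq, mul_one] at h3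
    have hqI : Q H (Complex.I • ej) ≤ C ^ 2 := by
      have h3 := hq (Complex.I • ej)
      rwa [hermNorm_smul, Complex.norm_I, one_mul, single_hermNorm_sq, mul_one] at h3
    have hq12 : Q H (ei + ej) ≤ 2 * C ^ 2 := by
      have h3 := hq (ei + ej)
      have h4 : hermNorm (ei + ej) ^ 2 = 2 := by
        have := pair_hermNorm_sq hij (c := (1:ℂ)) (by simp)
        simpa using this
      rw [h4] at h3; linarith
    have hq1I : Q H (ei + Complex.I • ej) ≤ 2 * C ^ 2 := by
      have h3 := hq (ei + Complex.I • ej)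
      rw [pair_hermNorm_sq hij (c := Complex.I) Complex.norm_I] at h3; linarith
    have hre : |(star ei ⬝ᵥ H *ᵥ ej).re| ≤ C ^ 2 :=
      re_B_bound hpsd hC2 ei ej hq1 hq2 hq12
    have him0 : star ei ⬝ᵥ H *ᵥ (Complex.I • ej) = Complex.I * (star ei ⬝ᵥ H *ᵥ ej) := by
      rw [Matrix.mulVec_smul, dotProduct_smul]
      simp
    have him : |(star ei ⬝ᵥ H *ᵥ ej).im| ≤ C ^ 2 := by
      have h5 := re_B_bound hpsd hC2 ei (Complex.I • ej) hq1 hqI hq1I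
      rw [him0] at h5
      have h6 : (Complex.I * (star ei ⬝ᵥ H *ᵥ ej)).re = -(star ei ⬝ᵥ H *ᵥ ej).im := by
        simp [Complex.mul_re]
      rwa [h6, abs_neg] at h5
    have habs : ‖H i j‖ ≤ |(H i j).re| + |(H i j).im| := Complex.norm_le_abs_re_add_abs_im (H i j)
    rw [B_single H i j] at hre him
    nlinarith


/-! ### Compactness and the maximizer -/

lemma SS_compact (hv : IsCNorm v) : IsCompact (SS v) := by
  obtain ⟨C, hC0, hC⟩ := v_upper' v hv
  set K : Set (Matrix (Fin d) (Fin d) ℂ) :=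
    Set.pi Set.univ fun _ : Fin d => Set.pi Set.univ fun _ : Fin d => Metric.closedBall (0:ℂ) (4 * C ^ 2)
  have hK : IsCompact K :=
    isCompact_univ_pi fun _ => isCompact_univ_pi fun _ => isCompact_closedBall _ _
  refine IsCompact.of_isClosed_subset hK (SS_closed v) ?_
  intro H hH
  have hb := entry_bound v hC0.le hv hC hH
  intro i _ 
  intro j _
  rw [Metric.mem_closedBall, dist_zero_right]
  exact hb i j

open scoped MatrixOrder in
lemma psd_sqrt_exists {H : Matrix (Fin d) (Fin d) ℂ} (hpsd : H.PosSemidef) :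
    ∃ g : Matrix (Fin d) (Fin d) ℂ, gᴴ = g ∧ g * g = H :=
  ⟨CFC.sqrt H, (CFC.sqrt_nonneg H).posSemidef.1, CFC.sqrt_mul_sqrt_self H hpsd.nonneg⟩

lemma psd_posDef_of_det_ne_zero {H : Matrix (Fin d) (Fin d) ℂ} (hpsd : H.PosSemidef)
    (hdet : H.det ≠ 0) : H.PosDef := by
  obtain ⟨g, hgh, hgg⟩ := psd_sqrt_exists hpsd
  have hdet' : g.det * g.det = H.det := by rw [← Matrix.det_mul, hgg]
  have hgd : g.det ≠ 0 := by
    intro h0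
    rw [h0, mul_zero] at hdet'
    exact hdet hdet'.symm
  have hgu : IsUnit g := (Matrix.isUnit_iff_isUnit_det g).mpr (isUnit_iff_ne_zero.mpr hgd)
  refine .of_dotProduct_mulVec_pos hpsd.1 fun x hx => ?_
  have h1 : star x ⬝ᵥ H *ᵥ x = star (g *ᵥ x) ⬝ᵥ (g *ᵥ x) := by
    rw [Q_transfer, hgh, hgg]
  have hgx : g *ᵥ x ≠ 0 := by
    intro h0
    apply hx
    have h2 : g⁻¹ *ᵥ (g *ᵥ x) = x := by
      rw [Matrix.mulVec_mulVec, Matrix.nonsing_inv_mul g (isUnit_iff_ne_zero.mpr hgd),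
        Matrix.one_mulVec]
    rw [← h2, h0, Matrix.mulVec_zero]
  have h2 : star (g *ᵥ x) ⬝ᵥ (g *ᵥ x) ≠ 0 := fun h0 =>
    hgx (dotProduct_star_self_eq_zero.mp h0)
  have h3 : 0 ≤ star (g *ᵥ x) ⬝ᵥ (g *ᵥ x) := dotProduct_star_self_nonneg _
  rw [h1]
  exact lt_of_le_of_ne h3 (Ne.symm h2)

lemma smul_one_mem_SS {c : ℝ} (hc : 0 < c) (hv : IsCNorm v)
    (hlow : ∀ x, c * hermNorm x ≤ v x) : ((c^2 : ℝ) : ℂ) • (1 : Matrix (Fin d) (Fin d) ℂ) ∈ SS v := by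
  constructor
  · have hdiag : ((c^2 : ℝ) : ℂ) • (1 : Matrix (Fin d) (Fin d) ℂ) =
        Matrix.diagonal (fun _ => ((c^2 : ℝ) : ℂ)) := by
      ext i j
      by_cases h : i = j <;>
        simp [Matrix.smul_apply, Matrix.diagonal_apply, Matrix.one_apply, h]
    rw [hdiag]
    refine Matrix.PosSemidef.diagonal ?_
    intro i
    exact Complex.zero_le_real.mpr (by positivity)
  · intro x
    rw [Q_real_smul, Q_one]
    have h1 := hlow x
    have h2 := hermNorm_nonneg x
    have h3 : (0:ℝ) ≤ v x := hv.1 x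
    nlinarith [mul_nonneg (sub_nonneg.mpr h1) (by positivity : (0:ℝ) ≤ v x + c * hermNorm x)]

lemma exists_maximizer (hd : 0 < d) (hv : IsCNorm v) :
    ∃ H₀ ∈ SS v, H₀.PosDef ∧ ∀ H ∈ SS v, (H.det).re ≤ (H₀.det).re := by
  obtain ⟨c, hc, hlow⟩ := v_lower v hd hv
  have hmem := smul_one_mem_SS v hc hv hlow
  have hne : (SS v).Nonempty := ⟨_, hmem⟩
  obtain ⟨H₀, hH₀, hmax⟩ := (SS_compact v hv).exists_isMaxOn hne
    ((Complex.continuous_re.comp continuous_id.matrix_det).continuousOn)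
  have hdet1 : ((((c^2 : ℝ) : ℂ) • (1 : Matrix (Fin d) (Fin d) ℂ)).det).re = (c^2)^d := by
    rw [Matrix.det_smul, Matrix.det_one, mul_one]
    rw [show (((c^2 : ℝ):ℂ))^(Fintype.card (Fin d)) = (((c^2)^d : ℝ) : ℂ) by push_cast; simp]
    exact Complex.ofReal_re _
  have hpos : (0:ℝ) < (H₀.det).re := by
    have h1 : ((((c^2 : ℝ) : ℂ) • (1 : Matrix (Fin d) (Fin d) ℂ)).det).re ≤ (H₀.det).re :=
      hmax hmem
    rw [hdet1] at h1
    have : (0:ℝ) < (c^2)^d := by positivity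
    linarith [h1]
  have hdet0 : H₀.det ≠ 0 := fun h0 => by rw [h0] at hpos; simp at hpos
  exact ⟨H₀, hH₀, psd_posDef_of_det_ne_zero hH₀.1 hdet0, fun H hH => hmax hH⟩


/-! ### Supporting functional -/

lemma exists_functional (hv : IsCNorm v) {p : Fin d → ℂ} (hp : p ≠ 0) :
    ∃ w : Fin d → ℂ, (∀ x, ‖star w ⬝ᵥ x‖ ≤ v x) ∧ (star w ⬝ᵥ p).re = v p := by
  have hvp : 0 < v p := lt_of_le_of_ne (hv.1 p) fun h => hp ((hv.2.1 p).mp h.symm)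
  -- the open convex set
  set s : Set (Fin d → ℂ) := {x | v x < v p} with hs
  have hsopen : IsOpen s := isOpen_lt (v_continuous v hv) continuous_const
  have hsconv : Convex ℝ s := by
    intro x hx y hy a b ha hb hab
    have hax : (a • x : Fin d → ℂ) = ((a:ℂ)) • x := by
      ext j; simp [Complex.real_smul]
    have hby : (b • y : Fin d → ℂ) = ((b:ℂ)) • y := by
      ext j; simp [Complex.real_smul]
    have h1 : v (a • x + b • y) ≤ a * v x + b * v y := by
      rw [hax, hby]
      refine le_trans (hv.2.2.2 _ _) ?_
      rw [hv.2.2.1, hv.2.2.1]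
      simp [Complex.norm_real, abs_of_nonneg ha, abs_of_nonneg hb]
    have hx' : v x < v p := hx
    have hy' : v y < v p := hy
    have hlt : a * v x + b * v y < v p := by
      rcases eq_or_lt_of_le ha with haz | hap
      · have hb1 : b = 1 := by linarith
        rw [← haz, hb1]; simpa using hy'
      · nlinarith [mul_pos hap (sub_pos.mpr hx'), mul_nonneg hb (sub_pos.mpr hy').le]
    exact lt_of_le_of_lt h1 hlt
  have hps : p ∉ s := by simp [hs]
  obtain ⟨f, hf⟩ := geometric_hahn_banach_open_point hsconv hsopen hps
  set r : ℝ := f p with hr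
  have hr0 : 0 < r := by
    have h0 : (0 : Fin d → ℂ) ∈ s := by simp [hs, (hv.2.1 0).mpr rfl, hvp]
    have := hf 0 h0
    simpa using this
  -- complex extension
  set F : (Fin d → ℂ) → ℂ := fun x => (f x : ℂ) - Complex.I * (f (Complex.I • x)) with hF
  have hF_re : ∀ x, (F x).re = f x := by
    intro x; simp [hF]
  have hF_add : ∀ x y, F (x + y) = F x + F y := by
    intro x y
    simp only [hF, smul_add, map_add]
    push_cast
    ring
  have hF_zero : F 0 = 0 := by simp [hF]
  have hF_rsmul : ∀ (a : ℝ) x, F (a • x) = (a : ℂ) * F x := by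
    intro a x
    have h1 : Complex.I • (a • x) = a • (Complex.I • x) := smul_comm _ _ _
    simp only [hF, h1]
    rw [f.map_smul, f.map_smul]
    push_cast [smul_eq_mul]
    ring
  have hF_I : ∀ x, F (Complex.I • x) = Complex.I * F x := by
    intro x
    have h1 : Complex.I • (Complex.I • x) = -x := by
      rw [smul_smul, Complex.I_mul_I, neg_one_smul]
    simp only [hF, h1, map_neg]
    push_cast
    ring_nf
    rw [Complex.I_sq]
    ring
  have hF_csmul : ∀ (c : ℂ) x, F (c • x) = c * F x := by
    intro c x
    have hdec : c • x = c.re • x + c.im • (Complex.I • x) := by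
      ext j
      simp [Complex.real_smul, smul_smul]
      linear_combination -x j * Complex.re_add_im c
    rw [hdec, hF_add, hF_rsmul, hF_rsmul, hF_I]
    linear_combination (F x) * Complex.re_add_im c
  -- the vector w₀ representing F
  set w₀ : Fin d → ℂ := fun i => conj (F (Pi.single i 1)) with hw₀
  have hFsum : ∀ {ι : Type} (t : Finset ι) (g : ι → (Fin d → ℂ)),
      F (∑ i ∈ t, g i) = ∑ i ∈ t, F (g i) := by
    intro ι t g
    classical
    induction t using Finset.induction with
    | empty => simpa using hF_zero
    | insert _ _ hx ih => rw [Finset.sum_insert hx, Finset.sum_insert hx, hF_add, ih]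
  have hFw : ∀ x, star w₀ ⬝ᵥ x = F x := by
    intro x
    have hx : x = ∑ i, (x i) • (Pi.single i (1:ℂ) : Fin d → ℂ) := by
      have h0 := Finset.univ_sum_single x
      rw [← h0]
      refine Finset.sum_congr rfl fun i _ => ?_
      ext j
      by_cases h : j = i <;> simp [Pi.single_apply, h]
    conv_rhs => rw [hx]
    rw [hFsum]
    rw [dotProduct]
    refine Finset.sum_congr rfl fun i _ => ?_
    rw [hF_csmul]
    simp [hw₀]
    ring
  -- the norm bound
  have hstep1 : ∀ x, v x < v p → ‖F x‖ ≤ r := by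
    intro x hx
    rcases eq_or_ne (F x) 0 with h0 | h0
    · rw [h0, norm_zero]; exact hr0.le
    · have ht : 0 < ‖F x‖ := norm_pos_iff.mpr h0
      set u : ℂ := conj (F x) / ‖F x‖ with hu
      have hun : ‖u‖ = 1 := by
        rw [hu, norm_div, RCLike.norm_conj]
        simp [ht.ne']
      have hFu : F (u • x) = ‖F x‖ := by
        rw [hF_csmul, hu, div_mul_eq_mul_div, Complex.conj_mul']
        rw [sq, mul_div_assoc, div_self (by exact_mod_cast ht.ne'), mul_one]
      have hmem : u • x ∈ s := by
        have : v (u • x) = v x := by rw [hv.2.2.1, hun, one_mul]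
        simp [hs, this, hx]
      have := hf _ hmem
      have h2 : f (u • x) = (F (u • x)).re := (hF_re _).symm
      rw [h2, hFu] at this
      simpa using this.le
  have hstep2 : ∀ x, ‖F x‖ * v p ≤ r * v x := by
    intro x
    rcases eq_or_ne x 0 with rfl | hx
    · simp [hF_zero, (hv.2.1 0).mpr rfl]
    · have hvx : 0 < v x := lt_of_le_of_ne (hv.1 x) fun h => hx ((hv.2.1 x).mp h.symm)
      have key : ∀ θ : ℝ, 0 < θ → θ < 1 → θ * (‖F x‖ * v p) ≤ r * v x := by
        intro θ hθ0 hθ1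
        set y : Fin d → ℂ := ((θ * v p / v x : ℝ) : ℂ) • x with hy
        have hvy : v y = θ * v p := by
          rw [hy, hv.2.2.1, Complex.norm_real, Real.norm_eq_abs,
            abs_of_pos (by positivity)]
          field_simp
        have hvy' : v y < v p := by rw [hvy]; nlinarith
        have h1 := hstep1 y hvy'
        have h2 : ‖F y‖ = (θ * v p / v x) * ‖F x‖ := by
          rw [hy, hF_csmul, norm_mul, Complex.norm_real, Real.norm_eq_abs,
            abs_of_pos (by positivity)]
        rw [h2] at h1
        have h3 : θ * v p / v x * ‖F x‖ * v x ≤ r * v x :=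
          mul_le_mul_of_nonneg_right h1 hvx.le
        calc θ * (‖F x‖ * v p) = θ * v p / v x * ‖F x‖ * v x := by field_simp
          _ ≤ r * v x := h3
      by_contra hcon
      push_neg at hcon
      have hAB : 0 < ‖F x‖ * v p := lt_of_le_of_lt (by positivity) hcon
      set θ := (r * v x) / (‖F x‖ * v p) + (1 - (r * v x) / (‖F x‖ * v p)) / 2 with hθ
      have hq : (r * v x) / (‖F x‖ * v p) < 1 := (div_lt_one hAB).mpr hcon
      have hq0 : 0 ≤ (r * v x) / (‖F x‖ * v p) := by positivity
      have hθ0 : 0 < θ := by rw [hθ]; linarith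
      have hθ1 : θ < 1 := by rw [hθ]; linarith
      have := key θ hθ0 hθ1
      rw [hθ] at this
      have hgt : ((r * v x) / (‖F x‖ * v p) + (1 - (r * v x) / (‖F x‖ * v p)) / 2)
          * (‖F x‖ * v p) > r * v x := by
        have hexp : ((r * v x) / (‖F x‖ * v p)) * (‖F x‖ * v p) = r * v x :=
          div_mul_cancel₀ _ hAB.ne'
        nlinarith
      linarith
  -- normalize
  have hdp : ∀ x, star (fun i => ((v p / r : ℝ) : ℂ) * w₀ i) ⬝ᵥ x
      = ((v p / r : ℝ) : ℂ) * (star w₀ ⬝ᵥ x) := by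
    intro x
    simp only [dotProduct, Pi.star_apply, star_mul']
    rw [Finset.mul_sum]
    refine Finset.sum_congr rfl fun i _ => ?_
    rw [Complex.star_def, Complex.conj_ofReal]
    ring
  refine ⟨fun i => ((v p / r : ℝ) : ℂ) * w₀ i, ?_, ?_⟩
  · intro x
    rw [hdp, hFw, norm_mul, Complex.norm_real, Real.norm_eq_abs, abs_of_pos (by positivity)]
    have h2 := hstep2 x
    rw [div_mul_eq_mul_div, div_le_iff₀ (by positivity : (0:ℝ) < r)]
    nlinarith
  · rw [hdp, hFw, Complex.re_ofReal_mul, hF_re, ← hr]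
    field_simp


/-! ### The normalized John lemma -/

set_option maxHeartbeats 1000000 in
lemma john_normalized (hd : 0 < d) (hv : IsCNorm v)
    (h1 : ∀ x, hermNorm x ≤ v x)
    (hmax : ∀ H : Matrix (Fin d) (Fin d) ℂ, H.PosSemidef → (∀ x, Q H x ≤ (v x)^2) →
      (H.det).re ≤ 1) :
    ∀ x, v x ≤ Real.sqrt d * hermNorm x := by
  by_contra hcon
  push_neg at hcon
  obtain ⟨p, hp⟩ := hcon
  have hp0 : p ≠ 0 := by
    intro h0
    rw [h0, hermNorm_eq_zero.mpr rfl, (hv.2.1 0).mpr rfl] at hp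
    simp at hp
  obtain ⟨w, hwb, hwp⟩ := exists_functional v hv hp0
  have hvp : 0 < v p := lt_of_le_of_ne (hv.1 p) fun h => hp0 ((hv.2.1 p).mp h.symm)
  have hpn : 0 < hermNorm p := hermNorm_pos hp0
  set c := hermNorm w with hc
  have hsd : 0 < Real.sqrt d := Real.sqrt_pos.mpr (by exact_mod_cast hd)
  have hcd : Real.sqrt d < c := by
    have h2 : v p ≤ ‖star w ⬝ᵥ p‖ := by
      rw [← hwp]
      exact Complex.re_le_norm _
    have h3 : ‖star w ⬝ᵥ p‖ ≤ c * hermNorm p := dot_le_CS w p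
    by_contra hle
    push_neg at hle
    have : c * hermNorm p ≤ Real.sqrt d * hermNorm p :=
      mul_le_mul_of_nonneg_right hle hpn.le
    linarith
  have hc0 : 0 < c := lt_trans hsd hcd
  have hd1 : (1:ℝ) ≤ (d:ℝ) := by exact_mod_cast hd
  have hdc2 : (d:ℝ) < c^2 := by
    nlinarith [Real.sq_sqrt (show (0:ℝ) ≤ (d:ℝ) by positivity)]
  set e : Fin d → ℂ := ((c⁻¹ : ℝ) : ℂ) • w with he
  have hermNorm_e : hermNorm e = 1 := by
    rw [he, hermNorm_smul, Complex.norm_real, Real.norm_eq_abs, abs_of_pos (inv_pos.mpr hc0)]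
    field_simp
    exact hc.symm
  have hbe : ∀ x, ‖star e ⬝ᵥ x‖ ≤ v x / c := by
    intro x
    have hsm : star e ⬝ᵥ x = ((c⁻¹:ℝ):ℂ) * (star w ⬝ᵥ x) := by
      rw [he]
      have : star (((c⁻¹:ℝ):ℂ) • w) = ((c⁻¹:ℝ):ℂ) • star w := by
        ext i
        simp [Complex.star_def, Complex.conj_ofReal]
      rw [this, smul_dotProduct]
      simp
    rw [hsm, norm_mul, Complex.norm_real, Real.norm_eq_abs, abs_of_pos (inv_pos.mpr hc0)]
    rw [div_eq_inv_mul]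
    exact mul_le_mul_of_nonneg_left (hwb x) (inv_pos.mpr hc0).le
  -- the rank one projection
  set P : Matrix (Fin d) (Fin d) ℂ := Matrix.of fun i j => e i * conj (e j) with hP
  have hPherm : P.IsHermitian := by
    show Pᴴ = P
    ext i j
    simp [Matrix.conjTranspose_apply, hP, Complex.star_def]
    ring
  have hse : ∀ x : Fin d → ℂ, star e ⬝ᵥ x = ∑ i, conj (e i) * x i := by
    intro x
    simp [dotProduct, Complex.star_def]
  have hPdot : ∀ x, star x ⬝ᵥ P *ᵥ x = conj (star e ⬝ᵥ x) * (star e ⬝ᵥ x) := by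
    intro x
    rw [dot_expand]
    rw [hse, map_sum, Finset.sum_mul]
    refine Finset.sum_congr rfl fun i _ => ?_
    rw [Finset.mul_sum]
    refine Finset.sum_congr rfl fun j _ => ?_
    simp only [hP, Matrix.of_apply, _root_.map_mul, Complex.conj_conj]
    ring
  have hQP : ∀ x, Q P x = ‖star e ⬝ᵥ x‖^2 := by
    intro x
    unfold Q
    rw [hPdot, Complex.conj_mul']
    rw [← Complex.ofReal_pow]
    exact Complex.ofReal_re _
  have hPpsd : P.PosSemidef := (posSemidef_iff_Q hPherm).mpr fun x => by
    rw [hQP]; positivity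
  -- perturbation parameters
  set a : ℝ := c^2 - 1 with hadef
  set b : ℝ := (d:ℝ) - 1 with hbdef
  have ha : 0 < a := by rw [hadef]; nlinarith
  have hb : 0 ≤ b := by rw [hbdef]; linarith
  have habp : 0 < a*b + 1 := by positivity
  set t : ℝ := min (1/2 : ℝ) ((c^2 - d) / (a*b + 1)) with ht
  have ht0 : 0 < t := lt_min (by norm_num) (div_pos (by linarith) habp)
  have ht12 : t ≤ 1/2 := min_le_left _ _
  have htab : t * (a*b + 1) ≤ c^2 - d := by
    have := min_le_right (1/2 : ℝ) ((c^2 - d) / (a*b + 1))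
    calc t * (a*b+1) ≤ ((c^2 - d) / (a*b + 1)) * (a*b+1) :=
          mul_le_mul_of_nonneg_right this habp.le
      _ = c^2 - d := div_mul_cancel₀ _ habp.ne'
  set β : ℝ := 1 - t with hβdef
  have hβ : 0 < β := by rw [hβdef]; linarith
  set γ : ℝ := t * c^2 with hγdef
  have hγ : 0 < γ := by rw [hγdef]; positivity
  set H : Matrix (Fin d) (Fin d) ℂ := ((β:ℝ):ℂ) • 1 + ((γ:ℝ):ℂ) • P with hH
  have hQH : ∀ x, Q H x = β * hermNorm x ^2 + γ * ‖star e ⬝ᵥ x‖^2 := by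
    intro x
    rw [hH, Q_add, Q_real_smul, Q_real_smul, Q_one, hQP]
  have hHherm : H.IsHermitian := by
    show Hᴴ = H
    rw [hH, Matrix.conjTranspose_add, Matrix.conjTranspose_smul, Matrix.conjTranspose_smul,
      Matrix.conjTranspose_one, hPherm.eq]
    simp [Complex.star_def, Complex.conj_ofReal]
  have hHpsd : H.PosSemidef := (posSemidef_iff_Q hHherm).mpr fun x => by
    rw [hQH]; positivity
  have hHle : ∀ x, Q H x ≤ (v x)^2 := by
    intro x
    rw [hQH]
    have e1 : hermNorm x ^ 2 ≤ v x ^ 2 := by nlinarith [h1 x, hermNorm_nonneg x]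
    have e2 : ‖star e ⬝ᵥ x‖ ^ 2 ≤ (v x / c) ^ 2 := by
      nlinarith [hbe x, norm_nonneg (star e ⬝ᵥ x), hv.1 x, hc0]
    have e3 : γ * ‖star e ⬝ᵥ x‖^2 ≤ t * v x ^2 := by
      calc γ * ‖star e ⬝ᵥ x‖^2 ≤ γ * (v x / c)^2 := mul_le_mul_of_nonneg_left e2 hγ.le
        _ = t * v x ^2 := by rw [hγdef]; field_simp
    have e4 : β * hermNorm x ^2 ≤ β * v x ^2 := mul_le_mul_of_nonneg_left e1 hβ.le
    have : β * v x ^2 + t * v x ^2 = v x ^2 := by rw [hβdef]; ring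
    linarith
  -- determinant computation
  have hco : P = Matrix.replicateCol Unit e * Matrix.replicateRow Unit (star e) := by
    ext i j
    simp [hP, Matrix.mul_apply, Matrix.replicateCol, Matrix.replicateRow, Complex.star_def]
  have hH2 : H = ((β:ℝ):ℂ) •
      (1 + Matrix.replicateCol Unit ((((γ/β) : ℝ):ℂ) • e) * Matrix.replicateRow Unit (star e)) := by
    rw [hH, smul_add]
    congr 1
    rw [Matrix.replicateCol_smul, Matrix.smul_mul, smul_smul, ← hco]
    congr 1
    push_cast
    field_simp
  have hdetH : H.det = ((β^(d-1) * (β + γ) : ℝ) : ℂ) := by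
    rw [hH2, Matrix.det_smul, Matrix.det_one_add_replicateCol_mul_replicateRow, dotProduct_smul]
    rw [star_dot_self e, hermNorm_e]
    rw [Fintype.card_fin]
    have hβd : ((β:ℝ):ℂ) ^ d = ((β^d : ℝ):ℂ) := by push_cast; ring
    rw [hβd]
    have : (1:ℂ) + (((γ/β):ℝ):ℂ) • (((1:ℝ)^2 : ℝ):ℂ) = (((1 + γ/β) : ℝ):ℂ) := by
      push_cast; simp
    rw [this]
    rw [← Complex.ofReal_mul]
    congr 1
    have hdd : d - 1 + 1 = d := Nat.succ_pred_eq_of_pos hd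
    have : β^d = β^(d-1) * β := by rw [← pow_succ, hdd]
    rw [this]
    field_simp
  -- the determinant exceeds 1
  have hbern : 1 - b * t ≤ β ^ (d-1) := by
    have hb2 : (-2:ℝ) ≤ -t := by linarith
    have := one_add_mul_le_pow hb2 (d-1)
    have hcast : ((d-1 : ℕ) : ℝ) = b := by
      rw [hbdef, Nat.cast_sub hd]
      simp
    rw [hcast] at this
    calc 1 - b * t = 1 + b * (-t) := by ring
      _ ≤ (1 + -t)^(d-1) := this
      _ = β ^ (d-1) := by rw [hβdef, sub_eq_add_neg]
  have hsum : β + γ = 1 + t * a := by rw [hβdef, hγdef, hadef]; ring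
  have hgt : 1 < β^(d-1) * (β + γ) := by
    have k2 : t ≤ a - b - t*(a*b) := by nlinarith
    have hμ : 0 < 1 + t * a := by nlinarith
    have step : (1 - b*t) * (1 + t*a) ≤ β^(d-1) * (β + γ) := by
      rw [hsum]
      exact mul_le_mul_of_nonneg_right hbern hμ.le
    have expand : (1 - b*t) * (1 + t*a) = 1 + t*(a - b - t*(a*b)) := by ring
    nlinarith [mul_pos ht0 ht0]
  have hfin := hmax H hHpsd hHle
  rw [hdetH, Complex.ofReal_re] at hfin
  linarith


/-! ### Transfer of the quadratic form -/

lemma Q_conj (A B : Matrix (Fin d) (Fin d) ℂ) (x : Fin d → ℂ) :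
    Q (Aᴴ * B * A) x = Q B (A *ᵥ x) := by
  unfold Q
  rw [mul_assoc, ← Q_transfer, ← Matrix.mulVec_mulVec]

end Stmt3Aux

open scoped ComplexOrder
open Stmt3Aux Matrix
/-- John's ellipsoid, complex case: for every norm `v` on `ℂ^d` there is
`g ∈ GL_d(ℂ)` with `‖gx‖₂ ≤ v(x) ≤ √d ‖gx‖₂` for all `x`. -/
theorem stmt_3 {d : ℕ} (v : (Fin d → ℂ) → ℝ) (hv : IsCNorm v) :
    ∃ g : (Matrix (Fin d) (Fin d) ℂ)ˣ, ∀ x : Fin d → ℂ,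
      hermNorm ((g : Matrix (Fin d) (Fin d) ℂ).mulVec x) ≤ v x ∧
      v x ≤ Real.sqrt d * hermNorm ((g : Matrix (Fin d) (Fin d) ℂ).mulVec x) := by
  rcases Nat.eq_zero_or_pos d with hd0 | hd
  · subst hd0
    refine ⟨1, fun x => ?_⟩
    have hx : x = 0 := funext fun i => i.elim0
    subst hx
    rw [Matrix.mulVec_zero, hermNorm_eq_zero.mpr rfl, (hv.2.1 0).mpr rfl]
    norm_num
  · obtain ⟨H₀, hH₀mem, hH₀pd, hH₀max⟩ := exists_maximizer v hd hv
    obtain ⟨g₀, hgherm, hgg⟩ := psd_sqrt_exists hH₀pd.posSemidef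
    have hdet₀ : H₀.det ≠ 0 := ne_of_gt hH₀pd.det_pos
    have hgd : g₀.det ≠ 0 := by
      intro h
      rw [← hgg, Matrix.det_mul, h, mul_zero] at hdet₀
      exact hdet₀ rfl
    have hgu : IsUnit g₀ := (Matrix.isUnit_iff_isUnit_det _).mpr (isUnit_iff_ne_zero.mpr hgd)
    have hQg : ∀ x, hermNorm (g₀ *ᵥ x) ^ 2 = Q H₀ x := by
      intro x
      rw [hermNorm_mulVec_sq, hgherm, hgg]
    have hherm_le_v : ∀ x, hermNorm (g₀ *ᵥ x) ≤ v x := by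
      intro x
      have h2 : Q H₀ x ≤ v x ^ 2 := hH₀mem.2 x
      have h3 := hQg x
      nlinarith [hermNorm_nonneg (g₀ *ᵥ x), hv.1 x]
    have hinv1 : g₀⁻¹ * g₀ = 1 := Matrix.nonsing_inv_mul g₀ (isUnit_iff_ne_zero.mpr hgd)
    have hinv2 : g₀ * g₀⁻¹ = 1 := Matrix.mul_nonsing_inv g₀ (isUnit_iff_ne_zero.mpr hgd)
    have hgiv : ∀ x, g₀⁻¹ *ᵥ (g₀ *ᵥ x) = x := by
      intro x
      rw [Matrix.mulVec_mulVec, hinv1, Matrix.one_mulVec]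
    have hgvi : ∀ y, g₀ *ᵥ (g₀⁻¹ *ᵥ y) = y := by
      intro y
      rw [Matrix.mulVec_mulVec, hinv2, Matrix.one_mulVec]
    set vt : (Fin d → ℂ) → ℝ := fun y => v (g₀⁻¹ *ᵥ y) with hvt
    have hvt_norm : IsCNorm vt := by
      refine ⟨fun y => hv.1 _, fun y => ?_, fun a y => ?_, fun y z => ?_⟩
      · simp only [hvt]
        rw [hv.2.1]
        constructor
        · intro h
          have h2 := congrArg (fun z => g₀ *ᵥ z) h
          simpa [hgvi y, Matrix.mulVec_zero] using h2
        · rintro rfl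
          rw [Matrix.mulVec_zero]
      · simp only [hvt]
        rw [Matrix.mulVec_smul, hv.2.2.1]
      · simp only [hvt]
        rw [Matrix.mulVec_add]
        exact hv.2.2.2 _ _
    have hvt_lower : ∀ y, hermNorm y ≤ vt y := by
      intro y
      have h2 := hherm_le_v (g₀⁻¹ *ᵥ y)
      rwa [hgvi y] at h2
    have hvt_max : ∀ K : Matrix (Fin d) (Fin d) ℂ, K.PosSemidef →
        (∀ y, Q K y ≤ (vt y)^2) → (K.det).re ≤ 1 := by
      intro K hKpsd hKle
      set M := g₀ᴴ * K * g₀ with hM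
      have hMpsd : M.PosSemidef := hKpsd.conjTranspose_mul_mul_same g₀
      have hMle : ∀ x, Q M x ≤ (v x)^2 := by
        intro x
        rw [hM, Q_conj]
        have h2 := hKle (g₀ *ᵥ x)
        simp only [hvt] at h2
        rwa [hgiv x] at h2
      have hdM : (M.det).re ≤ (H₀.det).re := hH₀max M ⟨hMpsd, hMle⟩
      -- K.det is a nonnegative real
      have hKdet : K.det = ((∏ i, hKpsd.1.eigenvalues i : ℝ) : ℂ) := by
        rw [hKpsd.1.det_eq_prod_eigenvalues]
        norm_cast
      have hρ0 : 0 ≤ ∏ i, hKpsd.1.eigenvalues i :=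
        Finset.prod_nonneg fun i _ => hKpsd.eigenvalues_nonneg i
      -- H₀.det is a positive real
      have hH₀pos := hH₀pd.det_pos
      rw [RCLike.pos_iff] at hH₀pos
      have hH₀re : (0:ℝ) < (H₀.det).re := hH₀pos.1
      have hH₀real : H₀.det = (((H₀.det).re : ℝ) : ℂ) := by
        apply Complex.ext
        · simp
        · simp [← hH₀pos.2]
      have hMdet : M.det = H₀.det * K.det := by
        rw [hM, Matrix.det_mul, Matrix.det_mul, hgherm, ← hgg, Matrix.det_mul]
        ring
      rw [hMdet, hH₀real, hKdet, ← Complex.ofReal_mul] at hdM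
      rw [Complex.ofReal_re, Complex.ofReal_re] at hdM
      rw [hKdet, Complex.ofReal_re]
      by_contra hgt
      push_neg at hgt
      nlinarith
    have hvt_up := john_normalized vt hd hvt_norm hvt_lower hvt_max
    refine ⟨hgu.unit, fun x => ?_⟩
    have hcoe : (hgu.unit : Matrix (Fin d) (Fin d) ℂ) = g₀ := hgu.unit_spec
    rw [hcoe]
    refine ⟨hherm_le_v x, ?_⟩
    have h2 := hvt_up (g₀ *ᵥ x)
    simp only [hvt] at h2
    rwa [hgiv x] at h2
end

section
/- Let S ⊂ M_d(ℂ) be bounded irreducible with ρ(S) = 1. Then the attractor semigroup T_∞ = ⋂_{n≥1} closure(SⁿT), where T = ⋃_{n≥1}Sⁿ, contains a nonzero idempotent p (p² = p, p ≠ 0). -/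
open scoped Pointwise
open Filter

/-- The semigroup `T = ⋃_{n ≥ 1} Sⁿ` generated by `S`. -/
def genSemigroup {d : ℕ} (S : Set (Matrix (Fin d) (Fin d) ℂ)) : Set (Matrix (Fin d) (Fin d) ℂ) :=
  ⋃ n : ℕ, S ^ (n + 1)

/-- The attractor semigroup `T_∞ = ⋂_{n ≥ 1} closure(Sⁿ·T)`. -/
def attractor {d : ℕ} (S : Set (Matrix (Fin d) (Fin d) ℂ)) : Set (Matrix (Fin d) (Fin d) ℂ) :=
  ⋂ n : ℕ, closure (S ^ (n + 1) * genSemigroup S)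

namespace Stmt8Aux

variable {d : ℕ}

local notation "Mat" => Matrix (Fin d) (Fin d) ℂ

instance : FirstCountableTopology Mat :=
  inferInstanceAs (FirstCountableTopology (Fin d → Fin d → ℂ))

/-- total entry sum -/
noncomputable def entN (A : Mat) : ℝ := ∑ i, ∑ j, ‖A i j‖

lemma entN_nonneg (A : Mat) : 0 ≤ entN A :=
  Finset.sum_nonneg fun _ _ => Finset.sum_nonneg fun _ _ => norm_nonneg _

lemma norm_mulVec_le_entN (A : Mat) {x : Fin d → ℂ} (hx : ‖x‖ ≤ 1) :
    ‖A.mulVec x‖ ≤ entN A := by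
  have hA := entN_nonneg A
  rw [pi_norm_le_iff_of_nonneg (x := A.mulVec x) hA]
  intro i
  have h1 : ‖A.mulVec x i‖ ≤ ∑ j, ‖A i j‖ := by
    show ‖∑ j, A i j * x j‖ ≤ _
    refine (norm_sum_le _ _).trans ?_
    refine Finset.sum_le_sum fun j _ => ?_
    rw [norm_mul]
    have : ‖x j‖ ≤ 1 := le_trans (norm_le_pi_norm x j) hx
    calc ‖A i j‖ * ‖x j‖ ≤ ‖A i j‖ * 1 :=
          mul_le_mul_of_nonneg_left this (norm_nonneg _)
      _ = ‖A i j‖ := mul_one _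
  refine h1.trans ?_
  exact Finset.single_le_sum (f := fun i => ∑ j, ‖A i j‖)
    (fun _ _ => Finset.sum_nonneg fun _ _ => norm_nonneg _) (Finset.mem_univ i)

lemma opSet_nonempty (A : Mat) :
    {c : ℝ | ∃ x : Fin d → ℂ, stdNorm x ≤ 1 ∧ c = stdNorm (A.mulVec x)}.Nonempty := by
  refine ⟨stdNorm (A.mulVec 0), 0, ?_, rfl⟩
  simp [stdNorm]

lemma opSet_bddAbove (A : Mat) :
    BddAbove {c : ℝ | ∃ x : Fin d → ℂ, stdNorm x ≤ 1 ∧ c = stdNorm (A.mulVec x)} := by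
  refine ⟨entN A, ?_⟩
  rintro c ⟨x, hx, rfl⟩
  exact norm_mulVec_le_entN A hx

lemma opNorm_nonneg (A : Mat) : 0 ≤ opNorm stdNorm A := by
  refine Real.sSup_nonneg fun c hc => ?_
  obtain ⟨x, hx, rfl⟩ := hc
  exact norm_nonneg _

lemma opNorm_le_entN (A : Mat) : opNorm stdNorm A ≤ entN A := by
  refine csSup_le (opSet_nonempty A) ?_
  rintro c ⟨x, hx, rfl⟩
  exact norm_mulVec_le_entN A hx

lemma norm_mulVec_le (A : Mat) {x : Fin d → ℂ} (hx : ‖x‖ ≤ 1) :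
    ‖A.mulVec x‖ ≤ opNorm stdNorm A :=
  le_csSup (opSet_bddAbove A) ⟨x, hx, rfl⟩

lemma norm_mulVec_le' (A : Mat) (x : Fin d → ℂ) :
    ‖A.mulVec x‖ ≤ opNorm stdNorm A * ‖x‖ := by
  rcases eq_or_ne x 0 with rfl | hx
  · simp [Matrix.mulVec_zero]
  · have hr : (0:ℝ) < ‖x‖ := norm_pos_iff.2 hx
    set y : Fin d → ℂ := (‖x‖)⁻¹ • x with hy
    have hxy : x = (‖x‖ : ℝ) • y := by
      rw [hy, smul_smul, mul_inv_cancel₀ hr.ne', one_smul]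
    have hny : ‖y‖ ≤ 1 := by
      rw [hy, norm_smul, norm_inv, norm_norm, inv_mul_cancel₀ hr.ne']
    calc ‖A.mulVec x‖ = ‖A.mulVec ((‖x‖ : ℝ) • y)‖ := by rw [← hxy]
      _ = ‖(‖x‖ : ℝ) • A.mulVec y‖ := by rw [Matrix.mulVec_smul]
      _ = ‖x‖ * ‖A.mulVec y‖ := by rw [norm_smul, norm_norm]
      _ ≤ ‖x‖ * opNorm stdNorm A :=
          mul_le_mul_of_nonneg_left (norm_mulVec_le A hny) hr.le
      _ = opNorm stdNorm A * ‖x‖ := mul_comm _ _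

lemma opNorm_mul_le (A B : Mat) :
    opNorm stdNorm (A * B) ≤ opNorm stdNorm A * opNorm stdNorm B := by
  refine csSup_le (opSet_nonempty _) ?_
  rintro c ⟨x, hx, rfl⟩
  show stdNorm ((A * B).mulVec x) ≤ _
  have h1 : (A * B).mulVec x = A.mulVec (B.mulVec x) := (Matrix.mulVec_mulVec x A B).symm
  calc stdNorm ((A * B).mulVec x) = ‖A.mulVec (B.mulVec x)‖ := by rw [h1]; rfl
    _ ≤ opNorm stdNorm A * ‖B.mulVec x‖ := norm_mulVec_le' A _
    _ ≤ opNorm stdNorm A * opNorm stdNorm B :=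
        mul_le_mul_of_nonneg_left (norm_mulVec_le B hx) (opNorm_nonneg A)

lemma opNorm_one (hd : 0 < d) : opNorm (stdNorm (d := d)) 1 = 1 := by
  apply le_antisymm
  · refine csSup_le (opSet_nonempty _) ?_
    rintro c ⟨x, hx, rfl⟩
    show stdNorm ((1 : Mat).mulVec x) ≤ 1
    rw [show (1 : Mat).mulVec x = x from Matrix.one_mulVec x]
    exact hx
  · have h : ‖(Pi.single (⟨0, hd⟩ : Fin d) (1:ℂ) : Fin d → ℂ)‖ = 1 := by
      apply le_antisymm
      · refine (pi_norm_le_iff_of_nonneg (x := (Pi.single (⟨0, hd⟩ : Fin d) (1:ℂ) : Fin d → ℂ)) zero_le_one).2 fun i => ?_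
        rcases eq_or_ne i ⟨0, hd⟩ with rfl | hi
        · simp
        · rw [Pi.single_eq_of_ne hi]; simp
      · have := norm_le_pi_norm ((Pi.single (⟨0, hd⟩ : Fin d) (1:ℂ)) : Fin d → ℂ) ⟨0, hd⟩
        simpa using this
    refine le_csSup (opSet_bddAbove _) ?_
    refine ⟨(Pi.single (⟨0, hd⟩ : Fin d) (1:ℂ) : Fin d → ℂ), le_of_eq h, ?_⟩
    show (1:ℝ) = stdNorm ((1 : Mat).mulVec _)
    rw [Matrix.one_mulVec]
    exact h.symm

lemma opNorm_zero : opNorm (stdNorm (d := d)) 0 = 0 := by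
  apply le_antisymm
  · refine csSup_le (opSet_nonempty _) ?_
    rintro c ⟨x, hx, rfl⟩
    show stdNorm ((0 : Mat).mulVec x) ≤ 0
    rw [Matrix.zero_mulVec]
    simp [stdNorm]
  · exact opNorm_nonneg 0

lemma entry_le_opNorm (A : Mat) (i j : Fin d) : ‖A i j‖ ≤ opNorm stdNorm A := by
  have hx : ‖(Pi.single j (1:ℂ) : Fin d → ℂ)‖ ≤ 1 := by
    refine (pi_norm_le_iff_of_nonneg (x := (Pi.single j (1:ℂ) : Fin d → ℂ)) zero_le_one).2 fun k => ?_
    rcases eq_or_ne k j with rfl | hk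
    · simp
    · rw [Pi.single_eq_of_ne hk]; simp
  have h1 : A.mulVec (Pi.single j 1) = fun i => A i j * 1 := Matrix.mulVec_single A j 1
  have h2 : ‖A i j‖ ≤ ‖A.mulVec (Pi.single j 1)‖ := by
    have := norm_le_pi_norm (A.mulVec (Pi.single j 1)) i
    rw [h1] at this ⊢
    simpa using this
  exact h2.trans (norm_mulVec_le A hx)

lemma opNorm_sub_le (A B : Mat) :
    opNorm stdNorm A ≤ opNorm stdNorm B + entN (A - B) := by
  refine csSup_le (opSet_nonempty _) ?_
  rintro c ⟨x, hx, rfl⟩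
  show stdNorm (A.mulVec x) ≤ _
  have h1 : A.mulVec x = B.mulVec x + (A - B).mulVec x := by
    rw [Matrix.sub_mulVec]; abel
  calc stdNorm (A.mulVec x) = ‖B.mulVec x + (A - B).mulVec x‖ := by rw [← h1]; rfl
    _ ≤ ‖B.mulVec x‖ + ‖(A - B).mulVec x‖ := norm_add_le _ _
    _ ≤ opNorm stdNorm B + entN (A - B) :=
        add_le_add (norm_mulVec_le B hx) (norm_mulVec_le_entN _ hx)

lemma continuous_entN : Continuous (entN (d := d)) := by
  unfold entN
  exact continuous_finset_sum _ fun i _ => continuous_finset_sum _ fun j _ =>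
    ((continuous_apply_apply i j).norm)

lemma tendsto_opNorm {X : Type} {l : Filter X} {f : X → Mat} {B : Mat}
    (hf : Tendsto f l (nhds B)) :
    Tendsto (fun x => opNorm stdNorm (f x)) l (nhds (opNorm stdNorm B)) := by
  have hsub : Tendsto (fun x => entN (f x - B)) l (nhds 0) := by
    have h0 : Tendsto (fun x => f x - B) l (nhds (B - B)) := hf.sub tendsto_const_nhds
    rw [sub_self] at h0
    have := (continuous_entN (d := d)).tendsto 0 |>.comp h0
    simpa [entN, Function.comp_def] using this
  have hsub' : Tendsto (fun x => entN (B - f x)) l (nhds 0) := by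
    have h0 : Tendsto (fun x => B - f x) l (nhds (B - B)) := tendsto_const_nhds.sub hf
    rw [sub_self] at h0
    have := (continuous_entN (d := d)).tendsto 0 |>.comp h0
    simpa [entN, Function.comp_def] using this
  refine tendsto_of_tendsto_of_tendsto_of_le_of_le
    (g := fun x => opNorm stdNorm B - entN (B - f x))
    (h := fun x => opNorm stdNorm B + entN (f x - B)) ?_ ?_ ?_ ?_
  · simpa using tendsto_const_nhds.sub hsub'
  · simpa using tendsto_const_nhds.add hsub
  · intro x
    have h2 := opNorm_sub_le B (f x)
    dsimp only
    linarith
  · intro x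
    dsimp only
    exact opNorm_sub_le (f x) B


----------------  setOpNorm and powers ----------------

variable {S : Set (Matrix (Fin d) (Fin d) ℂ)}

lemma setOpNorm_nonneg (𝒮 : Set Mat) : 0 ≤ setOpNorm stdNorm 𝒮 := by
  refine Real.sSup_nonneg fun c hc => ?_
  obtain ⟨A, _, rfl⟩ := hc
  exact opNorm_nonneg A

lemma le_setOpNorm {𝒮 : Set Mat} {A : Mat} (h : BddAbove (opNorm stdNorm '' 𝒮))
    (hA : A ∈ 𝒮) : opNorm stdNorm A ≤ setOpNorm stdNorm 𝒮 :=
  le_csSup h (Set.mem_image_of_mem _ hA)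

lemma setOpNorm_le {𝒮 : Set Mat} {C : ℝ} (hC : 0 ≤ C)
    (h : ∀ A ∈ 𝒮, opNorm stdNorm A ≤ C) : setOpNorm stdNorm 𝒮 ≤ C := by
  refine Real.sSup_le ?_ hC
  rintro c ⟨A, hA, rfl⟩
  exact h A hA

lemma pow_nonempty (hne : S.Nonempty) : ∀ n : ℕ, (S ^ n).Nonempty := by
  intro n
  induction n with
  | zero => exact ⟨1, by rw [pow_zero]; exact Set.mem_one.2 rfl⟩
  | succ k ih =>
      obtain ⟨A, hA⟩ := ih
      obtain ⟨s, hs⟩ := hne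
      exact ⟨A * s, by rw [pow_succ]; exact Set.mul_mem_mul hA hs⟩

lemma pow_opNorm_le {c₀ : ℝ} (hc₀ : 0 ≤ c₀) (hS : ∀ A ∈ S, opNorm stdNorm A ≤ c₀) :
    ∀ n : ℕ, ∀ A ∈ S ^ (n + 1), opNorm stdNorm A ≤ c₀ ^ (n + 1) := by
  intro n
  induction n with
  | zero =>
      intro A hA
      rw [pow_one] at hA ⊢
      exact hS A hA
  | succ k ih =>
      intro A hA
      rw [pow_succ] at hA
      obtain ⟨B, hB, s, hs, rfl⟩ := Set.mem_mul.1 hA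
      calc opNorm stdNorm (B * s) ≤ opNorm stdNorm B * opNorm stdNorm s := opNorm_mul_le B s
        _ ≤ c₀ ^ (k + 1) * c₀ :=
            mul_le_mul (ih B hB) (hS s hs) (opNorm_nonneg s) (pow_nonneg hc₀ _)
        _ = c₀ ^ (k + 2) := (pow_succ c₀ (k+1)).symm

/-- A uniform bound on `S` itself, from `MatBdd`. -/
lemma exists_S_bound (hS : MatBdd S) :
    ∃ c₀ : ℝ, 1 ≤ c₀ ∧ ∀ A ∈ S, opNorm stdNorm A ≤ c₀ := by
  obtain ⟨C, hC⟩ := hS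
  refine ⟨max (d * (d * C)) 1, le_max_right _ _, fun A hA => ?_⟩
  refine le_trans (opNorm_le_entN A) (le_trans ?_ (le_max_left _ _))
  unfold entN
  calc (∑ i, ∑ j, ‖A i j‖) ≤ ∑ _i : Fin d, ∑ _j : Fin d, C := by
        refine Finset.sum_le_sum fun i _ => Finset.sum_le_sum fun j _ => hC A hA i j
    _ = d * (d * C) := by simp [Finset.sum_const, mul_assoc]
    _ ≤ d * (d * C) := le_refl _

lemma bddAbove_pow {c₀ : ℝ} (hc₀ : 0 ≤ c₀) (hS : ∀ A ∈ S, opNorm stdNorm A ≤ c₀) (n : ℕ) :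
    BddAbove (opNorm stdNorm '' (S ^ (n + 1))) := by
  refine ⟨c₀ ^ (n + 1), ?_⟩
  rintro c ⟨A, hA, rfl⟩
  exact pow_opNorm_le hc₀ hS n A hA

lemma setOpNorm_mul_le {𝒮 𝒯 : Set Mat} {a b : ℝ} (ha : 0 ≤ a) (hb : 0 ≤ b)
    (hsa : ∀ A ∈ 𝒮, opNorm stdNorm A ≤ a) (htb : ∀ B ∈ 𝒯, opNorm stdNorm B ≤ b) :
    setOpNorm stdNorm (𝒮 * 𝒯) ≤ a * b := by
  refine setOpNorm_le (mul_nonneg ha hb) ?_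
  intro A hA
  obtain ⟨B, hB, C, hC, rfl⟩ := Set.mem_mul.1 hA
  calc opNorm stdNorm (B * C) ≤ opNorm stdNorm B * opNorm stdNorm C := opNorm_mul_le B C
    _ ≤ a * b := mul_le_mul (hsa B hB) (htb C hC) (opNorm_nonneg C) ha

----------------  consequences of `jsr S = 1` ----------------

lemma jsr_bddBelow :
    BddBelow (Set.range fun n : ℕ => setOpNorm stdNorm (S ^ (n + 1)) ^ (1 / (n + 1 : ℝ))) := by
  refine ⟨0, ?_⟩
  rintro c ⟨n, rfl⟩
  exact Real.rpow_nonneg (setOpNorm_nonneg _) _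

lemma one_le_setOpNorm (hρ : jsr S = 1) (n : ℕ) : 1 ≤ setOpNorm stdNorm (S ^ (n + 1)) := by
  have h1 : (1:ℝ) ≤ setOpNorm stdNorm (S ^ (n + 1)) ^ (1 / (n + 1 : ℝ)) := by
    have h2 := ciInf_le (jsr_bddBelow (S := S)) n
    rw [show ⨅ n : ℕ, setOpNorm stdNorm (S ^ (n + 1)) ^ (1 / (n + 1 : ℝ)) = jsr S from rfl, hρ] at h2
    exact h2
  by_contra hlt
  push_neg at hlt
  have h2 : setOpNorm stdNorm (S ^ (n + 1)) ^ (1 / (n + 1 : ℝ)) < 1 :=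
    Real.rpow_lt_one (setOpNorm_nonneg _) hlt (by positivity)
  linarith

lemma exists_small_power (hρ : jsr S = 1) {ε : ℝ} (hε : 1 < ε) :
    ∃ m : ℕ, 1 ≤ m ∧ setOpNorm stdNorm (S ^ m) < ε ^ m := by
  have h : jsr S < ε := by rw [hρ]; exact hε
  obtain ⟨n, hn⟩ := exists_lt_of_ciInf_lt h
  refine ⟨n + 1, Nat.succ_le_succ (Nat.zero_le n), ?_⟩
  have h0 : (0:ℝ) ≤ setOpNorm stdNorm (S ^ (n + 1)) := setOpNorm_nonneg _
  have key : setOpNorm stdNorm (S ^ (n + 1))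
      = (setOpNorm stdNorm (S ^ (n + 1)) ^ (1 / (n + 1 : ℝ))) ^ (n + 1) := by
    have hne : ((n:ℝ)+1) ≠ 0 := by positivity
    rw [← Real.rpow_natCast (setOpNorm stdNorm (S ^ (n + 1)) ^ (1 / (n + 1 : ℝ))) (n+1),
      ← Real.rpow_mul h0]
    push_cast
    rw [one_div, inv_mul_cancel₀ hne, Real.rpow_one]
  rw [key]
  exact pow_lt_pow_left₀ hn (Real.rpow_nonneg h0 _) (Nat.succ_ne_zero n)

----------------  degenerate cases ----------------

lemma jsr_empty : jsr (∅ : Set Mat) = 0 := by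
  unfold jsr
  have h : ∀ n : ℕ, setOpNorm stdNorm ((∅ : Set Mat) ^ (n + 1)) ^ (1 / (n + 1 : ℝ)) = 0 := by
    intro n
    rw [Set.empty_pow (Nat.succ_ne_zero n)]
    unfold setOpNorm
    rw [Set.image_empty, Real.sSup_empty, Real.zero_rpow (by positivity)]
  simp only [h]
  exact ciInf_const

lemma jsr_dim_zero (hd : d = 0) : jsr S = 0 := by
  haveI : IsEmpty (Fin d) := ⟨fun i => absurd i.2 (by simp [hd])⟩
  unfold jsr
  have hop : ∀ A : Mat, opNorm stdNorm A = 0 := by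
    intro A
    apply le_antisymm
    · refine csSup_le (opSet_nonempty A) ?_
      rintro c ⟨x, hx, rfl⟩
      show stdNorm (A.mulVec x) ≤ 0
      have : A.mulVec x = 0 := Subsingleton.elim _ _
      rw [this]
      simp [stdNorm]
    · exact opNorm_nonneg A
  have h : ∀ n : ℕ, setOpNorm stdNorm (S ^ (n + 1)) ^ (1 / (n + 1 : ℝ)) = 0 := by
    intro n
    have h1 : setOpNorm stdNorm (S ^ (n + 1)) = 0 := by
      apply le_antisymm
      · exact setOpNorm_le le_rfl fun A _ => le_of_eq (hop A)
      · exact setOpNorm_nonneg _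
    rw [h1, Real.zero_rpow (by positivity)]
  simp only [h]
  exact ciInf_const


----------------  Part B : boundedness of the semigroup ----------------

lemma norm_single_one (j : Fin d) : ‖(Pi.single j (1:ℂ) : Fin d → ℂ)‖ = 1 := by
  apply le_antisymm
  · refine (pi_norm_le_iff_of_nonneg (x := (Pi.single j (1:ℂ) : Fin d → ℂ)) zero_le_one).2
      fun k => ?_
    rcases eq_or_ne k j with rfl | hk
    · simp
    · rw [Pi.single_eq_of_ne hk]; simp
  · have := norm_le_pi_norm ((Pi.single j (1:ℂ)) : Fin d → ℂ) j
    simpa using this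

lemma entry_le_mulVec_single (A : Mat) (i j : Fin d) :
    ‖A i j‖ ≤ ‖A.mulVec (Pi.single j (1:ℂ))‖ := by
  have h1 : A.mulVec (Pi.single j 1) = fun i => A i j * 1 := Matrix.mulVec_single A j 1
  have := norm_le_pi_norm (A.mulVec (Pi.single j 1)) i
  rw [h1] at this ⊢
  simpa using this

/-- The submodule of vectors with bounded forward orbit. -/
noncomputable def orbW (S : Set (Matrix (Fin d) (Fin d) ℂ)) : Submodule ℂ (Fin d → ℂ) where
  carrier := {x | ∃ C : ℝ, ∀ n : ℕ, ∀ A ∈ S ^ (n + 1), ‖A.mulVec x‖ ≤ C}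
  add_mem' := by
    rintro x y ⟨C1, h1⟩ ⟨C2, h2⟩
    exact ⟨C1 + C2, fun n A hA => by
      rw [Matrix.mulVec_add]
      exact (norm_add_le _ _).trans (add_le_add (h1 n A hA) (h2 n A hA))⟩
  zero_mem' := ⟨0, fun n A hA => by rw [Matrix.mulVec_zero]; simp⟩
  smul_mem' := by
    rintro c x ⟨C, h⟩
    exact ⟨‖c‖ * C, fun n A hA => by
      rw [Matrix.mulVec_smul, norm_smul]
      exact mul_le_mul_of_nonneg_left (h n A hA) (norm_nonneg c)⟩

lemma orbW_invariant : ∀ A ∈ S, ∀ x ∈ orbW S, A.mulVec x ∈ orbW S := by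
  rintro A hA x ⟨C, hC⟩
  refine ⟨C, fun n B hB => ?_⟩
  rw [Matrix.mulVec_mulVec]
  have hBA : B * A ∈ S ^ (n + 1 + 1) := by
    rw [pow_succ]
    exact Set.mul_mem_mul hB hA
  exact hC (n + 1) (B * A) hBA

lemma continuous_mulVec (A : Mat) : Continuous fun x : Fin d → ℂ => A.mulVec x := by
  unfold Matrix.mulVec dotProduct
  exact continuous_pi fun i => continuous_finset_sum _ fun j _ =>
    (continuous_const.mul (continuous_apply j))

theorem semigroup_bounded (hd : 0 < d) (hne : S.Nonempty) (hS : MatBdd S)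
    (hirr : IsIrred S) (hρ : jsr S = 1) :
    ∃ Cb : ℝ, 1 ≤ Cb ∧ ∀ n : ℕ, ∀ A ∈ S ^ (n + 1), opNorm stdNorm A ≤ Cb := by
  obtain ⟨c₀, hc₀1, hc₀⟩ := exists_S_bound hS
  have hc₀0 : (0:ℝ) ≤ c₀ := le_trans zero_le_one hc₀1
  rcases hirr (orbW S) orbW_invariant with hbot | htop
  · -- impossible: derive a contradiction with `jsr S = 1`
    exfalso
    -- every unit vector escapes
    have hkey : ∀ y : Fin d → ℂ, ‖y‖ = 1 →
        ∃ P : ℕ × Mat, P.2 ∈ S ^ (P.1 + 1) ∧ 3 < ‖P.2.mulVec y‖ := by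
      intro y hy
      have hy0 : y ≠ 0 := by
        intro h0; rw [h0, norm_zero] at hy; norm_num at hy
      have hyW : y ∉ orbW S := by
        intro hmem
        rw [hbot] at hmem
        exact hy0 (Submodule.mem_bot ℂ |>.1 hmem)
      have : ¬ (∃ C : ℝ, ∀ n : ℕ, ∀ A ∈ S ^ (n + 1), ‖A.mulVec y‖ ≤ C) := hyW
      push_neg at this
      obtain ⟨n, A, hA, h3⟩ := this 3
      exact ⟨⟨n, A⟩, hA, h3⟩
    choose! F hF1 hF2 using hkey
    -- compact sphere and finite subcover
    set Sph : Set (Fin d → ℂ) := Metric.sphere 0 1 with hSph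
    have hSphC : IsCompact Sph := isCompact_sphere 0 1
    have hcov : Sph ⊆ ⋃ y : ↥Sph, {z | 3 < ‖(F y.1).2.mulVec z‖} := by
      intro z hz
      have hz1 : ‖z‖ = 1 := mem_sphere_zero_iff_norm.1 hz
      exact Set.mem_iUnion.2 ⟨⟨z, hz⟩, hF2 z hz1⟩
    have hopen : ∀ y : ↥Sph, IsOpen {z : Fin d → ℂ | 3 < ‖(F y.1).2.mulVec z‖} := by
      intro y
      exact isOpen_lt continuous_const ((continuous_mulVec _).norm)
    obtain ⟨t, ht⟩ := hSphC.elim_finite_subcover _ hopen hcov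
    set n₁ : ℕ := t.sup (fun y => (F y.1).1) + 1 with hn₁
    have hn₁pos : 0 < n₁ := Nat.succ_pos _
    -- the doubling property
    have key2 : ∀ z : Fin d → ℂ, ‖z‖ = 1 →
        ∃ m : ℕ, 1 ≤ m ∧ m ≤ n₁ ∧ ∃ A ∈ S ^ m, 2 ≤ ‖A.mulVec z‖ := by
      intro z hz
      have hzS : z ∈ Sph := mem_sphere_zero_iff_norm.2 hz
      obtain ⟨y, hyt, hzy⟩ := Set.mem_iUnion₂.1 (ht hzS)
      refine ⟨(F y.1).1 + 1, Nat.succ_le_succ (Nat.zero_le _), ?_, (F y.1).2, ?_, ?_⟩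
      · exact Nat.succ_le_succ (Finset.le_sup (f := fun y => (F y.1).1) hyt)
      · exact hF1 y.1 (mem_sphere_zero_iff_norm.1 y.2)
      · have : (3:ℝ) < ‖(F y.1).2.mulVec z‖ := hzy
        linarith
    -- iterated growth
    have growth : ∀ k : ℕ, ∃ m : ℕ, 1 ≤ m ∧ m ≤ (k + 1) * n₁ ∧
        ∃ A ∈ S ^ m, ∃ x : Fin d → ℂ, ‖x‖ = 1 ∧ (2:ℝ) ^ (k + 1) ≤ ‖A.mulVec x‖ := by
      intro k
      induction k with
      | zero =>
          have he : ‖(Pi.single (⟨0, hd⟩ : Fin d) (1:ℂ) : Fin d → ℂ)‖ = 1 := norm_single_one _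
          obtain ⟨m, hm1, hm2, A, hA, h2⟩ := key2 _ he
          exact ⟨m, hm1, by simpa using hm2, A, hA, _, he, by simpa using h2⟩
      | succ k ih =>
          obtain ⟨m, hm1, hm2, A, hA, x, hx, hAx⟩ := ih
          have hz0 : (0:ℝ) < ‖A.mulVec x‖ :=
            lt_of_lt_of_le (by positivity) hAx
          set z := A.mulVec x with hzdef
          set y : Fin d → ℂ := (‖z‖)⁻¹ • z with hydef
          have hy1 : ‖y‖ = 1 := by
            rw [hydef, norm_smul, norm_inv, norm_norm, inv_mul_cancel₀ hz0.ne']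
          obtain ⟨m', hm'1, hm'2, B, hB, h2⟩ := key2 y hy1
          have hzy : z = (‖z‖ : ℝ) • y := by
            rw [hydef, smul_smul, mul_inv_cancel₀ hz0.ne', one_smul]
          have hBz : ‖B.mulVec z‖ = ‖z‖ * ‖B.mulVec y‖ := by
            rw [hzy, Matrix.mulVec_smul, norm_smul, norm_norm]
            rw [← hzy]
          refine ⟨m' + m, le_trans hm'1 (Nat.le_add_right _ _), ?_, B * A, ?_, x, hx, ?_⟩
          · have : m' + m ≤ n₁ + (k + 1) * n₁ := Nat.add_le_add hm'2 hm2
            calc m' + m ≤ n₁ + (k + 1) * n₁ := this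
              _ = (k + 1 + 1) * n₁ := by ring
          · rw [pow_add]
            exact Set.mul_mem_mul hB hA
          · have h3 : (B * A).mulVec x = B.mulVec z := by
              rw [hzdef, Matrix.mulVec_mulVec]
            rw [h3, hBz]
            calc (2:ℝ) ^ (k + 1 + 1) = 2 ^ (k + 1) * 2 := by ring
              _ ≤ ‖z‖ * ‖B.mulVec y‖ := by
                  refine mul_le_mul hAx h2 (by norm_num) (le_of_lt hz0)
    -- pass to setOpNorm
    have hup : ∀ k : ℕ, ∃ m : ℕ, 1 ≤ m ∧ m ≤ (k + 1) * n₁ ∧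
        (2:ℝ) ^ (k + 1) ≤ setOpNorm stdNorm (S ^ m) := by
      intro k
      obtain ⟨m, hm1, hm2, A, hA, x, hx, hAx⟩ := growth k
      obtain ⟨m', rfl⟩ : ∃ m', m = m' + 1 := by
        cases m with
        | zero => omega
        | succ m' => exact ⟨m', rfl⟩
      refine ⟨m' + 1, hm1, hm2, ?_⟩
      calc (2:ℝ) ^ (k + 1) ≤ ‖A.mulVec x‖ := hAx
        _ ≤ opNorm stdNorm A := norm_mulVec_le A (le_of_eq hx)
        _ ≤ setOpNorm stdNorm (S ^ (m' + 1)) := le_setOpNorm (bddAbove_pow hc₀0 hc₀ m') hA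
    -- geometric upper bound
    set ε : ℝ := (2:ℝ) ^ ((2 * (n₁:ℝ))⁻¹) with hεdef
    have hε1 : 1 < ε := by
      rw [hεdef]
      rw [Real.one_lt_rpow_iff_of_pos (by norm_num)]
      left
      constructor
      · norm_num
      · positivity
    have hε0 : (0:ℝ) ≤ ε := le_trans zero_le_one hε1.le
    obtain ⟨m₀, hm₀1, hm₀⟩ := exists_small_power hρ hε1
    set K : ℝ := c₀ ^ m₀ with hKdef
    have hK1 : (1:ℝ) ≤ K := one_le_pow₀ hc₀1
    have hK0 : (0:ℝ) ≤ K := le_trans zero_le_one hK1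
    have hgeo : ∀ m : ℕ, 1 ≤ m → setOpNorm stdNorm (S ^ m) ≤ K * ε ^ m := by
      intro m
      induction m using Nat.strong_induction_on with
      | _ m ihm =>
        intro hm1
        obtain ⟨m', rfl⟩ : ∃ m', m = m' + 1 := by
          cases m with
          | zero => omega
          | succ m' => exact ⟨m', rfl⟩
        by_cases hcase : m' + 1 ≤ m₀
        · have h1 : setOpNorm stdNorm (S ^ (m' + 1)) ≤ c₀ ^ (m' + 1) :=
            setOpNorm_le (pow_nonneg hc₀0 _) (pow_opNorm_le hc₀0 hc₀ m')
          have h2 : c₀ ^ (m' + 1) ≤ K := by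
            rw [hKdef]
            exact pow_le_pow_right₀ hc₀1 hcase
          have h3 : (1:ℝ) ≤ ε ^ (m' + 1) := one_le_pow₀ hε1.le
          calc setOpNorm stdNorm (S ^ (m' + 1)) ≤ K := le_trans h1 h2
            _ = K * 1 := (mul_one K).symm
            _ ≤ K * ε ^ (m' + 1) := mul_le_mul_of_nonneg_left h3 hK0
        · push_neg at hcase
          obtain ⟨tt, htteq, htt1, httlt⟩ :
              ∃ tt, m' + 1 = m₀ + tt ∧ 1 ≤ tt ∧ tt < m' + 1 :=
            ⟨m' + 1 - m₀, by omega, by omega, by omega⟩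
          have hsplit : S ^ (m' + 1) = S ^ m₀ * S ^ tt := by
            rw [htteq, pow_add]
          have hbound : setOpNorm stdNorm (S ^ (m' + 1))
              ≤ setOpNorm stdNorm (S ^ m₀) * (K * ε ^ tt) := by
            rw [hsplit]
            refine setOpNorm_mul_le (setOpNorm_nonneg _) ?_ ?_ ?_
            · positivity
            · intro A hA
              obtain ⟨a', rfl⟩ : ∃ a', m₀ = a' + 1 := by
                cases m₀ with
                | zero => omega
                | succ a' => exact ⟨a', rfl⟩
              exact le_setOpNorm (bddAbove_pow hc₀0 hc₀ a') hA
            · intro B hB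
              obtain ⟨b', rfl⟩ : ∃ b', tt = b' + 1 := ⟨tt - 1, by omega⟩
              exact le_trans (le_setOpNorm (bddAbove_pow hc₀0 hc₀ b') hB)
                (ihm _ httlt htt1)
          have h4 : setOpNorm stdNorm (S ^ m₀) * (K * ε ^ tt) ≤ ε ^ m₀ * (K * ε ^ tt) := by
            refine mul_le_mul_of_nonneg_right (le_of_lt hm₀) (by positivity)
          calc setOpNorm stdNorm (S ^ (m' + 1)) ≤ ε ^ m₀ * (K * ε ^ tt) :=
                le_trans hbound h4
            _ = K * ε ^ (m₀ + tt) := by rw [pow_add]; ring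
            _ = K * ε ^ (m' + 1) := by rw [← htteq]
    -- final contradiction
    set b : ℝ := (2:ℝ) ^ ((1:ℝ) / 2) with hbdef
    have hb1 : 1 < b := by
      rw [hbdef, Real.one_lt_rpow_iff_of_pos (by norm_num)]
      left; constructor <;> norm_num
    obtain ⟨k₀, hk₀⟩ := pow_unbounded_of_one_lt K hb1
    -- bound for k := k₀
    obtain ⟨m, hm1, hm2, hmlow⟩ := hup k₀
    have hεmono : ε ^ m ≤ ε ^ ((k₀ + 1) * n₁) := pow_le_pow_right₀ hε1.le hm2
    have hchain : (2:ℝ) ^ (k₀ + 1) ≤ K * ε ^ ((k₀ + 1) * n₁) := by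
      calc (2:ℝ) ^ (k₀ + 1) ≤ setOpNorm stdNorm (S ^ m) := hmlow
        _ ≤ K * ε ^ m := hgeo m hm1
        _ ≤ K * ε ^ ((k₀ + 1) * n₁) := mul_le_mul_of_nonneg_left hεmono hK0
    -- compute ε ^ ((k₀+1) * n₁) = b ^ (k₀+1)
    have hn₁ne : ((n₁:ℝ)) ≠ 0 := Nat.cast_ne_zero.2 hn₁pos.ne'
    have hcalc : ε ^ ((k₀ + 1) * n₁) = b ^ (k₀ + 1) := by
      rw [hεdef, hbdef, ← Real.rpow_natCast ((2:ℝ) ^ ((2 * (n₁:ℝ))⁻¹)) ((k₀ + 1) * n₁),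
        ← Real.rpow_natCast ((2:ℝ) ^ ((1:ℝ)/2)) (k₀ + 1),
        ← Real.rpow_mul (by norm_num), ← Real.rpow_mul (by norm_num)]
      congr 1
      push_cast
      field_simp
    have hbk : b ^ (k₀ + 1) * b ^ (k₀ + 1) = 2 ^ (k₀ + 1) := by
      rw [hbdef, ← Real.rpow_natCast ((2:ℝ) ^ ((1:ℝ)/2)) (k₀ + 1), ← Real.rpow_mul (by norm_num),
        ← Real.rpow_add (by norm_num : (0:ℝ) < 2), ← Real.rpow_natCast (2:ℝ) (k₀ + 1)]
      congr 1
      push_cast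
      ring
    rw [hcalc] at hchain
    have hbpos : (0:ℝ) < b ^ (k₀ + 1) := pow_pos (lt_trans zero_lt_one hb1) _
    have : b ^ (k₀ + 1) ≤ K := by
      have h5 : b ^ (k₀ + 1) * b ^ (k₀ + 1) ≤ K * b ^ (k₀ + 1) := by
        rw [hbk]; exact hchain
      exact le_of_mul_le_mul_right h5 hbpos
    have h6 : K < b ^ (k₀ + 1) :=
      lt_of_lt_of_le hk₀ (pow_le_pow_right₀ hb1.le (Nat.le_succ k₀))
    linarith
  · -- bounded case
    have hmem : ∀ x : Fin d → ℂ, x ∈ orbW S := by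
      intro x
      rw [htop]
      exact Submodule.mem_top
    have hj : ∀ j : Fin d, ∃ C : ℝ, ∀ n : ℕ, ∀ A ∈ S ^ (n + 1),
        ‖A.mulVec (Pi.single j 1)‖ ≤ C := fun j => hmem _
    choose Cf hCf using hj
    refine ⟨max (d * ∑ j, max (Cf j) 0) 1, le_max_right _ _, ?_⟩
    intro n A hA
    refine le_trans (opNorm_le_entN A) (le_trans ?_ (le_max_left _ _))
    unfold entN
    have hent : ∀ i j, ‖A i j‖ ≤ max (Cf j) 0 := by
      intro i j
      refine le_trans (entry_le_mulVec_single A i j) (le_trans (hCf j n A hA) (le_max_left _ _))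
    calc (∑ i, ∑ j, ‖A i j‖) ≤ ∑ _i : Fin d, ∑ j, max (Cf j) 0 :=
          Finset.sum_le_sum fun i _ => Finset.sum_le_sum fun j _ => hent i j
      _ = d * ∑ j, max (Cf j) 0 := by simp [Finset.sum_const]


----------------  words and products ----------------

/-- ordered product of the first `k` letters of `g` -/
noncomputable def Pp (g : ℕ → Matrix (Fin d) (Fin d) ℂ) : ℕ → Matrix (Fin d) (Fin d) ℂ
  | 0 => 1
  | (k+1) => Pp g k * g k

lemma Pp_congr {g g' : ℕ → Mat} : ∀ {k : ℕ}, (∀ i < k, g i = g' i) → Pp g k = Pp g' k := by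
  intro k
  induction k with
  | zero => intro _; rfl
  | succ k ih =>
      intro h
      show Pp g k * g k = Pp g' k * g' k
      rw [ih (fun i hi => h i (Nat.lt_succ_of_lt hi)), h k (Nat.lt_succ_self k)]

lemma Pp_split (g : ℕ → Mat) (a : ℕ) : ∀ k : ℕ,
    Pp g (a + k) = Pp g a * Pp (fun i => g (a + i)) k := by
  intro k
  induction k with
  | zero => simp [Pp]
  | succ k ih =>
      show Pp g (a + k + 1) = _
      calc Pp g (a + k + 1) = Pp g (a + k) * g (a + k) := rfl
        _ = Pp g a * Pp (fun i => g (a + i)) k * g (a + k) := by rw [ih]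
        _ = Pp g a * (Pp (fun i => g (a + i)) k * g (a + k)) := by rw [mul_assoc]
        _ = Pp g a * Pp (fun i => g (a + i)) (k + 1) := rfl

lemma Pp_mem {g : ℕ → Mat} : ∀ {k : ℕ}, (∀ i, i < k → g i ∈ S) → Pp g k ∈ S ^ k := by
  intro k
  induction k with
  | zero => intro _; rw [pow_zero]; exact Set.mem_one.2 rfl
  | succ k ih =>
      intro h
      rw [pow_succ]
      exact Set.mul_mem_mul (ih fun i hi => h i (Nat.lt_succ_of_lt hi)) (h k (Nat.lt_succ_self k))

lemma mem_pow_letters (hne : S.Nonempty) :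
    ∀ {k : ℕ} {A : Mat}, A ∈ S ^ k → ∃ g : ℕ → Mat, (∀ i, g i ∈ S) ∧ A = Pp g k := by
  intro k
  induction k with
  | zero =>
      intro A hA
      rw [pow_zero] at hA
      obtain ⟨s₀, hs₀⟩ := hne
      exact ⟨fun _ => s₀, fun _ => hs₀, Set.mem_one.1 hA⟩
  | succ k ih =>
      intro A hA
      rw [pow_succ] at hA
      obtain ⟨B, hB, s, hs, rfl⟩ := Set.mem_mul.1 hA
      obtain ⟨g, hg, rfl⟩ := ih hB
      refine ⟨Function.update g k s, ?_, ?_⟩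
      · intro i
        rcases eq_or_ne i k with rfl | hik
        · rw [Function.update_self]; exact hs
        · rw [Function.update_of_ne hik]; exact hg i
      · show Pp g k * s = Pp (Function.update g k s) k * Function.update g k s k
        rw [Function.update_self,
          Pp_congr (fun i hi => (Function.update_of_ne (Nat.ne_of_lt hi) s g).symm)]

----------------  topology helpers ----------------

lemma mul_mem_closure_mul {s t : Set Mat} {a b : Mat}
    (ha : a ∈ closure s) (hb : b ∈ closure t) : a * b ∈ closure (s * t) :=
  map_mem_closure₂ continuous_mul ha hb fun _ hx _ hy => Set.mul_mem_mul hx hy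

lemma Pp_mem_closure {h : ℕ → Mat} : ∀ {t : ℕ}, (∀ i, i < t → h i ∈ closure S) →
    Pp h t ∈ closure (S ^ t) := by
  intro t
  induction t with
  | zero => intro _; rw [pow_zero]; exact subset_closure (Set.mem_one.2 rfl)
  | succ t ih =>
      intro hh
      rw [pow_succ]
      exact mul_mem_closure_mul (ih fun i hi => hh i (Nat.lt_succ_of_lt hi))
        (hh t (Nat.lt_succ_self t))

lemma box_compact (Cb : ℝ) : IsCompact {A : Mat | ∀ i j, ‖A i j‖ ≤ Cb} := by
  have h : IsCompact (Set.pi Set.univ (fun _ : Fin d => Set.pi Set.univ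
          (fun _ : Fin d => Metric.closedBall (0:ℂ) Cb)) : Set (Fin d → Fin d → ℂ)) :=
    isCompact_univ_pi fun _ => isCompact_univ_pi fun _ => isCompact_closedBall _ _
  have e : {A : Mat | ∀ i j, ‖A i j‖ ≤ Cb}
      = (Set.pi Set.univ (fun _ : Fin d => Set.pi Set.univ
          (fun _ : Fin d => Metric.closedBall (0:ℂ) Cb)) : Set (Fin d → Fin d → ℂ)) := by
    ext A
    constructor
    · intro hA i _ j _
      simpa [Complex.dist_eq] using hA i j
    · intro hA i j
      have := hA i (Set.mem_univ i) j (Set.mem_univ j)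
      simpa [Complex.dist_eq] using this
  rw [e]
  exact h

----------------  semigroup set lemmas ----------------

lemma pow_subset_gen (k : ℕ) : S ^ (k + 1) ⊆ genSemigroup S :=
  fun A hA => Set.mem_iUnion.2 ⟨k, hA⟩

lemma gen_mul_subset : genSemigroup S * genSemigroup S ⊆ genSemigroup S := by
  rintro x hx
  obtain ⟨a, ha, b, hb, rfl⟩ := Set.mem_mul.1 hx
  obtain ⟨m, hm⟩ := Set.mem_iUnion.1 ha
  obtain ⟨n, hn⟩ := Set.mem_iUnion.1 hb
  refine Set.mem_iUnion.2 ⟨m + n + 1, ?_⟩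
  have : S ^ (m + n + 1 + 1) = S ^ (m + 1) * S ^ (n + 1) := by
    rw [← pow_add]
    congr 1
    omega
  rw [this]
  exact Set.mul_mem_mul hm hn

lemma pow_subset_mul_gen {N m : ℕ} (h : N + 2 ≤ m) :
    S ^ m ⊆ S ^ (N + 1) * genSemigroup S := by
  have hm : m = (N + 1) + (m - N - 2 + 1) := by omega
  rw [hm, pow_add]
  exact Set.mul_subset_mul Set.Subset.rfl (pow_subset_gen _)

lemma attractor_isClosed : IsClosed (attractor S) :=
  isClosed_iInter fun _ => isClosed_closure

lemma attractor_mul_mem {a b : Mat} (ha : a ∈ attractor S) (hb : b ∈ attractor S) :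
    a * b ∈ attractor S := by
  refine Set.mem_iInter.2 fun N => ?_
  have haN : a ∈ closure (S ^ (N + 1) * genSemigroup S) := Set.mem_iInter.1 ha N
  have hb1 : b ∈ closure (S ^ (0 + 1) * genSemigroup S) := Set.mem_iInter.1 hb 0
  have h1 : a * b ∈ closure ((S ^ (N + 1) * genSemigroup S) * (S ^ (0 + 1) * genSemigroup S)) :=
    mul_mem_closure_mul haN hb1
  refine closure_mono ?_ h1
  calc (S ^ (N + 1) * genSemigroup S) * (S ^ (0 + 1) * genSemigroup S)
      = S ^ (N + 1) * (genSemigroup S * (S ^ (0 + 1) * genSemigroup S)) := by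
        rw [mul_assoc]
    _ ⊆ S ^ (N + 1) * genSemigroup S := by
        refine Set.mul_subset_mul Set.Subset.rfl ?_
        refine Set.Subset.trans (Set.mul_subset_mul Set.Subset.rfl ?_) gen_mul_subset
        exact Set.Subset.trans (Set.mul_subset_mul (pow_subset_gen 0) Set.Subset.rfl)
          gen_mul_subset

----------------  Ellis–Numakura ----------------

lemma exists_idem {Z : Set Mat} (hZne : Z.Nonempty) (hZcomp : IsCompact Z) (hZcl : IsClosed Z)
    (hZmul : ∀ a ∈ Z, ∀ b ∈ Z, a * b ∈ Z) : ∃ e ∈ Z, e * e = e := by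
  set 𝒮 : Set (Set Mat) :=
    {D | D.Nonempty ∧ IsClosed D ∧ D ⊆ Z ∧ ∀ a ∈ D, ∀ b ∈ D, a * b ∈ D} with h𝒮
  have hzorn : ∀ c ⊆ 𝒮, IsChain (· ⊆ ·) c → c.Nonempty → ∃ lb ∈ 𝒮, ∀ s ∈ c, lb ⊆ s := by
    intro c hc hchain hcne
    haveI : Nonempty ↥c := hcne.to_subtype
    have hne2 : (⋂ D : ↥c, (D : Set Mat)).Nonempty := by
      refine IsCompact.nonempty_iInter_of_directed_nonempty_isCompact_isClosed
        (fun D : ↥c => (D : Set Mat)) ?_ ?_ ?_ ?_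
      · rintro ⟨D, hD⟩ ⟨E, hE⟩
        rcases hchain.total hD hE with h | h
        · exact ⟨⟨D, hD⟩, Set.Subset.rfl, h⟩
        · exact ⟨⟨E, hE⟩, h, Set.Subset.rfl⟩
      · exact fun D => (hc D.2).1
      · exact fun D => IsCompact.of_isClosed_subset hZcomp (hc D.2).2.1 (hc D.2).2.2.1
      · exact fun D => (hc D.2).2.1
    obtain ⟨D₀, hD₀⟩ := hcne
    refine ⟨⋂ D : ↥c, (D : Set Mat), ?_, ?_⟩
    swap
    · intro s hs
      exact Set.iInter_subset (fun D : ↥c => (D : Set Mat)) ⟨s, hs⟩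
    simp only [h𝒮, Set.mem_setOf_eq]
    refine ⟨hne2, ?_, ?_, ?_⟩
    · exact isClosed_iInter fun D => (hc D.2).2.1
    · exact Set.Subset.trans
        (Set.iInter_subset (fun D : ↥c => (D : Set Mat)) ⟨D₀, hD₀⟩) (hc hD₀).2.2.1
    · intro a ha b hb
      refine Set.mem_iInter.2 fun D => ?_
      exact (hc D.2).2.2.2 a (Set.mem_iInter.1 ha D) b (Set.mem_iInter.1 hb D)
  obtain ⟨Δ, hΔsub, hΔmin⟩ := zorn_superset_nonempty 𝒮 hzorn Z ⟨hZne, hZcl, Set.Subset.rfl, hZmul⟩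
  have hΔ𝒮 := hΔmin.prop
  simp only [h𝒮, Set.mem_setOf_eq] at hΔ𝒮
  obtain ⟨hΔne, hΔcl, hΔZ, hΔmul⟩ := hΔ𝒮
  obtain ⟨x, hx⟩ := hΔne
  have hΔcomp : IsCompact Δ := IsCompact.of_isClosed_subset hZcomp hΔcl hΔZ
  -- Δ * x is a closed subsemigroup contained in Δ
  have hmulx_cont : Continuous fun y : Mat => y * x := continuous_id.mul continuous_const
  set D₁ : Set Mat := (fun y => y * x) '' Δ with hD₁
  have hD₁mem : D₁ ∈ 𝒮 := by
    simp only [h𝒮, Set.mem_setOf_eq]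
    refine ⟨⟨x * x, Set.mem_image_of_mem _ hx⟩, ?_, ?_, ?_⟩
    · exact (hΔcomp.image hmulx_cont).isClosed
    · rintro z ⟨y, hy, rfl⟩
      exact hΔZ (hΔmul y hy x hx)
    · rintro a ⟨y, hy, rfl⟩ b ⟨y', hy', rfl⟩
      exact ⟨y * x * y', hΔmul _ (hΔmul y hy x hx) y' hy', mul_assoc (y * x) y' x⟩
  have hD₁Δ : D₁ ⊆ Δ := by
    rintro z ⟨y, hy, rfl⟩
    exact hΔmul y hy x hx
  have hΔD₁ : Δ ⊆ D₁ := hΔmin.2 hD₁mem hD₁Δ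
  obtain ⟨y, hy, hyx⟩ := hΔD₁ hx
  -- the stabiliser of x in Δ
  set D₂ : Set Mat := Δ ∩ {y | y * x = x} with hD₂
  have hD₂mem : D₂ ∈ 𝒮 := by
    simp only [h𝒮, Set.mem_setOf_eq]
    refine ⟨⟨y, hy, hyx⟩, ?_, fun z hz => hΔZ hz.1, ?_⟩
    · exact hΔcl.inter (isClosed_eq hmulx_cont continuous_const)
    · rintro a ⟨ha, ha'⟩ b ⟨hb, hb'⟩
      refine ⟨hΔmul a ha b hb, ?_⟩
      show a * b * x = x
      rw [mul_assoc, hb', ha']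
  have hΔD₂ : Δ ⊆ D₂ := hΔmin.2 hD₂mem (fun z hz => hz.1)
  obtain ⟨-, hxx⟩ := hΔD₂ hx
  exact ⟨x, hΔZ hx, hxx⟩

/-- strict monotone gap bound -/
lemma strictMono_add_le {φ : ℕ → ℕ} (hφ : StrictMono φ) (b : ℕ) :
    ∀ t : ℕ, φ b + t ≤ φ (b + t) := by
  intro t
  induction t with
  | zero => simp
  | succ t ih =>
      have h1 : φ (b + t) < φ (b + t + 1) := hφ (Nat.lt_succ_self _)
      have h2 : φ b + t + 1 ≤ φ (b + t + 1) := by omega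
      exact h2

end Stmt8Aux

/-- if `S` is bounded, irreducible and `ρ(S) = 1`, then the attractor
semigroup `T_∞` contains a nonzero idempotent. -/
theorem stmt_8 {d : ℕ} (S : Set (Matrix (Fin d) (Fin d) ℂ)) (hS : MatBdd S)
    (hirr : IsIrred S) (hρ : jsr S = 1) :
    ∃ p ∈ attractor S, p ≠ 0 ∧ p * p = p := by
  open Stmt8Aux in
  rcases Nat.eq_zero_or_pos d with hd0 | hd
  · have h0 := jsr_dim_zero (S := S) hd0
    rw [h0] at hρ
    norm_num at hρ
  rcases Set.eq_empty_or_nonempty S with rfl | hne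
  · have h0 := jsr_empty (d := d)
    rw [h0] at hρ
    norm_num at hρ
  obtain ⟨Cb, hCb1, hCb⟩ := semigroup_bounded hd hne hS hirr hρ
  have hCb0 : (0:ℝ) < Cb := lt_of_lt_of_le zero_lt_one hCb1
  have hent : ∀ n : ℕ, ∀ A ∈ S ^ (n+1), ∀ i j, ‖A i j‖ ≤ Cb :=
    fun n A hA i j => (entry_le_opNorm A i j).trans (hCb n A hA)
  have hpowBox : ∀ m : ℕ, 1 ≤ m → S ^ m ⊆ {A : Matrix (Fin d) (Fin d) ℂ | ∀ i j, ‖A i j‖ ≤ Cb} := by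
    intro m hm A hA
    obtain ⟨m', rfl⟩ : ∃ m', m = m' + 1 := ⟨m - 1, by omega⟩
    exact hent m' A hA
  set Box : Set (Matrix (Fin d) (Fin d) ℂ) := {A | ∀ i j, ‖A i j‖ ≤ Cb} with hBoxdef
  have hBoxC : IsCompact Box := box_compact Cb
  have hBoxcl : IsClosed Box := hBoxC.isClosed
  have hgenBox : genSemigroup S ⊆ Box := by
    intro A hA
    obtain ⟨n, hn⟩ := Set.mem_iUnion.1 hA
    exact hent n A hn
  have hattrBox : attractor S ⊆ Box := by
    intro a ha
    have h1 : a ∈ closure (S ^ (0+1) * genSemigroup S) := Set.mem_iInter.1 ha 0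
    refine closure_minimal ?_ hBoxcl h1
    refine Set.Subset.trans ?_ hgenBox
    exact Set.Subset.trans (Set.mul_subset_mul (pow_subset_gen 0) Set.Subset.rfl) gen_mul_subset
  -- long words of norm at least 1/2
  have hword : ∀ n : ℕ, ∃ A ∈ S ^ (n+1), (1:ℝ)/2 ≤ opNorm stdNorm A := by
    intro n
    have h1 : (1:ℝ)/2 < setOpNorm stdNorm (S ^ (n+1)) :=
      lt_of_lt_of_le (by norm_num) (one_le_setOpNorm hρ n)
    obtain ⟨cc, hcmem, hlt⟩ := exists_lt_of_lt_csSup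
      ((pow_nonempty hne (n+1)).image _) h1
    obtain ⟨A, hA, rfl⟩ := hcmem
    exact ⟨A, hA, hlt.le⟩
  choose Aw hAw hAwn using hword
  have hlet : ∀ n : ℕ, ∃ g : ℕ → Matrix (Fin d) (Fin d) ℂ,
      (∀ i, g i ∈ S) ∧ Aw n = Pp g (n+1) := fun n => mem_pow_letters hne (hAw n)
  choose gw hgw1 hgw2 using hlet
  set c : ℝ := 1 / (2 * Cb) with hcdef
  have hcpos : 0 < c := by positivity
  -- all prefixes of the chosen words have norm at least c
  have hprefix : ∀ n m : ℕ, m ≤ n + 1 → c ≤ opNorm stdNorm (Pp (gw n) m) := by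
    intro n m hm
    obtain ⟨t, ht⟩ : ∃ t, n + 1 = m + t := ⟨n + 1 - m, by omega⟩
    have hsplit : Aw n = Pp (gw n) m * Pp (fun i => gw n (m + i)) t := by
      rw [hgw2 n, ht, Pp_split]
    have hQ : opNorm stdNorm (Pp (fun i => gw n (m + i)) t) ≤ Cb := by
      rcases Nat.eq_zero_or_pos t with h0 | hpos
      · rw [h0]
        show opNorm stdNorm (1 : Matrix (Fin d) (Fin d) ℂ) ≤ Cb
        rw [opNorm_one hd]
        exact hCb1
      · obtain ⟨t', rfl⟩ : ∃ t', t = t' + 1 := ⟨t - 1, by omega⟩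
        exact hCb t' _ (Pp_mem fun i _ => hgw1 n (m + i))
    have h12 : (1:ℝ)/2 ≤ opNorm stdNorm (Pp (gw n) m) * Cb := by
      calc (1:ℝ)/2 ≤ opNorm stdNorm (Aw n) := hAwn n
        _ = opNorm stdNorm (Pp (gw n) m * Pp (fun i => gw n (m + i)) t) := by
            rw [← hsplit]
        _ ≤ opNorm stdNorm (Pp (gw n) m)
              * opNorm stdNorm (Pp (fun i => gw n (m+i)) t) := opNorm_mul_le _ _
        _ ≤ opNorm stdNorm (Pp (gw n) m) * Cb :=
            mul_le_mul_of_nonneg_left hQ (opNorm_nonneg _)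
    rw [hcdef, div_le_iff₀ (by positivity)]
    nlinarith [opNorm_nonneg (Pp (gw n) m)]
  -- extraction 1 : a limiting infinite word
  have hSBox : ∀ s ∈ S, s ∈ Box := by
    intro s hs
    refine hent 0 s ?_
    rw [pow_one]
    exact hs
  have hLmem : ∀ n : ℕ, gw n ∈ Set.pi Set.univ (fun _ : ℕ => Box) :=
    fun n => fun i _ => hSBox _ (hgw1 n i)
  have hPiC : IsCompact (Set.pi Set.univ (fun _ : ℕ => Box) :
      Set (ℕ → Matrix (Fin d) (Fin d) ℂ)) :=
    isCompact_univ_pi fun _ => hBoxC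
  obtain ⟨G, hGmem, φ, hφ, hGt⟩ := hPiC.tendsto_subseq hLmem
  have hcoord : ∀ i : ℕ, Tendsto (fun k => gw (φ k) i) atTop (nhds (G i)) :=
    fun i => (tendsto_pi_nhds.1 hGt) i
  have hGS : ∀ i, G i ∈ closure S := fun i =>
    mem_closure_of_tendsto (hcoord i) (Eventually.of_forall fun k => hgw1 (φ k) i)
  have hPpt : ∀ m : ℕ, Tendsto (fun k => Pp (gw (φ k)) m) atTop (nhds (Pp G m)) := by
    intro m
    induction m with
    | zero => exact tendsto_const_nhds
    | succ m ih => exact Tendsto.mul ih (hcoord m)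
  have hpnorm : ∀ m : ℕ, 1 ≤ m → c ≤ opNorm stdNorm (Pp G m) := by
    intro m hm
    refine ge_of_tendsto (tendsto_opNorm (hPpt m)) ?_
    refine eventually_atTop.2 ⟨m, fun k hk => ?_⟩
    refine hprefix (φ k) m ?_
    have h1 : k ≤ φ k := hφ.le_apply
    omega
  have hpclos : ∀ N m : ℕ, N + 2 ≤ m → Pp G m ∈ closure (S ^ (N+1) * genSemigroup S) := by
    intro N m hNm
    refine mem_closure_of_tendsto (hPpt m) ?_
    exact Eventually.of_forall fun k => pow_subset_mul_gen hNm (Pp_mem fun i _ => hgw1 (φ k) i)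
  have hpBox : ∀ m : ℕ, 1 ≤ m → Pp G m ∈ Box := by
    intro m hm
    refine hBoxcl.mem_of_tendsto (hPpt m) ?_
    exact Eventually.of_forall fun k => hpowBox m hm (Pp_mem fun i _ => hgw1 (φ k) i)
  -- extraction 2 : a limit point of the prefix products, with fast-growing indices
  obtain ⟨phat, hphatBox, φ₂, hφ₂, hφ₂t⟩ :=
    hBoxC.tendsto_subseq (x := fun m => Pp G (m + 1))
      (fun m => hpBox (m+1) (Nat.le_add_left 1 m))
  set ν : ℕ → ℕ := fun k => (k + 1) * (k + 1) with hν
  have hνmono : StrictMono ν := by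
    refine strictMono_nat_of_lt_succ fun k => ?_
    simp only [hν]
    nlinarith
  set μ : ℕ → ℕ := fun k => φ₂ (ν k) with hμ
  have hμmono : StrictMono μ := hφ₂.comp hνmono
  have hμt : Tendsto (fun k => Pp G (μ k + 1)) atTop (nhds phat) :=
    hφ₂t.comp hνmono.tendsto_atTop
  have hgap : ∀ k : ℕ, k + 1 ≤ μ (k+1) - μ k := by
    intro k
    have h3 : ν (k+1) = ν k + (2*k+3) := by simp only [hν]; ring
    have h1 : φ₂ (ν k) + (2*k+3) ≤ φ₂ (ν k + (2*k+3)) := strictMono_add_le hφ₂ _ _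
    rw [← h3] at h1
    simp only [hμ]
    omega
  set R : ℕ → Matrix (Fin d) (Fin d) ℂ :=
    fun k => Pp (fun i => G (μ k + 1 + i)) (μ (k+1) - μ k) with hR
  have hrel : ∀ k : ℕ, Pp G (μ (k+1) + 1) = Pp G (μ k + 1) * R k := by
    intro k
    have h1 := Pp_split G (μ k + 1) (μ (k+1) - μ k)
    have h2 : (μ k + 1) + (μ (k+1) - μ k) = μ (k+1) + 1 := by
      have h4 : μ k < μ (k+1) := hμmono (show k < k + 1 by omega)
      omega
    rw [h2] at h1
    exact h1
  have hRclos : ∀ k : ℕ, R k ∈ closure (S ^ (μ (k+1) - μ k)) :=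
    fun k => Pp_mem_closure fun i _ => hGS (μ k + 1 + i)
  have hRBox : ∀ k : ℕ, R k ∈ Box := by
    intro k
    have h1 : (1:ℕ) ≤ μ (k+1) - μ k := le_trans (Nat.le_add_left 1 k) (hgap k)
    exact closure_minimal (hpowBox _ h1) hBoxcl (hRclos k)
  -- extraction 3 : a limit of the gap products
  obtain ⟨q, hqBox, ψ, hψ, hψt⟩ := hBoxC.tendsto_subseq (x := R) hRBox
  have hLHS : Tendsto (fun k => Pp G (μ (ψ k + 1) + 1)) atTop (nhds phat) := by
    have hmono : StrictMono fun k => ψ k + 1 := fun a b hab => by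
      have h5 := hψ hab
      show ψ a + 1 < ψ b + 1
      omega
    exact hμt.comp hmono.tendsto_atTop
  have hRHS : Tendsto (fun k => Pp G (μ (ψ k) + 1) * R (ψ k)) atTop (nhds (phat * q)) :=
    Tendsto.mul (hμt.comp hψ.tendsto_atTop) hψt
  have heq : phat = phat * q := by
    refine tendsto_nhds_unique ?_ hRHS
    have h6 : (fun k => Pp G (μ (ψ k + 1) + 1)) = fun k => Pp G (μ (ψ k) + 1) * R (ψ k) := by
      funext k
      exact hrel (ψ k)
    rw [← h6]
    exact hLHS
  have hphat_attr : phat ∈ attractor S := by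
    refine Set.mem_iInter.2 fun N => ?_
    refine isClosed_closure.mem_of_tendsto hμt ?_
    refine eventually_atTop.2 ⟨N + 1, fun k hk => ?_⟩
    refine hpclos N (μ k + 1) ?_
    have h7 : k ≤ μ k := hμmono.le_apply
    omega
  have hq_attr : q ∈ attractor S := by
    refine Set.mem_iInter.2 fun N => ?_
    refine isClosed_closure.mem_of_tendsto hψt ?_
    refine eventually_atTop.2 ⟨N + 1, fun k hk => ?_⟩
    have h1 : N + 2 ≤ μ (ψ k + 1) - μ (ψ k) := by
      have h2 := hgap (ψ k)
      have h3 : k ≤ ψ k := hψ.le_apply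
      omega
    exact closure_mono (pow_subset_mul_gen h1) (hRclos (ψ k))
  have hphat_ne : phat ≠ 0 := by
    have h1 : c ≤ opNorm stdNorm phat := by
      refine ge_of_tendsto (tendsto_opNorm hμt) ?_
      exact Eventually.of_forall fun k => hpnorm (μ k + 1) (Nat.le_add_left 1 _)
    intro h0
    rw [h0, opNorm_zero] at h1
    exact absurd h1 (not_le.2 hcpos)
  -- Ellis–Numakura applied to the stabiliser of `phat` inside the attractor
  set Z : Set (Matrix (Fin d) (Fin d) ℂ) :=
    attractor S ∩ {z | phat * z = phat} with hZ
  have hZcl : IsClosed Z :=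
    IsClosed.inter attractor_isClosed
      (isClosed_eq (continuous_const.mul continuous_id) continuous_const)
  have hZsub : Z ⊆ Box := fun z hz => hattrBox hz.1
  have hZcomp : IsCompact Z := IsCompact.of_isClosed_subset hBoxC hZcl hZsub
  have hZne : Z.Nonempty := ⟨q, hq_attr, heq.symm⟩
  have hZmul : ∀ a ∈ Z, ∀ b ∈ Z, a * b ∈ Z := by
    rintro a ⟨ha1, ha2⟩ b ⟨hb1, hb2⟩
    refine ⟨attractor_mul_mem ha1 hb1, ?_⟩
    show phat * (a * b) = phat
    rw [← mul_assoc]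
    rw [show phat * a = phat from ha2]
    exact hb2
  obtain ⟨e, heZ, hee⟩ := exists_idem hZne hZcomp hZcl hZmul
  refine ⟨e, heZ.1, ?_, hee⟩
  intro he0
  have h8 : phat * e = phat := heZ.2
  rw [he0] at h8
  rw [mul_zero] at h8
  exact hphat_ne h8.symm
end

section
/- Let ‖·‖ be a norm on ℂ^d, A ∈ M_d(ℂ) with ‖A‖ ≤ 1 (operator norm), x ∈ ℂ^d with ‖x‖ = 1, ε > 0, and λ ∈ ℂ with |λ| ≤ 2. If ‖Ax − λx‖ ≤ (ε|λ|)^d, then the spectral radius of A satisfies Λ(A) ≥ |λ|(1 − 4ε). -/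
open scoped Pointwise
open Filter

namespace Stmt11Aux

open Polynomial Matrix

variable {d : ℕ} {v : (Fin d → ℂ) → ℝ}

lemma v_zero (hv : IsCNorm v) : v 0 = 0 := (hv.2.1 0).mpr rfl

lemma v_neg (hv : IsCNorm v) (a : Fin d → ℂ) : v (-a) = v a := by
  have := hv.2.2.1 (-1) a
  simpa using this

lemma v_sub_le (hv : IsCNorm v) (a b : Fin d → ℂ) : v (a - b) ≤ v a + v b := by
  have := hv.2.2.2 a (-b)
  rw [v_neg hv] at this
  simpa [sub_eq_add_neg] using this

lemma v_sum_le (hv : IsCNorm v) {ι : Type*} (s : Finset ι) (f : ι → Fin d → ℂ) :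
    v (∑ i ∈ s, f i) ≤ ∑ i ∈ s, v (f i) := by
  classical
  induction s using Finset.induction with
  | empty => simp [v_zero hv]
  | insert _ _ h ih =>
    rw [Finset.sum_insert h, Finset.sum_insert h]
    exact le_trans (hv.2.2.2 _ _) (by linarith)

lemma v_upper (hv : IsCNorm v) : ∃ C : ℝ, 0 ≤ C ∧ ∀ x, v x ≤ C * ‖x‖ := by
  classical
  set e : Fin d → (Fin d → ℂ) := fun i j => if i = j then 1 else 0 with he
  refine ⟨∑ i : Fin d, v (e i), Finset.sum_nonneg fun i _ => hv.1 _, fun x => ?_⟩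
  have hx : x = ∑ i : Fin d, x i • e i := pi_eq_sum_univ x
  calc v x = v (∑ i : Fin d, x i • e i) := by rw [← hx]
    _ ≤ ∑ i : Fin d, v (x i • e i) := v_sum_le hv _ _
    _ ≤ ∑ i : Fin d, v (e i) * ‖x‖ := by
        refine Finset.sum_le_sum fun i _ => ?_
        rw [hv.2.2.1, mul_comm]
        exact mul_le_mul_of_nonneg_left (norm_le_pi_norm x i) (hv.1 _)
    _ = (∑ i : Fin d, v (e i)) * ‖x‖ := (Finset.sum_mul _ _ _).symm

lemma v_continuous (hv : IsCNorm v) : Continuous v := by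
  obtain ⟨C, hC0, hC⟩ := v_upper hv
  have : LipschitzWith (Real.toNNReal C) v := by
    refine LipschitzWith.of_dist_le_mul fun a b => ?_
    rw [Real.dist_eq, dist_eq_norm, Real.coe_toNNReal C hC0]
    rw [abs_sub_le_iff]
    constructor
    · have h1 : v a ≤ v (a - b) + v b := by
        have := hv.2.2.2 (a - b) b; simpa using this
      have := hC (a - b)
      linarith
    · have h1 : v b ≤ v (b - a) + v a := by
        have := hv.2.2.2 (b - a) a; simpa using this
      have h2 := hC (b - a)
      have h3 : ‖b - a‖ = ‖a - b‖ := norm_sub_rev _ _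
      rw [h3] at h2
      linarith
  exact this.continuous

lemma v_lower (hv : IsCNorm v) (hd : 0 < d) : ∃ c : ℝ, 0 < c ∧ ∀ x, c * ‖x‖ ≤ v x := by
  haveI : Nonempty (Fin d) := ⟨⟨0, hd⟩⟩
  have hne : (Metric.sphere (0 : Fin d → ℂ) 1).Nonempty :=
    NormedSpace.sphere_nonempty.mpr zero_le_one
  obtain ⟨z, hz, hmin⟩ := (isCompact_sphere (0 : Fin d → ℂ) 1).exists_isMinOn hne
    (v_continuous hv).continuousOn
  rw [mem_sphere_zero_iff_norm] at hz
  have hz0 : z ≠ 0 := by intro h; rw [h] at hz; simp at hz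
  have hc : 0 < v z := lt_of_le_of_ne (hv.1 z) (fun h => hz0 ((hv.2.1 z).mp h.symm))
  refine ⟨v z, hc, fun x => ?_⟩
  rcases eq_or_ne x 0 with rfl | hx0
  · simp [v_zero hv]
  · have hxn : (0 : ℝ) < ‖x‖ := norm_pos_iff.mpr hx0
    set y : Fin d → ℂ := ((‖x‖⁻¹ : ℝ) : ℂ) • x with hy
    have hyn : ‖y‖ = 1 := by
      rw [hy, norm_smul, Complex.norm_real, Real.norm_eq_abs,
        abs_of_pos (inv_pos.mpr hxn), inv_mul_cancel₀ hxn.ne']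
    have hymem : y ∈ Metric.sphere (0 : Fin d → ℂ) 1 := by
      rw [mem_sphere_zero_iff_norm]; exact hyn
    have h5 : v z ≤ v y := hmin hymem
    have hvy : v y = ‖x‖⁻¹ * v x := by
      rw [hy, hv.2.2.1, Complex.norm_real, Real.norm_eq_abs, abs_of_pos (inv_pos.mpr hxn)]
    rw [hvy] at h5
    calc v z * ‖x‖ ≤ (‖x‖⁻¹ * v x) * ‖x‖ := mul_le_mul_of_nonneg_right h5 hxn.le
      _ = v x := by field_simp
    
lemma mulVec_std_bound (A : Matrix (Fin d) (Fin d) ℂ) :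
    ∃ K : ℝ, 0 ≤ K ∧ ∀ y, ‖A.mulVec y‖ ≤ K * ‖y‖ := by
  let f := LinearMap.toContinuousLinearMap (Matrix.mulVecLin A)
  refine ⟨‖f‖, norm_nonneg f, fun y => ?_⟩
  have := f.le_opNorm y
  simpa [f] using this

/-- If the operator norm of `A` is at most 1, then `A` is `v`-contractive. -/
lemma mulVec_v_le (hv : IsCNorm v) (hd : 0 < d) {A : Matrix (Fin d) (Fin d) ℂ}
    (hA : opNorm v A ≤ 1) : ∀ y, v (A.mulVec y) ≤ v y := by
  obtain ⟨C, hC0, hC⟩ := v_upper hv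
  obtain ⟨c, hc0, hc⟩ := v_lower hv hd
  obtain ⟨K, hK0, hK⟩ := mulVec_std_bound A
  have hbdd : BddAbove {r : ℝ | ∃ x : Fin d → ℂ, v x ≤ 1 ∧ r = v (A.mulVec x)} := by
    refine ⟨C * K * c⁻¹, ?_⟩
    rintro r ⟨x, hx1, rfl⟩
    have hxn : ‖x‖ ≤ c⁻¹ := by
      have h1 : c * ‖x‖ ≤ 1 := le_trans (hc x) hx1
      calc ‖x‖ = c⁻¹ * (c * ‖x‖) := by field_simp
        _ ≤ c⁻¹ * 1 := mul_le_mul_of_nonneg_left h1 (inv_pos.mpr hc0).le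
        _ = c⁻¹ := mul_one _
    calc v (A.mulVec x) ≤ C * ‖A.mulVec x‖ := hC _
      _ ≤ C * (K * ‖x‖) := mul_le_mul_of_nonneg_left (hK x) hC0
      _ ≤ C * (K * c⁻¹) := by
          refine mul_le_mul_of_nonneg_left (mul_le_mul_of_nonneg_left hxn hK0) hC0
      _ = C * K * c⁻¹ := by ring
  intro y
  rcases eq_or_ne (v y) 0 with hy | hy
  · have : y = 0 := (hv.2.1 y).mp hy
    simp [this, Matrix.mulVec_zero, v_zero hv, hy, hv.1]
  · have hvy : 0 < v y := lt_of_le_of_ne (hv.1 y) (Ne.symm hy)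
    set z : Fin d → ℂ := (((v y)⁻¹ : ℝ) : ℂ) • y with hz
    have hvz : v z = 1 := by
      rw [hz, hv.2.2.1, Complex.norm_real, Real.norm_eq_abs, abs_of_pos (inv_pos.mpr hvy),
        inv_mul_cancel₀ hy]
    have hmem : v (A.mulVec z) ∈ {r : ℝ | ∃ x : Fin d → ℂ, v x ≤ 1 ∧ r = v (A.mulVec x)} :=
      ⟨z, hvz.le, rfl⟩
    have h1 : v (A.mulVec z) ≤ 1 := le_trans (le_csSup hbdd hmem) hA
    have h2 : v (A.mulVec z) = (v y)⁻¹ * v (A.mulVec y) := by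
      rw [hz, Matrix.mulVec_smul, hv.2.2.1, Complex.norm_real, Real.norm_eq_abs,
        abs_of_pos (inv_pos.mpr hvy)]
    rw [h2] at h1
    calc v (A.mulVec y) = v y * ((v y)⁻¹ * v (A.mulVec y)) := by field_simp
      _ ≤ v y * 1 := mul_le_mul_of_nonneg_left h1 hvy.le
      _ = v y := mul_one _

lemma eval_charpoly_det (A : Matrix (Fin d) (Fin d) ℂ) (μ : ℂ) :
    (A.charpoly).eval μ = (μ • (1 : Matrix (Fin d) (Fin d) ℂ) - A).det := by
  rw [Matrix.charpoly, ← Polynomial.coe_evalRingHom, RingHom.map_det]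
  congr 1
  ext i j
  by_cases h : i = j <;>
    simp [Matrix.charmatrix_apply, h, Matrix.one_apply, Matrix.diagonal_apply,
      Matrix.sub_apply, Matrix.smul_apply]

lemma algebraMap_matrix_eq (μ : ℂ) :
    algebraMap ℂ (Matrix (Fin d) (Fin d) ℂ) μ = μ • (1 : Matrix (Fin d) (Fin d) ℂ) :=
  Algebra.algebraMap_eq_smul_one μ

lemma root_mem_spectrum {A : Matrix (Fin d) (Fin d) ℂ} {μ : ℂ}
    (h : (A.charpoly).IsRoot μ) : μ ∈ spectrum ℂ A := by
  rw [spectrum.mem_iff]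
  intro hu
  have hdet := (Matrix.isUnit_iff_isUnit_det _).mp hu
  rw [algebraMap_matrix_eq, ← eval_charpoly_det] at hdet
  rw [Polynomial.IsRoot.def] at h
  rw [h] at hdet
  exact (not_isUnit_zero hdet : False)

lemma exists_eigvec {A : Matrix (Fin d) (Fin d) ℂ} {μ : ℂ} (h : μ ∈ spectrum ℂ A) :
    ∃ w : Fin d → ℂ, w ≠ 0 ∧ A.mulVec w = μ • w := by
  rw [spectrum.mem_iff] at h
  have hdet : (algebraMap ℂ (Matrix (Fin d) (Fin d) ℂ) μ - A).det = 0 := by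
    by_contra hd
    exact h ((Matrix.isUnit_iff_isUnit_det _).mpr (Ne.isUnit hd))
  obtain ⟨w, hw0, hw⟩ := (Matrix.exists_mulVec_eq_zero_iff).mpr hdet
  refine ⟨w, hw0, ?_⟩
  rw [algebraMap_matrix_eq, Matrix.sub_mulVec, Matrix.smul_mulVec,
    Matrix.one_mulVec, sub_eq_zero] at hw
  exact hw.symm

lemma spec_norm_le (hv : IsCNorm v) {A : Matrix (Fin d) (Fin d) ℂ}
    (hA1 : ∀ y, v (A.mulVec y) ≤ v y) {μ : ℂ} (hμ : μ ∈ spectrum ℂ A) : ‖μ‖ ≤ 1 := by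
  obtain ⟨w, hw0, hw⟩ := exists_eigvec hμ
  have hvw : 0 < v w := lt_of_le_of_ne (hv.1 w) (fun h => hw0 ((hv.2.1 w).mp h.symm))
  have := hA1 w
  rw [hw, hv.2.2.1] at this
  nlinarith

lemma prod_norm_le {lam : ℂ} (hlam : ‖lam‖ ≤ 2) :
    ∀ (L : List ℂ), (∀ μ ∈ L, ‖μ‖ ≤ 1) →
      ‖(L.map (fun μ => lam - μ)).prod‖ ≤ 3 ^ L.length := by
  intro L
  induction L with
  | nil => simp
  | cons μ L ih =>
    intro hL
    have h1 : ‖lam - μ‖ ≤ 3 := by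
      have := norm_sub_le lam μ
      have := hL μ List.mem_cons_self
      linarith
    have h2 := ih (fun ν hν => hL ν (List.mem_cons_of_mem μ hν))
    rw [List.map_cons, List.prod_cons, List.length_cons, norm_mul, pow_succ]
    have := norm_nonneg (L.map (fun μ => lam - μ)).prod
    calc ‖lam - μ‖ * ‖(L.map (fun μ => lam - μ)).prod‖
        ≤ 3 * (3 ^ L.length) := by
          apply mul_le_mul h1 h2 (norm_nonneg _) (by norm_num)
      _ = 3 ^ L.length * 3 := by ring

lemma prod_norm_ge {lam : ℂ} (t : ℝ) (ht : 0 ≤ t) :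
    ∀ (L : List ℂ), (∀ μ ∈ L, t ≤ ‖lam - μ‖) →
      t ^ L.length ≤ ‖(L.map (fun μ => lam - μ)).prod‖ := by
  intro L
  induction L with
  | nil => simp
  | cons μ L ih =>
    intro hL
    have h1 := hL μ List.mem_cons_self
    have h2 := ih (fun ν hν => hL ν (List.mem_cons_of_mem μ hν))
    rw [List.map_cons, List.prod_cons, List.length_cons, norm_mul, pow_succ]
    calc t ^ L.length * t ≤ ‖(L.map (fun μ => lam - μ)).prod‖ * ‖lam - μ‖ :=
          mul_le_mul h2 h1 ht (norm_nonneg _)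
      _ = ‖lam - μ‖ * ‖(L.map (fun μ => lam - μ)).prod‖ := by ring

lemma telescope (hv : IsCNorm v) {A : Matrix (Fin d) (Fin d) ℂ}
    (hA1 : ∀ y, v (A.mulVec y) ≤ v y) (x : Fin d → ℂ) {lam : ℂ} (hlam : ‖lam‖ ≤ 2) :
    ∀ (L : List ℂ), (∀ μ ∈ L, ‖μ‖ ≤ 1) →
      v ((L.map (fun μ => lam - μ)).prod • x -
          ((L.map (fun μ => A - μ • (1 : Matrix (Fin d) (Fin d) ℂ))).prod).mulVec x)
        ≤ ((3:ℝ) ^ L.length - 2 ^ L.length) * v (A.mulVec x - lam • x) := by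
  intro L
  induction L with
  | nil => simp [Matrix.one_mulVec, v_zero hv]
  | cons μ L ih =>
    intro hL
    have hμ1 : ‖μ‖ ≤ 1 := hL μ List.mem_cons_self
    have ihL := ih (fun ν hν => hL ν (List.mem_cons_of_mem μ hν))
    set p' : ℂ := (L.map (fun μ => lam - μ)).prod with hp'
    set P' : Matrix (Fin d) (Fin d) ℂ := (L.map (fun μ => A - μ • (1 : Matrix (Fin d) (Fin d) ℂ))).prod with hP'
    set e : Fin d → ℂ := A.mulVec x - lam • x with he
    set z : Fin d → ℂ := p' • x - P'.mulVec x with hz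
    have hve : 0 ≤ v e := hv.1 e
    have hvz : 0 ≤ v z := hv.1 z
    have key : ((lam - μ) * p') • x - ((A - μ • 1) * P').mulVec x
        = (A.mulVec z - μ • z) - p' • e := by
      rw [← Matrix.mulVec_mulVec, hz, he, Matrix.sub_mulVec, Matrix.smul_mulVec,
        Matrix.one_mulVec, Matrix.mulVec_sub, Matrix.mulVec_smul]
      module
    rw [List.map_cons, List.prod_cons, List.map_cons, List.prod_cons, List.length_cons, key]
    have step1 : v ((A.mulVec z - μ • z) - p' • e) ≤ v (A.mulVec z - μ • z) + v (p' • e) :=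
      v_sub_le hv _ _
    have step2 : v (A.mulVec z - μ • z) ≤ 2 * v z := by
      have := v_sub_le hv (A.mulVec z) (μ • z)
      have h1 := hA1 z
      have h2 : v (μ • z) ≤ v z := by
        rw [hv.2.2.1]
        nlinarith
      linarith
    have step3 : v (p' • e) ≤ 3 ^ L.length * v e := by
      rw [hv.2.2.1]
      exact mul_le_mul_of_nonneg_right (prod_norm_le hlam L
        (fun ν hν => hL ν (List.mem_cons_of_mem μ hν))) hve
    have h2pow : (0:ℝ) < 2 ^ L.length := by positivity
    have h3pow : (0:ℝ) < 3 ^ L.length := by positivity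
    calc v ((A.mulVec z - μ • z) - p' • e) ≤ 2 * v z + 3 ^ L.length * v e := by linarith
      _ ≤ 2 * (((3:ℝ) ^ L.length - 2 ^ L.length) * v e) + 3 ^ L.length * v e := by
          nlinarith [ihL]
      _ = ((3:ℝ) ^ (L.length + 1) - 2 ^ (L.length + 1)) * v e := by
          rw [pow_succ, pow_succ]; ring

end Stmt11Aux

/-- if `‖A‖ ≤ 1`, `‖x‖ = 1`, `|λ| ≤ 2` and `‖Ax − λx‖ ≤ (ε|λ|)^d`, then
`Λ(A) ≥ |λ|(1 − 4ε)`. -/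
theorem stmt_11 {d : ℕ} (v : (Fin d → ℂ) → ℝ) (hv : IsCNorm v)
    (A : Matrix (Fin d) (Fin d) ℂ) (hA : opNorm v A ≤ 1)
    (x : Fin d → ℂ) (hx : v x = 1) (ε : ℝ) (hε : 0 < ε)
    (lam : ℂ) (hlam : ‖lam‖ ≤ 2)
    (h : v (A.mulVec x - lam • x) ≤ (ε * ‖lam‖) ^ d) :
    ‖lam‖ * (1 - 4 * ε) ≤ specRad A := by
  classical
  open Polynomial Matrix Stmt11Aux in
  -- d = 0 is vacuous
  rcases Nat.eq_zero_or_pos d with rfl | hd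
  · exfalso
    have : x = 0 := Subsingleton.elim x 0
    rw [this, v_zero hv] at hx
    norm_num at hx
  have hA1 : ∀ y, v (A.mulVec y) ≤ v y := mulVec_v_le hv hd hA
  -- roots of the characteristic polynomial
  have hmonic : A.charpoly.Monic := Matrix.charpoly_monic A
  have hsplits : A.charpoly.Splits := IsAlgClosed.splits _
  have hdeg : A.charpoly.natDegree = d := by
    rw [Matrix.charpoly_natDegree_eq_dim, Fintype.card_fin]
  have hcard : A.charpoly.roots.card = d := by
    rw [Polynomial.splits_iff_card_roots.mp hsplits, hdeg]
  set L : List ℂ := A.charpoly.roots.toList with hLdef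
  have hLlen : L.length = d := by rw [hLdef, Multiset.length_toList, hcard]
  have hLroot : ∀ μ ∈ L, (A.charpoly).IsRoot μ := by
    intro μ hμ
    have : μ ∈ A.charpoly.roots := by rwa [hLdef, Multiset.mem_toList] at hμ
    exact (Polynomial.mem_roots'.mp this).2
  have hLspec : ∀ μ ∈ L, μ ∈ spectrum ℂ A := fun μ hμ => root_mem_spectrum (hLroot μ hμ)
  have hL1 : ∀ μ ∈ L, ‖μ‖ ≤ 1 := fun μ hμ => spec_norm_le hv hA1 (hLspec μ hμ)
  -- spectral radius facts
  have hbddS : BddAbove ((fun μ : ℂ => ‖μ‖) '' spectrum ℂ A) := by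
    refine ⟨1, ?_⟩
    rintro r ⟨μ, hμ, rfl⟩
    exact spec_norm_le hv hA1 hμ
  have hspec_ge : ∀ μ ∈ spectrum ℂ A, ‖μ‖ ≤ specRad A := fun μ hμ =>
    le_csSup hbddS ⟨μ, hμ, rfl⟩
  have hLne : L ≠ [] := by
    intro hnil
    rw [hnil] at hLlen
    simp at hLlen
    omega
  obtain ⟨μ₀, hμ₀⟩ := List.exists_mem_of_ne_nil L hLne
  have hspec0 : 0 ≤ specRad A := le_trans (norm_nonneg μ₀) (hspec_ge μ₀ (hLspec μ₀ hμ₀))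
  -- trivial case
  rcases le_or_gt (‖lam‖ * (1 - 4 * ε)) 0 with hle | hpos
  · linarith
  have hlam0 : 0 < ‖lam‖ := by nlinarith [norm_nonneg lam]
  have hε4 : ε < 1 / 4 := by nlinarith
  -- Cayley–Hamilton: the matrix product vanishes
  have hfact : A.charpoly = (A.charpoly.roots.map (fun μ => X - C μ)).prod :=
    hsplits.eq_prod_roots_of_monic hmonic
  have hmatprod : (L.map (fun μ => A - μ • (1 : Matrix (Fin d) (Fin d) ℂ))).prod = 0 := by
    have h0 : (Polynomial.aeval A) A.charpoly = 0 := Matrix.aeval_self_charpoly A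
    rw [hfact] at h0
    rw [← Multiset.coe_toList A.charpoly.roots, ← hLdef, Multiset.map_coe,
      Multiset.prod_coe, map_list_prod] at h0
    rw [← h0, List.map_map]
    congr 1
    ext μ
    simp [Function.comp, Algebra.algebraMap_eq_smul_one]
  -- main estimate
  set s : ℂ := (L.map (fun μ => lam - μ)).prod with hs
  have hkey := telescope hv hA1 x hlam L hL1
  rw [hmatprod, Matrix.zero_mulVec, sub_zero, hv.2.2.1, hx, mul_one, hLlen, ← hs] at hkey
  have hve : v (A.mulVec x - lam • x) ≤ (ε * ‖lam‖) ^ d := h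
  have hve0 : 0 ≤ v (A.mulVec x - lam • x) := hv.1 _
  have hεl : 0 < ε * ‖lam‖ := by positivity
  have hsle : ‖s‖ ≤ (3 * (ε * ‖lam‖)) ^ d := by
    have h3 : ((3:ℝ) ^ d - 2 ^ d) * v (A.mulVec x - lam • x) ≤ 3 ^ d * (ε * ‖lam‖) ^ d := by
      have h2pow : (0:ℝ) < 2 ^ d := by positivity
      have h3pow : (0:ℝ) < 3 ^ d := by positivity
      nlinarith [pow_nonneg hεl.le d]
    rw [mul_pow]
    linarith
  -- there is a root close to lam
  have hexists : ∃ μ ∈ L, ‖lam - μ‖ ≤ 4 * ε * ‖lam‖ := by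
    by_contra hno
    push_neg at hno
    have hge : (4 * ε * ‖lam‖) ^ d ≤ ‖s‖ := by
      have h6 := prod_norm_ge (lam := lam) (4 * ε * ‖lam‖) (by positivity) L
        (fun μ hμ => (hno μ hμ).le)
      rw [hLlen] at h6
      exact h6
    have hlt : (3 * (ε * ‖lam‖)) ^ d < (4 * ε * ‖lam‖) ^ d := by
      apply pow_lt_pow_left₀ _ (by positivity) (by omega)
      nlinarith
    linarith
  obtain ⟨μ, hμL, hμclose⟩ := hexists
  have h1 : ‖lam‖ - ‖lam - μ‖ ≤ ‖μ‖ := by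
    have := norm_sub_le (lam - μ) lam
    have h2 := norm_sub_norm_le lam μ
    have h3 : ‖lam‖ ≤ ‖lam - μ‖ + ‖μ‖ := by
      calc ‖lam‖ = ‖(lam - μ) + μ‖ := by ring_nf
        _ ≤ ‖lam - μ‖ + ‖μ‖ := norm_add_le _ _
    linarith
  have := hspec_ge μ (hLspec μ hμL)
  nlinarith
end

section
/- Let ε > 0 and A ∈ M_d(ℂ) with |trace(A^k)| ≤ ε^k for all k = 1,…,d. Then the spectral radius of A satisfies Λ(A) ≤ 2ε. -/
open scoped Pointwise
open Filter

section Aux1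
open Polynomial Matrix


lemma myEvalCharpoly {d : ℕ} (M : Matrix (Fin d) (Fin d) ℂ) (t : ℂ) :
    (M.charpoly).eval t = (t • (1 : Matrix (Fin d) (Fin d) ℂ) - M).det := by
  rw [Matrix.charpoly, Matrix.det_apply, Polynomial.eval_finset_sum]
  rw [Matrix.det_apply]
  refine Finset.sum_congr rfl fun σ _ => ?_
  rw [Polynomial.eval_smul, Polynomial.eval_prod]
  congr 1
  refine Finset.prod_congr rfl fun i _ => ?_
  rcases eq_or_ne (σ i) i with h | h
  · simp [h, Matrix.charmatrix_apply_eq, Matrix.one_apply, Matrix.smul_apply]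
  · simp [Matrix.charmatrix_apply_ne _ _ _ h, Matrix.one_apply, h, Matrix.smul_apply]

lemma myIdent {k : ℕ} (hk : 0 < k) (a b : ℂ) :
    a ^ k - b ^ k = ∏ ζ ∈ nthRootsFinset k (1 : ℂ), (a - ζ * b) := by
  have hprim := Complex.isPrimitiveRoot_exp k hk.ne'
  have hcard : (nthRootsFinset k (1 : ℂ)).card = k := hprim.card_nthRootsFinset
  rcases eq_or_ne b 0 with rfl | hb
  · simp [zero_pow hk.ne', Finset.prod_const, hcard]
  · have h1 : (a / b) ^ k - 1 = ∏ ζ ∈ nthRootsFinset k (1 : ℂ), (a / b - ζ) := by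
      have := congrArg (Polynomial.eval (a / b)) (X_pow_sub_one_eq_prod hk hprim)
      simpa [Polynomial.eval_prod] using this
    have h2 : b ^ k * ((a / b) ^ k - 1) = ∏ ζ ∈ nthRootsFinset k (1 : ℂ), (b * (a / b - ζ)) := by
      rw [Finset.prod_mul_distrib, Finset.prod_const, hcard, h1]
    have h3 : b ^ k * ((a / b) ^ k - 1) = a ^ k - b ^ k := by rw [div_pow]; field_simp
    rw [← h3, h2]
    exact Finset.prod_congr rfl fun ζ _ => by field_simp

lemma mySwap (s : Multiset ℂ) (F : Finset ℂ) (g : ℂ → ℂ → ℂ) :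
    ∏ ζ ∈ F, (s.map (g ζ)).prod = (s.map fun μ => ∏ ζ ∈ F, g ζ μ).prod := by
  induction s using Multiset.induction with
  | empty => simp
  | cons a t ih => simp [Finset.prod_mul_distrib, ih]

lemma myDetAevalProd {d : ℕ} (A : Matrix (Fin d) (Fin d) ℂ) (F : Finset ℂ)
    (g : ℂ → Polynomial ℂ) :
    (Polynomial.aeval A (∏ ζ ∈ F, g ζ)).det = ∏ ζ ∈ F, (Polynomial.aeval A (g ζ)).det := by
  induction F using Finset.cons_induction with
  | empty => simp
  | cons a F ha ih => rw [Finset.prod_cons, Finset.prod_cons, _root_.map_mul, Matrix.det_mul, ih]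

lemma myCharpolyPow {d : ℕ} (A : Matrix (Fin d) (Fin d) ℂ) {k : ℕ} (hk : 0 < k) :
    (A ^ k).charpoly = ((A.charpoly.roots.map (· ^ k)).map fun t => X - C t).prod := by
  set s := A.charpoly.roots with hs
  have hsp : A.charpoly.Splits := IsAlgClosed.splits _
  have hAfac : A.charpoly = (s.map fun a => X - C a).prod :=
    hsp.eq_prod_roots_of_monic A.charpoly_monic
  have hcards : Multiset.card s = d := by
    rw [hs, Polynomial.splits_iff_card_roots.1 hsp, Matrix.charpoly_natDegree_eq_dim,
      Fintype.card_fin]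
  apply Polynomial.funext
  intro z
  obtain ⟨y, hy⟩ := IsAlgClosed.exists_pow_nat_eq z hk
  have hRHS : (((s.map (· ^ k)).map fun t => X - C t).prod).eval z
      = (s.map fun μ => y ^ k - μ ^ k).prod := by
    rw [Polynomial.eval_multiset_prod, Multiset.map_map, Multiset.map_map, hy]
    simp [Function.comp]
  rw [hRHS]
  have hpoly : (C (y ^ k) - X ^ k : Polynomial ℂ)
      = ∏ ζ ∈ nthRootsFinset k (1 : ℂ), (C y - C ζ * X) := by
    apply Polynomial.funext
    intro b
    rw [Polynomial.eval_prod]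
    simpa using myIdent hk y b
  have hmat : z • (1 : Matrix (Fin d) (Fin d) ℂ) - A ^ k
      = Polynomial.aeval A (C (y ^ k) - X ^ k) := by
    simp only [map_sub, map_pow, Polynomial.aeval_X, Polynomial.aeval_C]
    rw [Algebra.algebraMap_eq_smul_one, _root_.smul_pow, one_pow, hy]
  rw [myEvalCharpoly, hmat, hpoly, myDetAevalProd]
  have hfac : ∀ ζ ∈ nthRootsFinset k (1 : ℂ),
      (Polynomial.aeval A (C y - C ζ * X)).det = (s.map fun μ => y - ζ * μ).prod := by
    intro ζ hζ
    have hζk : ζ ^ k = 1 := (Polynomial.mem_nthRootsFinset hk 1).1 hζ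
    have hζ0 : ζ ≠ 0 := fun h => by simp [h, zero_pow hk.ne'] at hζk
    have haev : Polynomial.aeval A (C y - C ζ * X)
        = y • (1 : Matrix (Fin d) (Fin d) ℂ) - ζ • A := by
      simp only [map_sub, _root_.map_mul, Polynomial.aeval_C, Polynomial.aeval_X]
      rw [Algebra.algebraMap_eq_smul_one, Algebra.algebraMap_eq_smul_one, smul_mul_assoc, one_mul]
    have hre : y • (1 : Matrix (Fin d) (Fin d) ℂ) - ζ • A
        = ζ • ((y / ζ) • (1 : Matrix (Fin d) (Fin d) ℂ) - A) := by
      rw [smul_sub, smul_smul, mul_div_cancel₀ _ hζ0]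
    rw [haev, hre, Matrix.det_smul, Fintype.card_fin, ← myEvalCharpoly]
    rw [hAfac, Polynomial.eval_multiset_prod, Multiset.map_map]
    simp only [Function.comp, Polynomial.eval_sub, Polynomial.eval_X, Polynomial.eval_C]
    have : (s.map fun μ => y - ζ * μ).prod = (s.map fun μ => ζ * (y / ζ - μ)).prod := by
      refine congrArg Multiset.prod (Multiset.map_congr rfl fun μ _ => ?_)
      field_simp
    rw [this, Multiset.prod_map_mul]
    simp [Multiset.map_const', Multiset.prod_replicate, hcards]
  rw [Finset.prod_congr rfl hfac, mySwap]
  exact congrArg Multiset.prod (Multiset.map_congr rfl fun μ _ => (myIdent hk y μ).symm)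

lemma myTracePow {d : ℕ} (A : Matrix (Fin d) (Fin d) ℂ) {k : ℕ} (hk : 0 < k) :
    (A ^ k).trace = (A.charpoly.roots.map (· ^ k)).sum := by
  rw [Matrix.trace_eq_sum_roots_charpoly, myCharpolyPow A hk,
    Polynomial.roots_multiset_prod_X_sub_C]


end Aux1

section Aux2
open Polynomial MvPolynomial

lemma myUniv (l : List ℂ) : (Finset.univ.val.map l.get) = (l : Multiset ℂ) := by
  have : Finset.univ.val = (List.finRange l.length : Multiset (Fin l.length)) := rfl
  rw [this]
  exact congrArg _ (List.map_get_finRange l)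

lemma myE (l : List ℂ) (k : ℕ) :
    MvPolynomial.aeval l.get (MvPolynomial.esymm (Fin l.length) ℂ k) = (l : Multiset ℂ).esymm k := by
  rw [MvPolynomial.aeval_esymm_eq_multiset_esymm, myUniv]

lemma myP (l : List ℂ) (k : ℕ) :
    MvPolynomial.aeval l.get (MvPolynomial.psum (Fin l.length) ℂ k)
      = ((l : Multiset ℂ).map (· ^ k)).sum := by
  rw [MvPolynomial.psum, map_sum]
  simp only [map_pow, MvPolynomial.aeval_X]
  rw [← myUniv, Multiset.map_map]
  rfl

lemma myEsymmZero (s : Multiset ℂ) : s.esymm 0 = 1 := by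
  simp [Multiset.esymm]

lemma myNewton (l : List ℂ) (k : ℕ) :
    (k : ℂ) * (l : Multiset ℂ).esymm k = (-1) ^ (k + 1) *
      ∑ a ∈ (Finset.HasAntidiagonal.antidiagonal k).filter (fun a => a.1 < k),
        (-1) ^ a.1 * (l : Multiset ℂ).esymm a.1 * ((l : Multiset ℂ).map (· ^ a.2)).sum := by
  have := congrArg (MvPolynomial.aeval l.get)
    (MvPolynomial.mul_esymm_eq_sum (Fin l.length) ℂ k)
  simpa only [map_mul, map_sum, map_pow, map_neg, map_one, map_natCast, myE, myP] using this

lemma myFilterCard (k : ℕ) :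
    (Finset.HasAntidiagonal.antidiagonal k).filter (fun a => a.1 < k) =
      (Finset.range k).map ⟨fun i => (i, k - i), fun a b h => by simpa using congrArg Prod.fst h⟩ := by
  ext a
  simp only [Finset.mem_filter, Finset.HasAntidiagonal.mem_antidiagonal, Finset.mem_map, Finset.mem_range,
    Function.Embedding.coeFn_mk]
  constructor
  · rintro ⟨h1, h2⟩
    refine ⟨a.1, h2, ?_⟩
    have h3 : k - a.1 = a.2 := by omega
    show (a.1, k - a.1) = a
    rw [h3]
  · rintro ⟨i, hi, rfl⟩
    exact ⟨show i + (k - i) = k by omega, hi⟩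

lemma myEsymmBound (ε : ℝ) (hε : 0 < ε) (l : List ℂ)
    (hP : ∀ n, 1 ≤ n → n ≤ l.length → ‖((l : Multiset ℂ).map (· ^ n)).sum‖ ≤ ε ^ n) :
    ∀ k, k ≤ l.length → ‖(l : Multiset ℂ).esymm k‖ ≤ ε ^ k := by
  intro k
  induction k using Nat.strong_induction_on with
  | _ k ih =>
    intro hk
    rcases Nat.eq_zero_or_pos k with rfl | hk1
    · simp [myEsymmZero]
    · have hnewton := myNewton l k
      have hterm : ∀ a ∈ (Finset.HasAntidiagonal.antidiagonal k).filter (fun a => a.1 < k),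
          ‖(-1 : ℂ) ^ a.1 * (l : Multiset ℂ).esymm a.1 *
            ((l : Multiset ℂ).map (· ^ a.2)).sum‖ ≤ ε ^ k := by
        intro a ha
        rw [Finset.mem_filter, Finset.HasAntidiagonal.mem_antidiagonal] at ha
        obtain ⟨hsum, hlt⟩ := ha
        have hE : ‖(l : Multiset ℂ).esymm a.1‖ ≤ ε ^ a.1 := by
          rcases Nat.eq_zero_or_pos a.1 with h0 | h1
          · simp [h0, myEsymmZero]
          · exact ih a.1 hlt (by omega)
        have hPa : ‖((l : Multiset ℂ).map (· ^ a.2)).sum‖ ≤ ε ^ a.2 :=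
          hP a.2 (by omega) (by omega)
        calc ‖(-1 : ℂ) ^ a.1 * (l : Multiset ℂ).esymm a.1 *
              ((l : Multiset ℂ).map (· ^ a.2)).sum‖
            = ‖(l : Multiset ℂ).esymm a.1‖ * ‖((l : Multiset ℂ).map (· ^ a.2)).sum‖ := by
              rw [norm_mul, norm_mul, norm_pow, norm_neg, norm_one, one_pow, one_mul]
          _ ≤ ε ^ a.1 * ε ^ a.2 := by
              exact mul_le_mul hE hPa (norm_nonneg _) (by positivity)
          _ = ε ^ k := by rw [← pow_add, hsum]
      have hnorm : (k : ℝ) * ‖(l : Multiset ℂ).esymm k‖ ≤ k * ε ^ k := by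
        have h1 : ‖(k : ℂ) * (l : Multiset ℂ).esymm k‖
            = (k : ℝ) * ‖(l : Multiset ℂ).esymm k‖ := by
          rw [norm_mul, Complex.norm_natCast]
        rw [← h1, hnewton, norm_mul, norm_pow, norm_neg, norm_one, one_pow, one_mul]
        calc ‖∑ a ∈ (Finset.HasAntidiagonal.antidiagonal k).filter (fun a => a.1 < k),
              (-1 : ℂ) ^ a.1 * (l : Multiset ℂ).esymm a.1 *
                ((l : Multiset ℂ).map (· ^ a.2)).sum‖
            ≤ ∑ a ∈ (Finset.HasAntidiagonal.antidiagonal k).filter (fun a => a.1 < k), ε ^ k :=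
              norm_sum_le_of_le _ hterm
          _ = k * ε ^ k := by
              rw [Finset.sum_const, myFilterCard, Finset.card_map, Finset.card_range,
                nsmul_eq_mul]
      have hkpos : (0 : ℝ) < k := by exact_mod_cast hk1
      exact le_of_mul_le_mul_left hnorm hkpos

end Aux2

lemma myGeom (d : ℕ) : ∑ j ∈ Finset.range d, ((1:ℝ)/2) ^ (j+1) = 1 - (1/2) ^ d := by
  induction d with
  | zero => simp
  | succ n ih => rw [Finset.sum_range_succ, ih]; ring

open Polynomial Matrix in
/-- if `|trace(A^k)| ≤ ε^k` for `k = 1, …, d`, then `Λ(A) ≤ 2ε`. -/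
theorem stmt_14 {d : ℕ} (ε : ℝ) (hε : 0 < ε) (A : Matrix (Fin d) (Fin d) ℂ)
    (h : ∀ k : ℕ, 1 ≤ k → k ≤ d → ‖(A ^ k).trace‖ ≤ ε ^ k) :
    specRad A ≤ 2 * ε := by
  have h2ε : (0:ℝ) ≤ 2 * ε := by positivity
  apply Real.sSup_le _ h2ε
  rintro x ⟨μ, hμ, rfl⟩
  set s := A.charpoly.roots with hs
  have hsp : A.charpoly.Splits := IsAlgClosed.splits _
  have hcards : Multiset.card s = d := by
    rw [hs, Polynomial.splits_iff_card_roots.1 hsp, Matrix.charpoly_natDegree_eq_dim,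
      Fintype.card_fin]
  -- μ is a root of the charpoly
  have hroot : (Matrix.charpoly A).IsRoot μ := by
    rw [spectrum.mem_iff] at hμ
    have hdet : (μ • (1 : Matrix (Fin d) (Fin d) ℂ) - A).det = 0 := by
      by_contra hne
      apply hμ
      rw [Algebra.algebraMap_eq_smul_one]
      exact (Matrix.isUnit_iff_isUnit_det _).2 (Ne.isUnit hne)
    rw [Polynomial.IsRoot, myEvalCharpoly, hdet]
  have hμmem : μ ∈ s := by
    rw [hs, Polynomial.mem_roots (Matrix.charpoly_monic A).ne_zero]
    exact hroot
  have hd : 0 < d := by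
    rw [← hcards]
    exact Multiset.card_pos_iff_exists_mem.2 ⟨μ, hμmem⟩
  -- list representation
  obtain ⟨l, hrep⟩ := Quotient.exists_rep s
  have hrep' : (l : Multiset ℂ) = s := hrep
  have hlen : l.length = d := by rw [← hcards, ← hrep']; rfl
  -- bound on power sums
  have hP : ∀ n, 1 ≤ n → n ≤ l.length → ‖((l : Multiset ℂ).map (· ^ n)).sum‖ ≤ ε ^ n := by
    intro n h1 h2
    rw [hrep', ← myTracePow A h1]
    exact h n h1 (hlen ▸ h2)
  have hE : ∀ k, k ≤ d → ‖s.esymm k‖ ≤ ε ^ k := by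
    intro k hk
    rw [← hrep']
    exact myEsymmBound ε hε l hP k (by omega)
  -- the root equation
  have heq0 : (0:ℂ) = ∑ j ∈ Finset.range (d+1), (-1)^j * (s.esymm j * μ ^ (d - j)) := by
    have hAfac : A.charpoly = (s.map fun a => X - C a).prod :=
      hsp.eq_prod_roots_of_monic A.charpoly_monic
    have := congrArg (Polynomial.eval μ) (Multiset.prod_X_sub_X_eq_sum_esymm s)
    rw [← hAfac, hroot.eq_zero, hcards] at this
    rw [this, Polynomial.eval_finset_sum]
    refine Finset.sum_congr rfl fun j _ => ?_
    simp [mul_assoc]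
  rw [Finset.sum_range_succ'] at heq0
  simp only [pow_zero, one_mul, Nat.sub_zero, myEsymmZero] at heq0
  have hμd : μ ^ d = -∑ i ∈ Finset.range d, (-1)^(i+1) * (s.esymm (i+1) * μ ^ (d - (i+1))) := by
    rw [eq_neg_iff_add_eq_zero]
    linear_combination -heq0
  -- norm bound
  have hnormd : ‖μ‖ ^ d ≤ ∑ i ∈ Finset.range d, ε ^ (i+1) * ‖μ‖ ^ (d - (i+1)) := by
    calc ‖μ‖ ^ d = ‖μ ^ d‖ := (norm_pow μ d).symm
      _ = ‖∑ i ∈ Finset.range d, (-1:ℂ)^(i+1) * (s.esymm (i+1) * μ ^ (d - (i+1)))‖ := by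
          rw [hμd, norm_neg]
      _ ≤ ∑ i ∈ Finset.range d, ε ^ (i+1) * ‖μ‖ ^ (d - (i+1)) := by
          refine norm_sum_le_of_le _ fun i hi => ?_
          rw [norm_mul, norm_mul, norm_pow, norm_neg, norm_one, one_pow, one_mul, norm_pow]
          exact mul_le_mul_of_nonneg_right (hE (i+1) (by
            rw [Finset.mem_range] at hi; omega)) (by positivity)
  -- contradiction if ‖μ‖ > 2ε
  by_contra hgt
  push_neg at hgt
  have hμpos : (0:ℝ) < ‖μ‖ := lt_trans (by positivity) hgt
  have hstrict : ∀ i ∈ Finset.range d,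
      ε ^ (i+1) * ‖μ‖ ^ (d - (i+1)) < ‖μ‖ ^ d * (1/2) ^ (i+1) := by
    intro i hi
    rw [Finset.mem_range] at hi
    have h1 : ε < ‖μ‖ / 2 := by linarith
    have h2 : ε ^ (i+1) < (‖μ‖ / 2) ^ (i+1) :=
      pow_lt_pow_left₀ h1 hε.le (Nat.succ_ne_zero i)
    have h3 : (‖μ‖ / 2) ^ (i+1) * ‖μ‖ ^ (d - (i+1)) = ‖μ‖ ^ d * (1/2) ^ (i+1) := by
      rw [div_pow, div_mul_eq_mul_div, ← pow_add,
        (by omega : (i+1) + (d - (i+1)) = d)]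
      simp [div_eq_mul_inv]
    calc ε ^ (i+1) * ‖μ‖ ^ (d - (i+1)) < (‖μ‖/2) ^ (i+1) * ‖μ‖ ^ (d - (i+1)) :=
          mul_lt_mul_of_pos_right h2 (by positivity)
      _ = ‖μ‖ ^ d * (1/2) ^ (i+1) := h3
  have hlt : ∑ i ∈ Finset.range d, ε ^ (i+1) * ‖μ‖ ^ (d - (i+1))
      < ∑ i ∈ Finset.range d, ‖μ‖ ^ d * (1/2:ℝ) ^ (i+1) :=
    Finset.sum_lt_sum_of_nonempty (Finset.nonempty_range_iff.2 hd.ne') hstrict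
  have hS2 : ∑ i ∈ Finset.range d, ‖μ‖ ^ d * (1/2:ℝ) ^ (i+1) ≤ ‖μ‖ ^ d := by
    rw [← Finset.mul_sum, myGeom]
    nlinarith [pow_pos hμpos d, pow_pos (by norm_num : (0:ℝ) < 1/2) d]
  linarith
end
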